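/- arXiv:1804.00017 — 5 statements merged into one kernel-verified Lean document; each statement's English description precedes it below -/
import Mathlib

section
/- Let V be a vector space over a field k of characteristic zero with integer-indexed bilinear products satisfying the truncation axiom and the Borcherds identity. Then for all a, b, c ∈ V and every formal Laurent series f ∈ k((x)): (a_{(f)}b)_{(0)}c = ∑_{j≥0} ( (−1)^j · a_{(∂^{(j)}f)}(b_{(j)}c) − b_{((∂^{(j)}f)(−x))}(a_{(j)}c) ), where all sums involved have only finitely many nonzero terms. -/
open scoped BigOperators

/-- The generalized binomial coefficient `C(m, j) = m(m-1)⋯(m-j+1)/j!` of an integer `m`,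
viewed as an element of a field `k` of characteristic zero. -/
noncomputable def zBinom (k : Type*) [Field k] (m : ℤ) (j : ℕ) : k :=
  (∏ i ∈ Finset.range j, ((m : k) - (i : k))) / (Nat.factorial j : k)

/-- The `f`-product `a_{(f)} b = ∑_n f_n · a_{(n)} b` associated with a family of
integer-indexed products `prod` and a coefficient function `f : ℤ → k`
(thought of as the Laurent series `f = ∑_n f_n x^n`). -/
noncomputable def fProduct {k V : Type*} [Field k] [AddCommGroup V] [Module k V]
    (prod : ℤ → V → V → V) (f : ℤ → k) (a b : V) : V :=
  ∑ᶠ n : ℤ, f n • prod n a b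

lemma zBinom_zero_left {k : Type*} [Field k] {j : ℕ} (hj : j ≠ 0) : zBinom k 0 j = 0 := by
  rw [zBinom, Finset.prod_eq_zero (Finset.mem_range.mpr (Nat.pos_of_ne_zero hj)) (by simp),
    zero_div]

/-- For a vector space `V` over a field `k` of characteristic zero with integer-indexed
bilinear products satisfying truncation and the Borcherds identity, for all `a b c ∈ V`
and every Laurent series `f ∈ k((x))`:
`(a_{(f)}b)_{(0)}c = ∑_{j≥0} ((-1)^j a_{(∂^{(j)}f)}(b_{(j)}c) − b_{((∂^{(j)}f)(−x))}(a_{(j)}c))`,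
where `∂^{(j)}f = ∑_n C(n,j) f_n x^{n-j}`, i.e. `(∂^{(j)}f)_m = C(m+j, j) f_{m+j}`. -/
theorem fproduct_zero_mode_borcherds {k V : Type*} [Field k] [CharZero k]
    [AddCommGroup V] [Module k V]
    (prod : ℤ → V → V → V)
    (hadd_left : ∀ (n : ℤ) (a a' b : V), prod n (a + a') b = prod n a b + prod n a' b)
    (hsmul_left : ∀ (n : ℤ) (c : k) (a b : V), prod n (c • a) b = c • prod n a b)
    (hadd_right : ∀ (n : ℤ) (a b b' : V), prod n a (b + b') = prod n a b + prod n a b')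
    (hsmul_right : ∀ (n : ℤ) (c : k) (a b : V), prod n a (c • b) = c • prod n a b)
    (htrunc : ∀ a b : V, ∃ N : ℤ, ∀ n ≥ N, prod n a b = 0)
    (hborcherds : ∀ (a b c : V) (m n k₀ : ℤ),
      (∑ᶠ j : ℕ, zBinom k m j • prod (m + k₀ - (j : ℤ)) (prod (n + (j : ℤ)) a b) c)
        = ∑ᶠ j : ℕ, ((-1 : k) ^ j * zBinom k n j) •
            (prod (m + n - (j : ℤ)) a (prod (k₀ + (j : ℤ)) b c)
              - ((-1 : k) ^ n) • prod (n + k₀ - (j : ℤ)) b (prod (m + (j : ℤ)) a c)))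
    (f : ℤ → k) (hf : ∃ N : ℤ, ∀ n < N, f n = 0) (a b c : V) :
    prod 0 (fProduct prod f a b) c
      = ∑ᶠ j : ℕ,
          (((-1 : k) ^ j) •
              fProduct prod (fun m => zBinom k (m + (j : ℤ)) j * f (m + (j : ℤ)))
                a (prod (j : ℤ) b c)
            - fProduct prod
                (fun m => (-1 : k) ^ m * (zBinom k (m + (j : ℤ)) j * f (m + (j : ℤ))))
                b (prod (j : ℤ) a c)) := by
  classical
  obtain ⟨N₁, hN₁⟩ := hf
  obtain ⟨Nab, hNab⟩ := htrunc a b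
  obtain ⟨Jbc, hJbc⟩ := htrunc b c
  obtain ⟨Jac, hJac⟩ := htrunc a c
  have hzl : ∀ (n : ℤ) (x : V), prod n (0 : V) x = 0 := fun n x => by
    simpa using hsmul_left n 0 0 x
  have hzr : ∀ (n : ℤ) (x : V), prod n x (0 : V) = 0 := fun n x => by
    simpa using hsmul_right n 0 x 0
  set J : ℕ := (max Jbc Jac).toNat with hJdef
  have hJbc' : ∀ j : ℕ, J ≤ j → prod (j : ℤ) b c = 0 := fun j hj =>
    hJbc _ (le_trans (le_max_left _ _) (Int.toNat_le.mp hj))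
  have hJac' : ∀ j : ℕ, J ≤ j → prod (j : ℤ) a c = 0 := fun j hj =>
    hJac _ (le_trans (le_max_right _ _) (Int.toNat_le.mp hj))
  set g : ℤ → ℕ → V := fun n j =>
    ((-1 : k) ^ j * zBinom k n j) •
      (prod (n - (j : ℤ)) a (prod (j : ℤ) b c)
        - ((-1 : k) ^ n) • prod (n - (j : ℤ)) b (prod (j : ℤ) a c)) with hg
  -- key identity from the Borcherds identity with m = 0, k₀ = 0
  have key : ∀ n : ℤ, prod 0 (prod n a b) c = ∑ᶠ j : ℕ, g n j := by
    intro n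
    have hb := hborcherds a b c 0 n 0
    have hL : (∑ᶠ j : ℕ, zBinom k 0 j •
        prod (0 + 0 - (j : ℤ)) (prod (n + (j : ℤ)) a b) c) = prod 0 (prod n a b) c := by
      rw [finsum_eq_single _ 0 (fun j hj => by rw [zBinom_zero_left hj, zero_smul])]
      simp [zBinom]
    rw [hL] at hb
    rw [hb]
    exact finsum_congr fun j => by simp [hg]
  -- vanishing of g for large j
  have hgJ : ∀ (n : ℤ) (j : ℕ), J ≤ j → g n j = 0 := fun n j hj => by
    simp [hg, hJbc' j hj, hJac' j hj, hzr]
  -- finite support facts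
  have hsupp1 : (Function.support fun n : ℤ => f n • prod n a b).Finite := by
    apply Set.Finite.subset (Set.finite_Ico N₁ Nab)
    intro n hn
    simp only [Function.mem_support, Ne] at hn
    rw [Set.mem_Ico]
    constructor
    · by_contra h; exact hn (by rw [hN₁ n (lt_of_not_ge h), zero_smul])
    · by_contra h; exact hn (by rw [hNab n (le_of_not_gt h), smul_zero])
  have hsupp2 : ∀ j : ℕ, (Function.support fun n : ℤ => f n • g n j).Finite := by
    intro j
    obtain ⟨Ma, hMa⟩ := htrunc a (prod (j : ℤ) b c)
    obtain ⟨Mb, hMb⟩ := htrunc b (prod (j : ℤ) a c)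
    apply Set.Finite.subset (Set.finite_Ico N₁ (max Ma Mb + j))
    intro n hn
    simp only [Function.mem_support, Ne] at hn
    rw [Set.mem_Ico]
    constructor
    · by_contra h; exact hn (by rw [hN₁ n (lt_of_not_ge h), zero_smul])
    · by_contra h
      have h' := le_of_not_gt h
      have hma := le_max_left Ma Mb
      have hmb := le_max_right Ma Mb
      have h1 : prod (n - (j : ℤ)) a (prod (j : ℤ) b c) = 0 := hMa _ (by omega)
      have h2 : prod (n - (j : ℤ)) b (prod (j : ℤ) a c) = 0 := hMb _ (by omega)
      exact hn (by simp [hg, h1, h2])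
  -- step A : linearity in the first slot
  have hA : prod 0 (fProduct prod f a b) c = ∑ᶠ n : ℤ, f n • prod 0 (prod n a b) c := by
    let L : V →+ V :=
      { toFun := fun x => prod 0 x c
        map_zero' := hzl 0 c
        map_add' := fun x y => hadd_left 0 x y c }
    have h := AddMonoidHom.map_finsum L hsupp1
    simp only [L, AddMonoidHom.coe_mk, ZeroHom.coe_mk, fProduct] at h ⊢
    rw [h]
    exact finsum_congr fun n => hsmul_left 0 (f n) (prod n a b) c
  -- inner finsum over j is a finite sum over range J
  have hInner : ∀ n : ℤ, (∑ᶠ j : ℕ, g n j) = ∑ j ∈ Finset.range J, g n j := fun n =>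
    finsum_eq_finset_sum_of_support_subset _ (fun j hj => by
      rw [Finset.coe_range, Set.mem_Iio]
      by_contra h
      exact hj (hgJ n j (le_of_not_gt h)))
  -- the per-j value
  have hT : ∀ j : ℕ, (∑ᶠ n : ℤ, f n • g n j)
      = ((-1 : k) ^ j) •
            fProduct prod (fun m => zBinom k (m + (j : ℤ)) j * f (m + (j : ℤ)))
              a (prod (j : ℤ) b c)
          - fProduct prod
              (fun m => (-1 : k) ^ m * (zBinom k (m + (j : ℤ)) j * f (m + (j : ℤ))))
              b (prod (j : ℤ) a c) := by
    intro j
    obtain ⟨Ma, hMa⟩ := htrunc a (prod (j : ℤ) b c)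
    obtain ⟨Mb, hMb⟩ := htrunc b (prod (j : ℤ) a c)
    have hs1 : (Function.support fun m : ℤ =>
        ((-1 : k) ^ j * (zBinom k (m + (j : ℤ)) j * f (m + (j : ℤ)))) •
          prod m a (prod (j : ℤ) b c)).Finite := by
      apply Set.Finite.subset (Set.finite_Ico (N₁ - j) Ma)
      intro m hm
      simp only [Function.mem_support, Ne] at hm
      rw [Set.mem_Ico]
      constructor
      · by_contra h
        exact hm (by rw [hN₁ (m + j) (by omega), mul_zero, mul_zero, zero_smul])
      · by_contra h
        exact hm (by rw [hMa m (le_of_not_gt h), smul_zero])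
    have hs1' : (Function.support fun m : ℤ =>
        (zBinom k (m + (j : ℤ)) j * f (m + (j : ℤ))) • prod m a (prod (j : ℤ) b c)).Finite := by
      apply Set.Finite.subset (Set.finite_Ico (N₁ - j) Ma)
      intro m hm
      simp only [Function.mem_support, Ne] at hm
      rw [Set.mem_Ico]
      constructor
      · by_contra h
        exact hm (by rw [hN₁ (m + j) (by omega), mul_zero, zero_smul])
      · by_contra h
        exact hm (by rw [hMa m (le_of_not_gt h), smul_zero])
    have hs2 : (Function.support fun m : ℤ =>
        ((-1 : k) ^ m * (zBinom k (m + (j : ℤ)) j * f (m + (j : ℤ)))) •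
          prod m b (prod (j : ℤ) a c)).Finite := by
      apply Set.Finite.subset (Set.finite_Ico (N₁ - j) Mb)
      intro m hm
      simp only [Function.mem_support, Ne] at hm
      rw [Set.mem_Ico]
      constructor
      · by_contra h
        exact hm (by rw [hN₁ (m + j) (by omega), mul_zero, mul_zero, zero_smul])
      · by_contra h
        exact hm (by rw [hMb m (le_of_not_gt h), smul_zero])
    calc (∑ᶠ n : ℤ, f n • g n j)
        = ∑ᶠ m : ℤ, f (m + (j : ℤ)) • g (m + (j : ℤ)) j := by
          rw [← finsum_comp_equiv (Equiv.addRight (j : ℤ)) (f := fun n => f n • g n j)]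
          rfl
      _ = ∑ᶠ m : ℤ,
            (((-1 : k) ^ j * (zBinom k (m + (j : ℤ)) j * f (m + (j : ℤ)))) •
                prod m a (prod (j : ℤ) b c)
              - ((-1 : k) ^ m * (zBinom k (m + (j : ℤ)) j * f (m + (j : ℤ)))) •
                prod m b (prod (j : ℤ) a c)) := by
          apply finsum_congr
          intro m
          have hz : (-1 : k) ^ (m + (j : ℤ)) = (-1 : k) ^ m * (-1 : k) ^ j := by
            rw [zpow_add₀ (by norm_num : (-1 : k) ≠ 0), zpow_natCast]
          have hj1 : ((-1 : k) ^ j) * ((-1 : k) ^ j) = 1 := by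
            rw [← pow_add]; exact Even.neg_one_pow ⟨j, rfl⟩
          simp only [hg, add_sub_cancel_right, smul_sub, smul_smul, hz]
          congr 1
          · congr 1; ring
          · congr 1
            linear_combination (f (m + (j : ℤ)) * zBinom k (m + (j : ℤ)) j * (-1 : k) ^ m) * hj1
      _ = _ := by
          rw [finsum_sub_distrib hs1 hs2, fProduct, fProduct,
            smul_finsum' ((-1 : k) ^ j) hs1']
          congr 1
          exact finsum_congr fun m => by rw [smul_smul]
  -- vanishing of the summand in the goal for large j
  have hT0 : ∀ j : ℕ, J ≤ j →
      (((-1 : k) ^ j) •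
            fProduct prod (fun m => zBinom k (m + (j : ℤ)) j * f (m + (j : ℤ)))
              a (prod (j : ℤ) b c)
          - fProduct prod
              (fun m => (-1 : k) ^ m * (zBinom k (m + (j : ℤ)) j * f (m + (j : ℤ))))
              b (prod (j : ℤ) a c)) = 0 := by
    intro j hj
    simp [fProduct, hJbc' j hj, hJac' j hj, hzr]
  calc prod 0 (fProduct prod f a b) c
      = ∑ᶠ n : ℤ, f n • prod 0 (prod n a b) c := hA
    _ = ∑ᶠ n : ℤ, ∑ j ∈ Finset.range J, f n • g n j := by
        exact finsum_congr fun n => by rw [key n, hInner n, Finset.smul_sum]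
    _ = ∑ j ∈ Finset.range J, ∑ᶠ n : ℤ, f n • g n j :=
        finsum_sum_comm _ _ (fun j _ => hsupp2 j)
    _ = ∑ j ∈ Finset.range J,
          (((-1 : k) ^ j) •
              fProduct prod (fun m => zBinom k (m + (j : ℤ)) j * f (m + (j : ℤ)))
                a (prod (j : ℤ) b c)
            - fProduct prod
                (fun m => (-1 : k) ^ m * (zBinom k (m + (j : ℤ)) j * f (m + (j : ℤ))))
                b (prod (j : ℤ) a c)) := Finset.sum_congr rfl fun j _ => hT j
    _ = _ := by
        refine (finsum_eq_finset_sum_of_support_subset _ fun j hj => ?_).symm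
        rw [Finset.coe_range, Set.mem_Iio]
        by_contra h
        exact hj (hT0 j (le_of_not_gt h))
end

section
/- For every τ ∈ ℂ with Im τ > 0 and all x, y ∈ ℂ with x, y, x−y ∉ Λ_τ: ℘(x,τ)·℘(y,τ) = ℘′(x−y,τ)·ζ(x−y,τ) − ℘(x−y,τ)² + (1/2)℘″(x−y,τ) + ℘′(x−y,τ)·(ζ(y,τ) − ζ(x,τ)) + ℘(x−y,τ)·(℘(x,τ) + ℘(y,τ)). -/
noncomputable section

open Complex

/-- The lattice `Λ_τ = ℤ + ℤτ ⊂ ℂ`. -/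
def ellLattice (τ : ℂ) : Set ℂ := {w | ∃ m n : ℤ, w = (m : ℂ) + (n : ℂ) * τ}

/-- The quasimodular Eisenstein series
`G₂(τ) = (2πi)²(−1/12 + 2∑_{n≥1} n qⁿ/(1−qⁿ))` where `q = exp(2πiτ)`. -/
def G2 (τ : ℂ) : ℂ :=
  (2 * (Real.pi : ℂ) * I) ^ 2 *
    (-(1 / 12) + 2 * ∑' n : ℕ,
      ((n : ℂ) + 1) * Complex.exp (2 * (Real.pi : ℂ) * I * τ) ^ (n + 1) /
        (1 - Complex.exp (2 * (Real.pi : ℂ) * I * τ) ^ (n + 1)))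

/-- The Weierstrass quasielliptic function, normalized as in the paper:
`ζ(z,τ) = z⁻¹ − G₂(τ)z + ∑_{ω ∈ Λ_τ∖{0}} ((z−ω)⁻¹ + ω⁻¹ + z·ω⁻²)`. -/
def wzeta (z τ : ℂ) : ℂ :=
  z⁻¹ - G2 τ * z +
    ∑' w : {w : ℂ // w ∈ ellLattice τ ∧ w ≠ 0},
      ((z - (w : ℂ))⁻¹ + (w : ℂ)⁻¹ + z * (((w : ℂ)) ^ 2)⁻¹)

/-- The Weierstrass elliptic function, normalized as in the paper:
`℘(z,τ) = z⁻² + G₂(τ) + ∑_{ω ∈ Λ_τ∖{0}} ((z−ω)⁻² − ω⁻²)`. -/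
def wp (z τ : ℂ) : ℂ :=
  (z ^ 2)⁻¹ + G2 τ +
    ∑' w : {w : ℂ // w ∈ ellLattice τ ∧ w ≠ 0},
      (((z - (w : ℂ)) ^ 2)⁻¹ - (((w : ℂ)) ^ 2)⁻¹)

/-- `℘′`, the derivative of `℘` in the variable `z`. -/
def wp' (z τ : ℂ) : ℂ := deriv (fun u => wp u τ) z

/-- `℘″`, the second derivative of `℘` in the variable `z`. -/
def wp'' (z τ : ℂ) : ℂ := deriv (fun u => wp' u τ) z

end

noncomputable section Aux

open Complex Metric Set Filter Topology Function

/-- The punctured lattice, as a set. -/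
abbrev SL (τ : ℂ) : Set ℂ := {w : ℂ | w ∈ ellLattice τ ∧ w ≠ 0}

section Lattice
variable {τ : ℂ}

lemma lat_mem_iff {w : ℂ} : w ∈ ellLattice τ ↔ ∃ m n : ℤ, w = (m : ℂ) + n * τ := Iff.rfl

lemma lat_zero : (0 : ℂ) ∈ ellLattice τ := ⟨0, 0, by simp⟩

lemma lat_one : (1 : ℂ) ∈ ellLattice τ := ⟨1, 0, by simp⟩

lemma lat_tau : τ ∈ ellLattice τ := ⟨0, 1, by simp⟩

lemma lat_add {a b : ℂ} (ha : a ∈ ellLattice τ) (hb : b ∈ ellLattice τ) :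
    a + b ∈ ellLattice τ := by
  obtain ⟨m, n, rfl⟩ := ha; obtain ⟨m', n', rfl⟩ := hb
  exact ⟨m + m', n + n', by push_cast; ring⟩

lemma lat_neg {a : ℂ} (ha : a ∈ ellLattice τ) : -a ∈ ellLattice τ := by
  obtain ⟨m, n, rfl⟩ := ha; exact ⟨-m, -n, by push_cast; ring⟩

lemma lat_sub {a b : ℂ} (ha : a ∈ ellLattice τ) (hb : b ∈ ellLattice τ) :
    a - b ∈ ellLattice τ := by
  simpa [sub_eq_add_neg] using lat_add ha (lat_neg hb)

lemma lat_neg_iff {a : ℂ} : -a ∈ ellLattice τ ↔ a ∈ ellLattice τ :=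
  ⟨fun h => by simpa using lat_neg h, lat_neg⟩

variable (hτ : 0 < τ.im)
include hτ

/-- The point of the upper half plane attached to `τ`. -/
def tZ (hτ : 0 < τ.im) : UpperHalfPlane := ⟨τ, hτ⟩

lemma r0_pos : 0 < EisensteinSeries.r (tZ hτ) := EisensteinSeries.r_pos _

lemma lat_lb {x : Fin 2 → ℤ} (hx : x ≠ 0) :
    EisensteinSeries.r (tZ hτ) * ‖x‖ ≤ ‖(x 1 : ℂ) + x 0 * τ‖ := by
  have := EisensteinSeries.r_mul_max_le (tZ hτ) hx
  have hτc : ((tZ hτ) : ℂ) = τ := rfl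
  rw [hτc] at this
  convert this using 2
  ring

omit hτ in
lemma one_le_norm_int_vec {x : Fin 2 → ℤ} (hx : x ≠ 0) : (1 : ℝ) ≤ ‖x‖ := by
  rw [EisensteinSeries.norm_eq_max_natAbs]
  have : x 0 ≠ 0 ∨ x 1 ≠ 0 := by
    by_contra h
    push_neg at h
    exact hx (funext fun i => by fin_cases i <;> simp [h.1, h.2])
  rcases this with h | h
  · have : 1 ≤ (x 0).natAbs := Int.natAbs_pos.2 h
    exact_mod_cast le_max_of_le_left (by exact_mod_cast this)
  · have : 1 ≤ (x 1).natAbs := Int.natAbs_pos.2 h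
    exact_mod_cast le_max_of_le_right (by exact_mod_cast this)

lemma lat_norm_lb {w : ℂ} (hw : w ∈ ellLattice τ) (h0 : w ≠ 0) :
    EisensteinSeries.r (tZ hτ) ≤ ‖w‖ := by
  obtain ⟨m, n, rfl⟩ := hw
  have hx : ![n, m] ≠ 0 := by
    intro h
    apply h0
    have h1 : n = 0 := by simpa using congrFun h 0
    have h2 : m = 0 := by simpa using congrFun h 1
    simp [h1, h2]
  have := lat_lb hτ hx
  simp only [Matrix.cons_val_zero, Matrix.cons_val_one, Matrix.head_cons] at this
  calc EisensteinSeries.r (tZ hτ) = EisensteinSeries.r (tZ hτ) * 1 := (mul_one _).symm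
  _ ≤ EisensteinSeries.r (tZ hτ) * ‖![n, m]‖ :=
      mul_le_mul_of_nonneg_left (one_le_norm_int_vec hx) (r0_pos hτ).le
  _ ≤ ‖(m : ℂ) + n * τ‖ := this

lemma lat_inj : Function.Injective (fun x : Fin 2 → ℤ => (x 1 : ℂ) + x 0 * τ) := by
  intro x x' h
  simp only at h
  have him : (x 0 : ℝ) * τ.im = (x' 0 : ℝ) * τ.im := by
    have := congrArg Complex.im h
    simpa using this
  have h0 : (x 0 : ℝ) = (x' 0 : ℝ) := mul_right_cancel₀ (ne_of_gt hτ) him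
  have h0' : x 0 = x' 0 := by exact_mod_cast h0
  have hre : (x 1 : ℝ) + (x 0 : ℝ) * τ.re = (x' 1 : ℝ) + (x' 0 : ℝ) * τ.re := by
    have := congrArg Complex.re h
    simpa using this
  have h1 : x 1 = x' 1 := by
    rw [h0] at hre
    have : (x 1 : ℝ) = x' 1 := by linarith
    exact_mod_cast this
  exact funext fun i => by fin_cases i <;> assumption

omit hτ in
lemma lat_eq_range : ellLattice τ = Set.range (fun x : Fin 2 → ℤ => (x 1 : ℂ) + x 0 * τ) := by
  ext w
  constructor
  · rintro ⟨m, n, rfl⟩; exact ⟨![n, m], by simp⟩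
  · rintro ⟨x, rfl⟩; exact ⟨x 1, x 0, rfl⟩

omit hτ in
lemma lat_countable : (ellLattice τ).Countable := by
  rw [lat_eq_range (τ := τ)]; exact Set.countable_range _

lemma lat_finite_ball (R : ℝ) : {w : ℂ | w ∈ ellLattice τ ∧ ‖w‖ ≤ R}.Finite := by
  set r0 := EisensteinSeries.r (tZ hτ) with hr0
  have hr0p : 0 < r0 := r0_pos hτ
  set N : ℤ := ⌈R / r0⌉ with hN
  apply Set.Finite.subset ((Set.finite_Icc (⟨-N, -N⟩ : ℤ × ℤ) ⟨N, N⟩).image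
    (fun p : ℤ × ℤ => (p.1 : ℂ) + p.2 * τ))
  rintro w ⟨⟨m, n, rfl⟩, hR⟩
  refine ⟨⟨m, n⟩, ?_, rfl⟩
  have hx : ∀ k : ℤ, (k = m ∨ k = n) → |k| ≤ N := by
    intro k hk
    have hxv : ![n, m] ≠ 0 ∨ ((m : ℂ) + n * τ = 0 ∧ m = 0 ∧ n = 0) := by
      by_cases h : ![n, m] = 0
      · right
        have h1 : n = 0 := by simpa using congrFun h 0
        have h2 : m = 0 := by simpa using congrFun h 1
        simp [h1, h2]
      · left; exact h
    rcases hxv with h | ⟨h, h1, h2⟩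
    · have hb := lat_lb hτ h
      simp only [Matrix.cons_val_zero, Matrix.cons_val_one, Matrix.head_cons] at hb
      have hb2 : r0 * ‖![n, m]‖ ≤ R := le_trans hb hR
      have hnorm : ((|k| : ℤ) : ℝ) ≤ ‖![n, m]‖ := by
        rw [EisensteinSeries.norm_eq_max_natAbs]
        have hle : |k| ≤ (max n.natAbs m.natAbs : ℤ) := by
          rcases hk with rfl | rfl
          · rw [Int.abs_eq_natAbs]; exact_mod_cast Nat.le_max_right _ _
          · rw [Int.abs_eq_natAbs]; exact_mod_cast Nat.le_max_left _ _
        simp only [Matrix.cons_val_zero, Matrix.cons_val_one, Matrix.head_cons]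
        have : ((|k| : ℤ) : ℝ) ≤ ((max n.natAbs m.natAbs : ℤ) : ℝ) := by exact_mod_cast hle
        convert this using 2
        push_cast [Nat.cast_natAbs]
        simp
      have hdiv : ((|k| : ℤ) : ℝ) ≤ R / r0 := by
        rw [le_div_iff₀ hr0p]
        nlinarith [hnorm, hb2, hr0p]
      have := hdiv.trans (Int.le_ceil _)
      exact_mod_cast this
    · have hN0 : (0 : ℤ) ≤ N := by
        have : (0 : ℝ) ≤ R := le_trans (by simpa [h] using norm_nonneg ((m : ℂ) + n * τ)) hR
        have : (0 : ℝ) ≤ R / r0 := by positivity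
        have := this.trans (Int.le_ceil _)
        exact_mod_cast this
      rcases hk with rfl | rfl <;> simp [h1, h2, hN0]
  rw [Set.mem_Icc]
  constructor
  · exact ⟨neg_le_of_abs_le (hx m (Or.inl rfl)), neg_le_of_abs_le (hx n (Or.inr rfl))⟩
  · exact ⟨le_of_abs_le (hx m (Or.inl rfl)), le_of_abs_le (hx n (Or.inr rfl))⟩

lemma isClosed_of_sub_lat {S : Set ℂ} (hS : S ⊆ ellLattice τ) : IsClosed S := by
  rw [← isOpen_compl_iff, Metric.isOpen_iff]
  intro z hz
  have hF : ({w : ℂ | w ∈ S ∧ ‖w‖ ≤ ‖z‖ + 1}).Finite :=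
    (lat_finite_ball hτ (‖z‖ + 1)).subset (fun w hw => ⟨hS hw.1, hw.2⟩)
  have hzf : z ∈ {w : ℂ | w ∈ S ∧ ‖w‖ ≤ ‖z‖ + 1}ᶜ := fun h => hz h.1
  obtain ⟨ε, hε, hball⟩ := Metric.isOpen_iff.1 hF.isClosed.isOpen_compl z hzf
  refine ⟨min ε 1, by positivity, fun u hu => ?_⟩
  intro hS'
  have h1 : dist u z < 1 := lt_of_lt_of_le hu (min_le_right _ _)
  have h2 : dist u z < ε := lt_of_lt_of_le hu (min_le_left _ _)
  exact hball h2 ⟨hS', by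
    have : ‖u‖ ≤ ‖z‖ + dist u z := by
      rw [dist_eq_norm]
      calc ‖u‖ = ‖z + (u - z)‖ := by ring_nf
      _ ≤ ‖z‖ + ‖u - z‖ := norm_add_le _ _
    linarith⟩

lemma lat_closed : IsClosed (ellLattice τ) := isClosed_of_sub_lat hτ (le_refl _)

lemma SL_closed : IsClosed (SL τ) := isClosed_of_sub_lat hτ (fun _ h => h.1)

lemma summable_cube : Summable (fun w : ↥(SL τ) => (‖(w : ℂ)‖ ^ 3)⁻¹) := by
  set r0 := EisensteinSeries.r (tZ hτ) with hr0
  have hr0p : 0 < r0 := r0_pos hτ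
  have hbase : Summable (fun x : Fin 2 → ℤ => (r0⁻¹) ^ 3 * (‖x‖ ^ 3)⁻¹) := by
    apply Summable.mul_left
    have h := EisensteinSeries.summable_one_div_norm_rpow (k := 3) (by norm_num)
    apply h.congr
    intro x
    by_cases hx : x = 0
    · simp [hx, Real.zero_rpow]
    · have h1 : (0 : ℝ) < ‖x‖ := norm_pos_iff.2 hx
      rw [Real.rpow_neg h1.le, ← Real.rpow_natCast ‖x‖ 3]
      norm_num
  have hg : Summable (Set.indicator (SL τ) (fun w : ℂ => (‖w‖ ^ 3)⁻¹)) := by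
    set Φ : (Fin 2 → ℤ) → ℂ := fun x => (x 1 : ℂ) + x 0 * τ with hΦ
    have hvan : ∀ w ∉ Set.range Φ, Set.indicator (SL τ) (fun w : ℂ => (‖w‖ ^ 3)⁻¹) w = 0 := by
      intro w hw
      apply Set.indicator_of_notMem
      intro hmem
      exact hw (by rw [← lat_eq_range]; exact hmem.1)
    rw [← Function.Injective.summable_iff (lat_inj hτ) hvan]
    apply Summable.of_nonneg_of_le _ _ hbase
    · intro x
      simp only [Function.comp_apply]
      exact Set.indicator_nonneg (fun w _ => by positivity) _
    · intro x
      simp only [Function.comp_apply]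
      by_cases hmem : Φ x ∈ SL τ
      · rw [Set.indicator_of_mem hmem]
        have hx : x ≠ 0 := by
          intro h; apply hmem.2; simp [hΦ, h]
        have h1 : (1:ℝ) ≤ ‖x‖ := one_le_norm_int_vec hx
        have hb := lat_lb hτ hx
        have hΦpos : (0:ℝ) < ‖Φ x‖ := norm_pos_iff.2 hmem.2
        have hcube : r0 ^ 3 * ‖x‖ ^ 3 ≤ ‖Φ x‖ ^ 3 := by
          have h2 : r0 * ‖x‖ ≤ ‖Φ x‖ := hb
          calc r0 ^ 3 * ‖x‖ ^ 3 = (r0 * ‖x‖) ^ 3 := by ring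
          _ ≤ ‖Φ x‖ ^ 3 := by
              apply pow_le_pow_left₀ (by positivity) h2
        rw [inv_le_iff_one_le_mul₀' (by positivity)]
        calc (1:ℝ) = (r0 ^ 3 * ‖x‖ ^ 3) * (r0 ^ 3 * ‖x‖ ^ 3)⁻¹ := by
              field_simp
        _ ≤ ‖Φ x‖ ^ 3 * (r0 ^ 3 * ‖x‖ ^ 3)⁻¹ := by
              apply mul_le_mul_of_nonneg_right hcube (by positivity)
        _ = ‖Φ x‖ ^ 3 * (r0⁻¹ ^ 3 * (‖x‖ ^ 3)⁻¹) := by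
              rw [mul_inv]; ring_nf
      · rw [Set.indicator_of_notMem hmem]
        positivity
  have := summable_subtype_iff_indicator.2 hg
  exact this

end Lattice

section Workhorse

variable {ι : Type*} {F : ι → ℂ → ℂ} {U : Set ℂ} {z : ℂ}

lemma wh_partial_diff (hf : ∀ i, DifferentiableOn ℂ (F i) U) (t : Finset ι) :
    DifferentiableOn ℂ (fun z => ∑ i ∈ t, F i z) U :=
  DifferentiableOn.fun_sum fun i _ => hf i

lemma wh_hasSum_deriv (hU : IsOpen U) (hf : ∀ i, DifferentiableOn ℂ (F i) U)
    (hTLU : TendstoLocallyUniformlyOn (fun (t : Finset ι) z => ∑ i ∈ t, F i z)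
      (fun z => ∑' i, F i z) atTop U) (hz : z ∈ U) :
    HasSum (fun i => deriv (F i) z) (deriv (fun w => ∑' i, F i w) z) := by
  rw [HasSum]
  have h1 := (hTLU.deriv (Eventually.of_forall fun t => wh_partial_diff hf t) hU).tendsto_at hz
  apply Filter.Tendsto.congr _ h1
  intro t
  simp only [Function.comp]
  exact deriv_fun_sum fun i _ => ((hf i).differentiableAt (hU.mem_nhds hz))

lemma wh_hasSum_deriv2 (hU : IsOpen U) (hf : ∀ i, DifferentiableOn ℂ (F i) U)
    (hTLU : TendstoLocallyUniformlyOn (fun (t : Finset ι) z => ∑ i ∈ t, F i z)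
      (fun z => ∑' i, F i z) atTop U) (hz : z ∈ U) :
    HasSum (fun i => deriv (deriv (F i)) z)
      (deriv (deriv (fun w => ∑' i, F i w)) z) := by
  have hdiff : ∀ t : Finset ι, DifferentiableOn ℂ (fun z => ∑ i ∈ t, F i z) U :=
    wh_partial_diff hf
  have h1 := hTLU.deriv (Eventually.of_forall hdiff) hU
  have hdiffd : ∀ t : Finset ι, DifferentiableOn ℂ (deriv (fun z => ∑ i ∈ t, F i z)) U :=
    fun t => (((hdiff t).analyticOnNhd hU).deriv).differentiableOn
  have h2 := (h1.deriv (Eventually.of_forall fun t => hdiffd t) hU).tendsto_at hz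
  rw [HasSum]
  apply Filter.Tendsto.congr _ h2
  intro t
  have hEq : ∀ w ∈ U, deriv (fun z => ∑ i ∈ t, F i z) w = ∑ i ∈ t, deriv (F i) w :=
    fun w hw => deriv_fun_sum fun i _ => (hf i).differentiableAt (hU.mem_nhds hw)
  have hd2 : deriv (deriv (fun z => ∑ i ∈ t, F i z)) z
      = deriv (fun w => ∑ i ∈ t, deriv (F i) w) z :=
    Filter.EventuallyEq.deriv_eq (Filter.eventuallyEq_of_mem (hU.mem_nhds hz) hEq)
  simp only [Function.comp]
  rw [hd2, deriv_fun_sum fun i _ => (((hf i).analyticOnNhd hU).deriv z hz).differentiableAt]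

end Workhorse

section Series

variable {τ : ℂ}

/-- The summand of the `wzeta` series. -/
def Fz (τ : ℂ) : ↥(SL τ) → ℂ → ℂ :=
  fun w z => (z - (w : ℂ))⁻¹ + (w : ℂ)⁻¹ + z * ((w : ℂ) ^ 2)⁻¹

/-- The regularized sum in `wzeta`. -/
def latT (τ : ℂ) : ℂ → ℂ := fun z => ∑' w : ↥(SL τ), Fz τ w z

lemma wzeta_eq (z : ℂ) : wzeta z τ = z⁻¹ - G2 τ * z + latT τ z := rfl

lemma Fz_hasDeriv {w : ↥(SL τ)} {z : ℂ} (hzw : z ≠ (w : ℂ)) :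
    HasDerivAt (Fz τ w) (((w : ℂ) ^ 2)⁻¹ - ((z - (w : ℂ)) ^ 2)⁻¹) z := by
  have h1 : HasDerivAt (fun z : ℂ => (z - (w : ℂ))⁻¹) (-1 / ((z - (w : ℂ)) ^ 2)) z := by
    simpa using ((hasDerivAt_id z).sub_const (w : ℂ)).fun_inv (sub_ne_zero.2 hzw)
  have h2 : HasDerivAt (fun z : ℂ => z * ((w : ℂ) ^ 2)⁻¹) (((w : ℂ) ^ 2)⁻¹) z := by
    simpa using hasDerivAt_mul_const (((w : ℂ)) ^ 2)⁻¹
  have h3 := (h1.add_const ((w : ℂ))⁻¹).fun_add h2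
  refine h3.congr_deriv ?_
  ring

lemma Fz_diffAt {w : ↥(SL τ)} {z : ℂ} (hzw : z ≠ (w : ℂ)) :
    DifferentiableAt ℂ (Fz τ w) z := (Fz_hasDeriv hzw).differentiableAt

lemma Fz_deriv_formula_hasDeriv {w : ↥(SL τ)} {z : ℂ} (hzw : z ≠ (w : ℂ)) :
    HasDerivAt (fun z : ℂ => ((w : ℂ) ^ 2)⁻¹ - ((z - (w : ℂ)) ^ 2)⁻¹)
      (2 * ((z - (w : ℂ)) ^ 3)⁻¹) z := by
  have h : HasDerivAt (fun z : ℂ => ((z - (w : ℂ)) ^ 2)) (2 * (z - (w : ℂ))) z := by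
    simpa using ((hasDerivAt_id z).sub_const (w : ℂ)).fun_pow 2
  have h2 := h.fun_inv (pow_ne_zero 2 (sub_ne_zero.2 hzw))
  have h3 := h2.const_sub (((w : ℂ)) ^ 2)⁻¹
  refine h3.congr_deriv ?_
  have hne : z - (w : ℂ) ≠ 0 := sub_ne_zero.2 hzw
  field_simp

lemma Fz_deriv2 {w : ↥(SL τ)} {z : ℂ} (hzw : z ≠ (w : ℂ)) :
    deriv (deriv (Fz τ w)) z = 2 * ((z - (w : ℂ)) ^ 3)⁻¹ := by
  have hev : deriv (Fz τ w) =ᶠ[𝓝 z]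
      (fun u => ((w : ℂ) ^ 2)⁻¹ - ((u - (w : ℂ)) ^ 2)⁻¹) := by
    filter_upwards [isOpen_compl_singleton.mem_nhds (by simpa using hzw :
        z ∈ ({(w : ℂ)}ᶜ : Set ℂ))] with u hu
    exact (Fz_hasDeriv (by simpa using hu)).deriv
  rw [hev.deriv_eq, (Fz_deriv_formula_hasDeriv hzw).deriv]

variable (hτ : 0 < τ.im)
include hτ

set_option maxHeartbeats 1000000 in
lemma locStruct {c : ℂ} (hc : c ∉ SL τ) :
    ∃ r > 0, ball c r ⊆ (SL τ)ᶜ ∧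
      TendstoLocallyUniformlyOn (fun (t : Finset ↥(SL τ)) z => ∑ i ∈ t, Fz τ i z)
        (fun z => ∑' i, Fz τ i z) atTop (ball c r) := by
  have hne : (SL τ).Nonempty := ⟨1, lat_one, one_ne_zero⟩
  have hδ : 0 < infDist c (SL τ) := ((SL_closed hτ).notMem_iff_infDist_pos hne).1 hc
  set δ := infDist c (SL τ) with hδdef
  set r : ℝ := min (δ / 2) 1 with hrdef
  have hr : 0 < r := by positivity
  have hsub : ball c r ⊆ (SL τ)ᶜ := by
    intro z hz hmem
    have h1 : δ ≤ dist c z := infDist_le_dist_of_mem hmem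
    have h2 : dist z c < δ / 2 := lt_of_lt_of_le hz (min_le_left _ _)
    rw [dist_comm] at h1
    linarith
  refine ⟨r, hr, hsub, ?_⟩
  set R : ℝ := 2 * (‖c‖ + 1) with hRdef
  have hsum : Summable (fun w : ↥(SL τ) => (2 * (‖c‖ + 1) ^ 2) * (‖(w : ℂ)‖ ^ 3)⁻¹) :=
    (summable_cube hτ).mul_left _
  suffices hbound : ∀ᶠ (w : ↥(SL τ)) in Filter.cofinite, ∀ z ∈ ball c r,
      ‖Fz τ w z‖ ≤ (2 * (‖c‖ + 1) ^ 2) * (‖(w : ℂ)‖ ^ 3)⁻¹ by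
    exact (tendstoUniformlyOn_tsum_of_cofinite_eventually hsum hbound).tendstoLocallyUniformlyOn
  have hfin : {w : ↥(SL τ) | ¬ (R < ‖(w : ℂ)‖)}.Finite := by
    have h1 : {w : ℂ | w ∈ ellLattice τ ∧ ‖w‖ ≤ R}.Finite := lat_finite_ball hτ R
    have h2 : ((fun w : ↥(SL τ) => (w : ℂ)) ⁻¹' {w : ℂ | w ∈ ellLattice τ ∧ ‖w‖ ≤ R}).Finite :=
      Set.Finite.preimage (Set.injOn_of_injective Subtype.val_injective) h1
    apply h2.subset
    intro w hw
    exact ⟨w.2.1, not_lt.1 hw⟩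
  rw [Filter.eventually_cofinite]
  apply hfin.subset
  intro w hw
  simp only [Set.mem_setOf_eq] at hw ⊢
  intro hR
  apply hw
  intro z hz
  have hzkey : ‖z‖ ≤ ‖c‖ + 1 := by
    have : dist z c < 1 := lt_of_lt_of_le hz (min_le_right _ _)
    have h2 : ‖z‖ ≤ ‖c‖ + dist z c := by
      rw [dist_eq_norm]
      calc ‖z‖ = ‖c + (z - c)‖ := by ring_nf
      _ ≤ ‖c‖ + ‖z - c‖ := norm_add_le _ _
    linarith
  have hw0 : (w : ℂ) ≠ 0 := w.2.2
  have hwbig : 2 * (‖c‖ + 1) < ‖(w : ℂ)‖ := hR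
  have hzw : ‖z - (w : ℂ)‖ ≥ ‖(w : ℂ)‖ / 2 := by
    have h1 : ‖(w : ℂ)‖ - ‖z‖ ≤ ‖z - (w : ℂ)‖ := by
      have := norm_sub_norm_le ((w : ℂ)) z
      rw [← norm_neg ((w : ℂ) - z)] at this
      simpa [neg_sub] using this
    linarith
  have hzwne : z ≠ (w : ℂ) := by
    intro h
    rw [h] at hzkey
    linarith [norm_nonneg c]
  have hkey : Fz τ w z = z ^ 2 * ((w : ℂ) ^ 2 * (z - (w : ℂ)))⁻¹ := by
    have hne : z - (w : ℂ) ≠ 0 := sub_ne_zero.2 hzwne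
    rw [Fz]
    field_simp
    ring
  rw [hkey]
  rw [norm_mul, norm_inv, norm_mul, norm_pow, norm_pow]
  have hwpos : (0 : ℝ) < ‖(w : ℂ)‖ := norm_pos_iff.2 hw0
  have h1 : ‖z‖ ^ 2 ≤ (‖c‖ + 1) ^ 2 := by
    apply pow_le_pow_left₀ (norm_nonneg _) hzkey
  have h2 : ‖(w : ℂ)‖ ^ 2 * (‖(w : ℂ)‖ / 2) ≤ ‖(w : ℂ)‖ ^ 2 * ‖z - (w : ℂ)‖ := by
    apply mul_le_mul_of_nonneg_left hzw (by positivity)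
  have h3 : (‖(w : ℂ)‖ ^ 2 * ‖z - (w : ℂ)‖)⁻¹ ≤ (‖(w : ℂ)‖ ^ 2 * (‖(w : ℂ)‖ / 2))⁻¹ := by
    apply inv_anti₀ (by positivity) h2
  calc ‖z‖ ^ 2 * (‖(w : ℂ)‖ ^ 2 * ‖z - (w : ℂ)‖)⁻¹
      ≤ (‖c‖ + 1) ^ 2 * (‖(w : ℂ)‖ ^ 2 * (‖(w : ℂ)‖ / 2))⁻¹ := by
        apply mul_le_mul h1 h3 (by positivity) (by positivity)
  _ = 2 * (‖c‖ + 1) ^ 2 * (‖(w : ℂ)‖ ^ 3)⁻¹ := by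
        field_simp

lemma latT_diffAt {c : ℂ} (hc : c ∉ SL τ) : DifferentiableAt ℂ (latT τ) c := by
  obtain ⟨r, hr, hsub, hTLU⟩ := locStruct hτ hc
  have hf : ∀ w : ↥(SL τ), DifferentiableOn ℂ (Fz τ w) (ball c r) := by
    intro w
    intro u hu
    exact (Fz_diffAt (fun h => (hsub hu) (by rw [h]; exact w.2))).differentiableWithinAt
  have := hTLU.differentiableOn
    (Eventually.of_forall fun t => wh_partial_diff hf t) isOpen_ball
  exact (this.differentiableAt (isOpen_ball.mem_nhds (mem_ball_self hr)))

lemma hasSum_T2 {z : ℂ} (hz : z ∉ SL τ) :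
    HasSum (fun w : ↥(SL τ) => ((w : ℂ) ^ 2)⁻¹ - ((z - (w : ℂ)) ^ 2)⁻¹)
      (deriv (latT τ) z) := by
  obtain ⟨r, hr, hsub, hTLU⟩ := locStruct hτ hz
  have hf : ∀ w : ↥(SL τ), DifferentiableOn ℂ (Fz τ w) (ball z r) := by
    intro w u hu
    exact (Fz_diffAt (fun h => (hsub hu) (by rw [h]; exact w.2))).differentiableWithinAt
  have h := wh_hasSum_deriv isOpen_ball hf hTLU (mem_ball_self hr)
  have heq : (fun w : ↥(SL τ) => deriv (Fz τ w) z)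
      = fun w : ↥(SL τ) => ((w : ℂ) ^ 2)⁻¹ - ((z - (w : ℂ)) ^ 2)⁻¹ :=
    funext fun w => (Fz_hasDeriv (fun h => hz (by rw [h]; exact w.2))).deriv
  rw [heq] at h
  exact h

lemma hasSum_T3 {z : ℂ} (hz : z ∉ SL τ) :
    HasSum (fun w : ↥(SL τ) => 2 * ((z - (w : ℂ)) ^ 3)⁻¹)
      (deriv (deriv (latT τ)) z) := by
  obtain ⟨r, hr, hsub, hTLU⟩ := locStruct hτ hz
  have hf : ∀ w : ↥(SL τ), DifferentiableOn ℂ (Fz τ w) (ball z r) := by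
    intro w u hu
    exact (Fz_diffAt (fun h => (hsub hu) (by rw [h]; exact w.2))).differentiableWithinAt
  have h := wh_hasSum_deriv2 isOpen_ball hf hTLU (mem_ball_self hr)
  have heq : (fun w : ↥(SL τ) => deriv (deriv (Fz τ w)) z)
      = fun w : ↥(SL τ) => 2 * ((z - (w : ℂ)) ^ 3)⁻¹ :=
    funext fun w => Fz_deriv2 (fun h => hz (by rw [h]; exact w.2))
  rw [heq] at h
  exact h

end Series

section Identities

variable {τ : ℂ}

lemma SL_eq : SL τ = ellLattice τ \ {0} := by
  ext w; simp [SL, Set.mem_diff]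

lemma notSL {z : ℂ} (hz : z ∉ ellLattice τ) : z ∉ SL τ := fun h => hz h.1

lemma zero_notSL : (0 : ℂ) ∉ SL τ := fun h => h.2 rfl

lemma latT_zero : latT τ 0 = 0 := by
  have : ∀ w : ↥(SL τ), Fz τ w 0 = 0 := by
    intro w
    simp [Fz, zero_sub, inv_neg]
  simp only [latT, this, tsum_zero]

lemma SL_neg {w : ℂ} : -w ∈ SL τ ↔ w ∈ SL τ := by
  constructor
  · rintro ⟨h1, h2⟩; exact ⟨lat_neg_iff.1 h1, fun h => h2 (by simp [h])⟩
  · rintro ⟨h1, h2⟩; exact ⟨lat_neg h1, fun h => h2 (by simpa using congrArg Neg.neg h)⟩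

lemma latT_neg (z : ℂ) : latT τ (-z) = - latT τ z := by
  have e1 : latT τ (-z) = ∑' x : ↥(SL τ),
      (fun w : ℂ => (-z - w)⁻¹ + w⁻¹ + (-z) * (w ^ 2)⁻¹) (x : ℂ) := rfl
  have e2 : latT τ z = ∑' x : ↥(SL τ),
      (fun w : ℂ => (z - w)⁻¹ + w⁻¹ + z * (w ^ 2)⁻¹) (x : ℂ) := rfl
  have h1 : latT τ (-z) = ∑' w : ℂ,
      Set.indicator (SL τ) (fun w => (-z - w)⁻¹ + w⁻¹ + (-z) * (w ^ 2)⁻¹) w :=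
    e1.trans (tsum_subtype (SL τ) (fun w : ℂ => (-z - w)⁻¹ + w⁻¹ + (-z) * (w ^ 2)⁻¹))
  have h2 : latT τ z = ∑' w : ℂ,
      Set.indicator (SL τ) (fun w => (z - w)⁻¹ + w⁻¹ + z * (w ^ 2)⁻¹) w :=
    e2.trans (tsum_subtype (SL τ) (fun w : ℂ => (z - w)⁻¹ + w⁻¹ + z * (w ^ 2)⁻¹))
  rw [h1, h2, ← tsum_neg,
    ← (Equiv.neg ℂ).tsum_eq (Set.indicator (SL τ) (fun w => (-z - w)⁻¹ + w⁻¹ + (-z) * (w ^ 2)⁻¹))]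
  apply tsum_congr
  intro w
  simp only [Equiv.neg_apply]
  by_cases hw : w ∈ SL τ
  · rw [Set.indicator_of_mem (SL_neg.2 hw), Set.indicator_of_mem hw]
    have hrw : -z - (-w) = -(z - w) := by ring
    have hrw2 : (-w : ℂ) ^ 2 = w ^ 2 := by ring
    rw [hrw, hrw2, inv_neg, inv_neg]
    ring
  · rw [Set.indicator_of_notMem (fun h => hw (SL_neg.1 h)), Set.indicator_of_notMem hw]
    simp

lemma wzeta_odd (z : ℂ) : wzeta (-z) τ = - wzeta z τ := by
  rw [wzeta_eq, wzeta_eq, latT_neg, inv_neg]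
  ring

lemma wp_even (z : ℂ) : wp (-z) τ = wp z τ := by
  have e1 : wp (-z) τ = ((-z) ^ 2)⁻¹ + G2 τ + ∑' x : ↥(SL τ),
      (fun w : ℂ => ((-z - w) ^ 2)⁻¹ - (w ^ 2)⁻¹) (x : ℂ) := rfl
  have e2 : wp z τ = (z ^ 2)⁻¹ + G2 τ + ∑' x : ↥(SL τ),
      (fun w : ℂ => ((z - w) ^ 2)⁻¹ - (w ^ 2)⁻¹) (x : ℂ) := rfl
  have h1 : wp (-z) τ = ((-z) ^ 2)⁻¹ + G2 τ + ∑' w : ℂ,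
      Set.indicator (SL τ) (fun w => ((-z - w) ^ 2)⁻¹ - (w ^ 2)⁻¹) w := by
    rw [e1]
    congr 1
    exact tsum_subtype (SL τ) (fun w : ℂ => ((-z - w) ^ 2)⁻¹ - (w ^ 2)⁻¹)
  have h2 : wp z τ = (z ^ 2)⁻¹ + G2 τ + ∑' w : ℂ,
      Set.indicator (SL τ) (fun w => ((z - w) ^ 2)⁻¹ - (w ^ 2)⁻¹) w := by
    rw [e2]
    congr 1
    exact tsum_subtype (SL τ) (fun w : ℂ => ((z - w) ^ 2)⁻¹ - (w ^ 2)⁻¹)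
  rw [h1, h2, ← (Equiv.neg ℂ).tsum_eq
    (Set.indicator (SL τ) (fun w => ((-z - w) ^ 2)⁻¹ - (w ^ 2)⁻¹))]
  have h3 : ((-z) ^ 2 : ℂ)⁻¹ = (z ^ 2)⁻¹ := by ring_nf
  rw [h3]
  congr 1
  apply tsum_congr
  intro w
  simp only [Equiv.neg_apply]
  by_cases hw : w ∈ SL τ
  · rw [Set.indicator_of_mem (SL_neg.2 hw), Set.indicator_of_mem hw]
    have hrw : ((-z - -w) ^ 2 : ℂ) = (z - w) ^ 2 := by ring
    have hrw2 : ((-w : ℂ)) ^ 2 = w ^ 2 := by ring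
    rw [hrw, hrw2]
  · rw [Set.indicator_of_notMem (fun h => hw (SL_neg.1 h)), Set.indicator_of_notMem hw]

variable (hτ : 0 < τ.im)
include hτ

lemma wp_eq {z : ℂ} (hz : z ∉ SL τ) :
    wp z τ = (z ^ 2)⁻¹ + G2 τ - deriv (latT τ) z := by
  have h := (hasSum_T2 hτ hz).neg
  have h2 : HasSum (fun w : ↥(SL τ) => ((z - (w : ℂ)) ^ 2)⁻¹ - ((w : ℂ) ^ 2)⁻¹)
      (-(deriv (latT τ) z)) := by
    simpa [neg_sub] using h
  have h3 : wp z τ = (z ^ 2)⁻¹ + G2 τ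
      + ∑' w : ↥(SL τ), (((z - (w : ℂ)) ^ 2)⁻¹ - ((w : ℂ) ^ 2)⁻¹) := rfl
  rw [h3, h2.tsum_eq]
  ring

lemma V_open : IsOpen ((SL τ) : Set ℂ)ᶜ := (SL_closed hτ).isOpen_compl

lemma U_open : IsOpen ((ellLattice τ) : Set ℂ)ᶜ := (lat_closed hτ).isOpen_compl

lemma latT_analytic : AnalyticOnNhd ℂ (latT τ) ((SL τ) : Set ℂ)ᶜ :=
  DifferentiableOn.analyticOnNhd
    (fun c hc => (latT_diffAt hτ hc).differentiableWithinAt) (V_open hτ)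

lemma wzeta_hasDeriv {z : ℂ} (hz : z ∉ ellLattice τ) :
    HasDerivAt (fun u => wzeta u τ) (-(wp z τ)) z := by
  have hz0 : z ≠ 0 := fun h => hz (h ▸ lat_zero)
  have h1 : HasDerivAt (fun u : ℂ => u⁻¹) (-(z ^ 2)⁻¹) z := hasDerivAt_inv hz0
  have h2 : HasDerivAt (fun u : ℂ => G2 τ * u) (G2 τ) z := by
    simpa using (hasDerivAt_id z).const_mul (G2 τ)
  have h3 : HasDerivAt (latT τ) (deriv (latT τ) z) z :=
    (latT_diffAt hτ (notSL hz)).hasDerivAt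
  have h := (h1.fun_sub h2).fun_add h3
  have heq : (fun u => wzeta u τ) = fun u => u⁻¹ - G2 τ * u + latT τ u :=
    funext fun u => wzeta_eq u
  rw [heq]
  refine h.congr_deriv ?_
  rw [wp_eq hτ (notSL hz)]
  ring

/-- The regularized `wp`-function. -/
def Wfun (τ : ℂ) : ℂ → ℂ := fun z => (z ^ 2)⁻¹ + G2 τ - deriv (latT τ) z

lemma wp_eqOn : Set.EqOn (fun u => wp u τ) (Wfun τ) ((SL τ) : Set ℂ)ᶜ :=
  fun z hz => wp_eq hτ hz

lemma Wfun_hasDeriv {z : ℂ} (hz : z ∉ ellLattice τ) :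
    HasDerivAt (Wfun τ) (-2 * (z ^ 3)⁻¹ - deriv (deriv (latT τ)) z) z := by
  have hz0 : z ≠ 0 := fun h => hz (h ▸ lat_zero)
  have h1 : HasDerivAt (fun u : ℂ => (u ^ 2)⁻¹) (-2 * (z ^ 3)⁻¹) z := by
    have h := (hasDerivAt_pow 2 z).fun_inv (pow_ne_zero 2 hz0)
    refine h.congr_deriv ?_
    field_simp
    ring
  have h3 : HasDerivAt (fun u => deriv (latT τ) u) (deriv (deriv (latT τ)) z) z :=
    (((latT_analytic hτ).deriv) z (notSL hz)).differentiableAt.hasDerivAt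
  have h := (h1.add_const (G2 τ)).fun_sub h3
  exact h

lemma wp_hasDeriv {z : ℂ} (hz : z ∉ ellLattice τ) :
    HasDerivAt (fun u => wp u τ) (wp' z τ) z ∧
      wp' z τ = -2 * (z ^ 3)⁻¹ - deriv (deriv (latT τ)) z := by
  have hev : (fun u => wp u τ) =ᶠ[𝓝 z] Wfun τ :=
    Filter.eventuallyEq_of_mem ((V_open hτ).mem_nhds (notSL hz)) (wp_eqOn hτ)
  have hW := Wfun_hasDeriv hτ hz
  have h1 : HasDerivAt (fun u => wp u τ) (-2 * (z ^ 3)⁻¹ - deriv (deriv (latT τ)) z) z :=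
    hW.congr_of_eventuallyEq hev
  have h2 : wp' z τ = -2 * (z ^ 3)⁻¹ - deriv (deriv (latT τ)) z := h1.deriv
  exact ⟨h2 ▸ h1, h2⟩

lemma wp'_eqOn {z : ℂ} (hz : z ∉ ellLattice τ) : wp' z τ = deriv (Wfun τ) z := by
  have hev : (fun u => wp u τ) =ᶠ[𝓝 z] Wfun τ :=
    Filter.eventuallyEq_of_mem ((V_open hτ).mem_nhds (notSL hz)) (wp_eqOn hτ)
  exact hev.deriv_eq

lemma Wfun_analytic : AnalyticOnNhd ℂ (Wfun τ) (((SL τ) : Set ℂ)ᶜ \ {0}) := by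
  apply DifferentiableOn.analyticOnNhd _ ((V_open hτ).sdiff isClosed_singleton)
  intro z hz
  have hz' : z ∉ ellLattice τ ∨ z = 0 := by
    by_cases h : z = 0
    · exact Or.inr h
    · left
      intro hmem
      exact hz.1 ⟨hmem, h⟩
  rcases hz' with h | h
  · exact (Wfun_hasDeriv hτ h).differentiableAt.differentiableWithinAt
  · exact absurd h hz.2

lemma wp'_hasDeriv {z : ℂ} (hz : z ∉ ellLattice τ) :
    HasDerivAt (fun u => wp' u τ) (wp'' z τ) z := by
  have hU : IsOpen (((SL τ) : Set ℂ)ᶜ \ {0}) := (V_open hτ).sdiff isClosed_singleton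
  have hzmem : z ∈ ((SL τ) : Set ℂ)ᶜ \ {0} :=
    ⟨notSL hz, fun h => hz (by simp only [Set.mem_singleton_iff] at h; exact h ▸ lat_zero)⟩
  have hev : (fun u => wp' u τ) =ᶠ[𝓝 z] deriv (Wfun τ) := by
    filter_upwards [hU.mem_nhds hzmem] with u hu
    have hu' : u ∉ ellLattice τ := by
      intro hmem
      rcases eq_or_ne u 0 with h | h
      · exact hu.2 h
      · exact hu.1 ⟨hmem, h⟩
    exact wp'_eqOn hτ hu'
  have hd : DifferentiableAt ℂ (deriv (Wfun τ)) z :=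
    (((Wfun_analytic hτ).deriv) z hzmem).differentiableAt
  have h1 : DifferentiableAt ℂ (fun u => wp' u τ) z := by
    rw [Filter.EventuallyEq.differentiableAt_iff hev]
    exact hd
  exact h1.hasDerivAt

lemma lat_int_mul (k : ℤ) {c : ℂ} (hc : c ∈ ellLattice τ) : (k : ℂ) * c ∈ ellLattice τ := by
  obtain ⟨m, n, rfl⟩ := hc
  exact ⟨k * m, k * n, by push_cast; ring⟩

lemma S3_shift {z ω : ℂ} (hz : z ∉ ellLattice τ) (hω : ω ∈ ellLattice τ) :
    (∑' w : ↥(SL τ), 2 * ((z + ω - (w : ℂ)) ^ 3)⁻¹)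
      = (∑' w : ↥(SL τ), 2 * ((z - (w : ℂ)) ^ 3)⁻¹) + 2 * (z ^ 3)⁻¹ - 2 * ((z + ω) ^ 3)⁻¹ := by
  rcases eq_or_ne ω 0 with rfl | hω0
  · simp
  set k : ℂ → ℂ := fun v => 2 * ((z - v) ^ 3)⁻¹ with hk
  have hsum0 : Summable (Set.indicator (SL τ) k) := by
    have h1 := (hasSum_T3 hτ (notSL hz)).summable
    exact summable_subtype_iff_indicator.1 h1
  set B : Set ℂ := ellLattice τ \ {0, -ω} with hB
  have hBsub : B ⊆ SL τ := by
    intro v hv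
    exact ⟨hv.1, fun h => hv.2 (Or.inl h)⟩
  have hsumB : Summable (Set.indicator B k) := by
    have h1 := hsum0.indicator B
    rw [Set.indicator_indicator, Set.inter_eq_left.2 hBsub] at h1
    exact h1
  have hsum_single : ∀ a : ℂ, Summable (Set.indicator ({a} : Set ℂ) k) := by
    intro a
    apply summable_of_ne_finset_zero (s := {a})
    intro b hb
    exact Set.indicator_of_notMem (by simpa using hb) _
  have htsum_single : ∀ a : ℂ, ∑' v : ℂ, Set.indicator ({a} : Set ℂ) k v = k a := by
    intro a
    rw [tsum_eq_single a]
    · exact Set.indicator_of_mem rfl _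
    · intro b hb
      exact Set.indicator_of_notMem (by simpa using hb) _
  have hadd : ∀ a : ℂ, a ∉ B → (∑' v : ℂ, Set.indicator (B ∪ {a}) k v)
      = (∑' v : ℂ, Set.indicator B k v) + k a := by
    intro a ha
    have hdisj : Disjoint B ({a} : Set ℂ) := by
      rw [Set.disjoint_singleton_right]; exact ha
    have hpt : ∀ v, Set.indicator (B ∪ {a}) k v
        = Set.indicator B k v + Set.indicator {a} k v := fun v => by
      rw [Set.indicator_union_of_disjoint hdisj]
    rw [tsum_congr hpt, Summable.tsum_add hsumB (hsum_single a), htsum_single]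
  have hU1 : ellLattice τ \ {(0 : ℂ)} = B ∪ {-ω} := by
    ext v
    simp only [hB, Set.mem_diff, Set.mem_union, Set.mem_insert_iff, Set.mem_singleton_iff]
    constructor
    · intro hv
      obtain ⟨h1, h2⟩ := hv
      by_cases h : v = -ω
      · exact Or.inr h
      · exact Or.inl ⟨h1, fun hc => hc.elim h2 h⟩
    · rintro (⟨h1, h2⟩ | rfl)
      · exact ⟨h1, fun h => h2 (Or.inl h)⟩
      · exact ⟨lat_neg hω, fun h => hω0 (by simpa using congrArg Neg.neg h)⟩
  have hU2 : {v : ℂ | v + ω ∈ SL τ} = B ∪ {(0 : ℂ)} := by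
    ext v
    simp only [hB, Set.mem_setOf_eq, Set.mem_union, Set.mem_diff, Set.mem_insert_iff,
      Set.mem_singleton_iff, SL]
    constructor
    · intro hvm
      obtain ⟨h1, h2⟩ := hvm
      by_cases h : v = 0
      · exact Or.inr h
      · refine Or.inl ⟨by simpa using lat_sub h1 hω, fun hc => ?_⟩
        rcases hc with rfl | rfl
        · exact h rfl
        · exact h2 (by ring_nf)
    · rintro (⟨h1, h2⟩ | rfl)
      · refine ⟨lat_add h1 hω, fun h => h2 (Or.inr (by linear_combination h))⟩
      · exact ⟨by simpa using hω, fun h => hω0 (by simpa using h)⟩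
  have h0B : (0 : ℂ) ∉ B := fun h => h.2 (Or.inl rfl)
  have hωB : (-ω : ℂ) ∉ B := fun h => h.2 (Or.inr rfl)
  have hRHS : (∑' w : ↥(SL τ), 2 * ((z - (w : ℂ)) ^ 3)⁻¹)
      = ∑' v : ℂ, Set.indicator (ellLattice τ \ {(0 : ℂ)}) k v := by
    have e : (∑' w : ↥(SL τ), 2 * ((z - (w : ℂ)) ^ 3)⁻¹) = ∑' x : ↥(SL τ), k (x : ℂ) := rfl
    rw [e]
    rw [show (SL τ : Set ℂ) = ellLattice τ \ {(0:ℂ)} from SL_eq] 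
    exact tsum_subtype _ k
  have hLHS : (∑' w : ↥(SL τ), 2 * ((z + ω - (w : ℂ)) ^ 3)⁻¹)
      = ∑' v : ℂ, Set.indicator {v : ℂ | v + ω ∈ SL τ} k v := by
    have e : (∑' w : ↥(SL τ), 2 * ((z + ω - (w : ℂ)) ^ 3)⁻¹)
        = ∑' x : ↥(SL τ), (fun v : ℂ => k (v - ω)) (x : ℂ) := by
      apply tsum_congr
      intro w
      simp only [hk]
      congr 2
      ring
    rw [e, tsum_subtype (SL τ) (fun v : ℂ => k (v - ω)),
      ← (Equiv.addRight ω).tsum_eq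
        (fun v => Set.indicator (SL τ) (fun u : ℂ => k (u - ω)) v)]
    apply tsum_congr
    intro v
    simp only [Equiv.coe_addRight]
    by_cases hv : v + ω ∈ SL τ
    · rw [Set.indicator_of_mem hv, Set.indicator_of_mem (by exact hv)]
      simp
    · rw [Set.indicator_of_notMem hv, Set.indicator_of_notMem (by exact hv)]
  have hk0 : k 0 = 2 * (z ^ 3)⁻¹ := by simp [hk]
  have hkω : k (-ω) = 2 * ((z + ω) ^ 3)⁻¹ := by
    rw [hk]
    show 2 * ((z - -ω) ^ 3)⁻¹ = 2 * ((z + ω) ^ 3)⁻¹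
    congr 2
    ring
  rw [hLHS, hRHS, hU1, hU2, hadd 0 h0B, hadd (-ω) hωB, hk0, hkω]
  ring

lemma wp'_periodic {z ω : ℂ} (hz : z ∉ ellLattice τ) (hω : ω ∈ ellLattice τ) :
    wp' (z + ω) τ = wp' z τ := by
  have hzω : z + ω ∉ ellLattice τ := by
    intro h
    exact hz (by simpa using lat_sub h hω)
  have h1 := (wp_hasDeriv hτ hz).2
  have h2 := (wp_hasDeriv hτ hzω).2
  have hT3 : ∀ {u : ℂ}, u ∉ ellLattice τ →
      deriv (deriv (latT τ)) u = ∑' w : ↥(SL τ), 2 * ((u - (w : ℂ)) ^ 3)⁻¹ :=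
    fun {u} hu => (hasSum_T3 hτ (notSL hu)).tsum_eq.symm
  rw [h1, h2, hT3 hz, hT3 hzω, S3_shift hτ hz hω]
  ring

end Identities

section Constancy

lemma const_of_hasDerivAt_zero {s : Set ℂ} (hs : IsOpen s) (hp : IsPreconnected s)
    {f : ℂ → ℂ} (hd : ∀ z ∈ s, HasDerivAt f 0 z) {a b : ℂ} (ha : a ∈ s) (hb : b ∈ s) :
    f a = f b := by
  haveI := Subtype.preconnectedSpace hp
  have hlc : IsLocallyConstant (fun x : s => f x) := by
    rw [IsLocallyConstant.iff_exists_open]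
    rintro ⟨x, hx⟩
    obtain ⟨ε, hε, hball⟩ := Metric.isOpen_iff.1 hs x hx
    refine ⟨Subtype.val ⁻¹' ball x ε, isOpen_ball.preimage continuous_subtype_val,
      by simpa using Metric.mem_ball_self (x := x) hε, ?_⟩
    rintro ⟨y, hy⟩ hyb
    simp only [Set.mem_preimage] at hyb
    have hzero : ∀ u ∈ ball x ε, fderivWithin ℂ f (ball x ε) u = 0 := by
      intro u hu
      rw [fderivWithin_of_isOpen isOpen_ball hu]
      have h0 : HasFDerivAt f (0 : ℂ →L[ℂ] ℂ) u := by
        have h := (hd u (hball hu)).hasFDerivAt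
        simpa using h
      exact h0.fderiv
    exact (convex_ball x ε).is_const_of_fderivWithin_eq_zero
      (fun u hu => (hd u (hball hu)).differentiableAt.differentiableWithinAt)
      hzero hyb (mem_ball_self hε)
  exact hlc.apply_eq_of_preconnectedSpace ⟨a, ha⟩ ⟨b, hb⟩

end Constancy

section Periodicity

variable {τ : ℂ}

lemma U_preconnected : IsPreconnected ((ellLattice τ) : Set ℂ)ᶜ :=
  ((lat_countable (τ := τ)).isPathConnected_compl_of_one_lt_rank
    (by rw [Complex.rank_real_complex]; norm_num)).isConnected.isPreconnected

variable (hτ : 0 < τ.im)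
include hτ

lemma lat_shift_not {z ω : ℂ} (hz : z ∉ ellLattice τ) (hω : ω ∈ ellLattice τ) :
    z + ω ∉ ellLattice τ := by
  intro h
  exact hz (by simpa using lat_sub h hω)

lemma wp_shift_hasDeriv {ω : ℂ} (hω : ω ∈ ellLattice τ) {z : ℂ} (hz : z ∉ ellLattice τ) :
    HasDerivAt (fun u => wp (u + ω) τ - wp u τ) 0 z := by
  have hzω : z + ω ∉ ellLattice τ := lat_shift_not hτ hz hω
  have hA : HasDerivAt (fun u : ℂ => wp (u + ω) τ) (wp' (z + ω) τ) z := by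
    have h := (wp_hasDeriv hτ hzω).1
    have hcomp := HasDerivAt.comp z h ((hasDerivAt_id z).add_const ω)
    simpa [Function.comp_def] using hcomp
  have h2 := hA.sub (wp_hasDeriv hτ hz).1
  have h3 : wp' (z + ω) τ - wp' z τ = 0 := by
    rw [wp'_periodic hτ hz hω]; ring
  rwa [h3] at h2

lemma wp_shift_const {ω : ℂ} (hω : ω ∈ ellLattice τ) {z₁ z₂ : ℂ}
    (h1 : z₁ ∉ ellLattice τ) (h2 : z₂ ∉ ellLattice τ) :
    wp (z₁ + ω) τ - wp z₁ τ = wp (z₂ + ω) τ - wp z₂ τ :=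
  const_of_hasDerivAt_zero (U_open hτ) U_preconnected
    (fun z hz => wp_shift_hasDeriv hτ hω hz) h1 h2

lemma half_not_lat : (2 : ℂ)⁻¹ ∉ ellLattice τ := by
  rintro ⟨m, n, h⟩
  have him : (0 : ℝ) = n * τ.im := by
    have := congrArg Complex.im h
    simpa using this
  have hn : (n : ℝ) = 0 := by
    rcases mul_eq_zero.1 him.symm with h' | h'
    · exact h'
    · exact absurd h' (ne_of_gt hτ)
  have hn' : n = 0 := by exact_mod_cast hn
  subst hn'
  have hre : (2 : ℝ)⁻¹ = m := by
    have := congrArg Complex.re h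
    simpa using this
  have : (2 * m : ℝ) = 1 := by
    field_simp at hre
    linarith
  have : (2 * m : ℤ) = 1 := by exact_mod_cast this
  omega

lemma tau_half_not_lat : τ / 2 ∉ ellLattice τ := by
  rintro ⟨m, n, h⟩
  have him : τ.im / 2 = n * τ.im := by
    have := congrArg Complex.im h
    simpa using this
  have hn : (2 * n : ℝ) = 1 := by
    have him' : τ.im ≠ 0 := ne_of_gt hτ
    field_simp at him
    -- him : τ.im = n * τ.im * 2 or similar
    nlinarith [him]
  have : (2 * n : ℤ) = 1 := by exact_mod_cast hn
  omega

lemma wp_per_single {ω : ℂ} (hω : ω ∈ ellLattice τ) (hhalf : -(ω / 2) ∉ ellLattice τ)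
    {z : ℂ} (hz : z ∉ ellLattice τ) : wp (z + ω) τ = wp z τ := by
  have h := wp_shift_const hτ hω hz hhalf
  have he : -(ω / 2) + ω = ω / 2 := by ring
  rw [he] at h
  have heven : wp (-(ω / 2)) τ = wp (ω / 2) τ := wp_even (ω / 2)
  have hh : wp (z + ω) τ - wp z τ = 0 := by rw [h, heven]; ring
  linear_combination hh

lemma wp_periodic {ω : ℂ} (hω : ω ∈ ellLattice τ) {z : ℂ} (hz : z ∉ ellLattice τ) :
    wp (z + ω) τ = wp z τ := by
  obtain ⟨m, n, rfl⟩ := hω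
  have key : ∀ c : ℂ, c ∈ ellLattice τ → (∀ u : ℂ, u ∉ ellLattice τ → wp (u + c) τ = wp u τ) →
      ∀ k : ℤ, ∀ u : ℂ, u ∉ ellLattice τ → wp (u + k * c) τ = wp u τ := by
    intro c hc hper k
    induction k using Int.induction_on with
    | zero => intro u hu; simp
    | succ i ih =>
        intro u hu
        have hmem : u + ((i : ℤ) : ℂ) * c ∉ ellLattice τ :=
          lat_shift_not hτ hu (lat_int_mul hτ (i : ℤ) hc)
        have hstep : wp ((u + ((i : ℤ) : ℂ) * c) + c) τ = wp (u + ((i : ℤ) : ℂ) * c) τ :=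
          hper _ hmem
        have harg : u + (((i : ℤ) + 1 : ℤ) : ℂ) * c = (u + ((i : ℤ) : ℂ) * c) + c := by
          push_cast; ring
        rw [harg, hstep, ih u hu]
    | pred i ih =>
        intro u hu
        have hmem : u + ((-(i : ℤ) : ℤ) : ℂ) * c ∉ ellLattice τ :=
          lat_shift_not hτ hu (lat_int_mul hτ (-(i : ℤ)) hc)
        have hmem2 : (u + ((-(i : ℤ) : ℤ) : ℂ) * c) + -c ∉ ellLattice τ :=
          lat_shift_not hτ hmem (lat_neg hc)
        have hstep : wp (((u + ((-(i : ℤ) : ℤ) : ℂ) * c) + -c) + c) τ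
            = wp ((u + ((-(i : ℤ) : ℤ) : ℂ) * c) + -c) τ := hper _ hmem2
        have hback : ((u + ((-(i : ℤ) : ℤ) : ℂ) * c) + -c) + c = u + ((-(i : ℤ) : ℤ) : ℂ) * c := by
          ring
        rw [hback] at hstep
        have harg : u + ((-(i : ℤ) - 1 : ℤ) : ℂ) * c = (u + ((-(i : ℤ) : ℤ) : ℂ) * c) + -c := by
          push_cast; ring
        rw [harg, ← hstep, ih u hu]
  have hone : ∀ u : ℂ, u ∉ ellLattice τ → wp (u + 1) τ = wp u τ := by
    intro u hu
    apply wp_per_single hτ lat_one _ hu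
    intro h
    apply half_not_lat hτ
    have : -(-((1 : ℂ) / 2)) ∈ ellLattice τ := lat_neg h
    simpa [one_div] using this
  have htau : ∀ u : ℂ, u ∉ ellLattice τ → wp (u + τ) τ = wp u τ := by
    intro u hu
    apply wp_per_single hτ lat_tau _ hu
    intro h
    apply tau_half_not_lat hτ
    have : -(-(τ / 2)) ∈ ellLattice τ := lat_neg h
    simpa using this
  have h1 : wp (z + ((m : ℂ) + n * τ)) τ = wp ((z + m * 1) + n * τ) τ := by
    congr 1; ring
  rw [h1]
  rw [key τ lat_tau htau n _ (by
    intro h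
    exact hz (by simpa using lat_sub h (lat_int_mul hτ m lat_one)))]
  exact key 1 lat_one hone m z hz

lemma wzeta_shift_const {ω : ℂ} (hω : ω ∈ ellLattice τ) {z₁ z₂ : ℂ}
    (h1 : z₁ ∉ ellLattice τ) (h2 : z₂ ∉ ellLattice τ) :
    wzeta (z₁ + ω) τ - wzeta z₁ τ = wzeta (z₂ + ω) τ - wzeta z₂ τ := by
  apply const_of_hasDerivAt_zero (U_open hτ) U_preconnected _ h1 h2
  intro z hz
  have hzω : z + ω ∉ ellLattice τ := lat_shift_not hτ hz hω
  have hA : HasDerivAt (fun u : ℂ => wzeta (u + ω) τ) (-(wp (z + ω) τ)) z := by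
    have h := wzeta_hasDeriv hτ hzω
    have hcomp := HasDerivAt.comp z h ((hasDerivAt_id z).add_const ω)
    simpa [Function.comp_def] using hcomp
  have h2' := hA.sub (wzeta_hasDeriv hτ hz)
  have h3 : -(wp (z + ω) τ) - -(wp z τ) = 0 := by
    rw [wp_periodic hτ hω hz]; ring
  rwa [h3] at h2'

end Periodicity


section Liouville

variable {τ : ℂ} (hτ : 0 < τ.im) {y : ℂ} (hy : y ∉ ellLattice τ)

/-- `A(x) = ζ(x−y) + ζ(y) − ζ(x)`. -/
def Afun (τ y : ℂ) : ℂ → ℂ := fun x => wzeta (x - y) τ + wzeta y τ - wzeta x τ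

/-- `H(x) = A(x)² − ℘(x) − ℘(y) − ℘(x−y)`. -/
def Hfun (τ y : ℂ) : ℂ → ℂ :=
  fun x => (Afun τ y x) ^ 2 - wp x τ - wp y τ - wp (x - y) τ

/-- Singular set of `H`. -/
def Sy (τ y : ℂ) : Set ℂ := ellLattice τ ∪ {x | x - y ∈ ellLattice τ}

lemma Sy_not_mem_iff {x : ℂ} : x ∉ Sy τ y ↔ x ∉ ellLattice τ ∧ x - y ∉ ellLattice τ := by
  simp [Sy, not_or]

include hτ

lemma Sy_closed : IsClosed (Sy τ y) :=
  (lat_closed hτ).union ((lat_closed hτ).preimage (continuous_id.sub continuous_const))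

omit hτ in
lemma Sy_countable : (Sy τ y).Countable := by
  apply Set.Countable.union lat_countable
  have h : {x : ℂ | x - y ∈ ellLattice τ} = (fun w => w + y) '' ellLattice τ := by
    ext x
    simp only [Set.mem_setOf_eq, Set.mem_image]
    constructor
    · intro h; exact ⟨x - y, h, by ring⟩
    · rintro ⟨w, hw, rfl⟩; simpa using hw
  rw [h]
  exact lat_countable.image _

omit hτ in
lemma lat_add_mem_iff {x ω : ℂ} (hω : ω ∈ ellLattice τ) :
    x + ω ∈ ellLattice τ ↔ x ∈ ellLattice τ := by
  constructor
  · intro h; simpa using lat_sub h hω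
  · intro h; exact lat_add h hω

omit hτ in
lemma Sy_shift_iff {x ω : ℂ} (hω : ω ∈ ellLattice τ) :
    x + ω ∈ Sy τ y ↔ x ∈ Sy τ y := by
  simp only [Sy, Set.mem_union, Set.mem_setOf_eq]
  rw [lat_add_mem_iff hω]
  have h : x + ω - y = (x - y) + ω := by ring
  rw [h, lat_add_mem_iff hω]

include hy

lemma A_hasDeriv {x : ℂ} (hx : x ∉ Sy τ y) :
    HasDerivAt (Afun τ y) (wp x τ - wp (x - y) τ) x := by
  obtain ⟨hx1, hx2⟩ := Sy_not_mem_iff.1 hx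
  have h1 : HasDerivAt (fun u : ℂ => wzeta (u - y) τ) (-(wp (x - y) τ)) x := by
    have h := wzeta_hasDeriv hτ hx2
    have h2 := HasDerivAt.comp x h ((hasDerivAt_id x).sub_const y)
    simpa [Function.comp_def] using h2
  have h2 := wzeta_hasDeriv hτ hx1
  have h3 := (h1.add_const (wzeta y τ)).fun_sub h2
  refine h3.congr_deriv ?_
  ring

lemma H_hasDeriv {x : ℂ} (hx : x ∉ Sy τ y) :
    HasDerivAt (Hfun τ y)
      (2 * Afun τ y x * (wp x τ - wp (x - y) τ) - wp' x τ - wp' (x - y) τ) x := by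
  obtain ⟨hx1, hx2⟩ := Sy_not_mem_iff.1 hx
  have hA := A_hasDeriv hτ hy hx
  have hA2 : HasDerivAt (fun u => (Afun τ y u) ^ 2)
      (2 * Afun τ y x * (wp x τ - wp (x - y) τ)) x := by
    have h := hA.fun_pow 2
    refine h.congr_deriv ?_
    ring
  have hwx := (wp_hasDeriv hτ hx1).1
  have hwz : HasDerivAt (fun u : ℂ => wp (u - y) τ) (wp' (x - y) τ) x := by
    have h := HasDerivAt.comp x (wp_hasDeriv hτ hx2).1 ((hasDerivAt_id x).sub_const y)
    simpa [Function.comp_def] using h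
  have h := ((hA2.fun_sub hwx).sub_const (wp y τ)).fun_sub hwz
  exact h

lemma H_per {ω : ℂ} (hω : ω ∈ ellLattice τ) {x : ℂ} (hx : x ∉ Sy τ y) :
    Hfun τ y (x + ω) = Hfun τ y x := by
  obtain ⟨hx1, hx2⟩ := Sy_not_mem_iff.1 hx
  have hzeta : wzeta ((x - y) + ω) τ - wzeta (x - y) τ = wzeta (x + ω) τ - wzeta x τ :=
    wzeta_shift_const hτ hω hx2 hx1
  have harg : x + ω - y = (x - y) + ω := by ring
  have hA : Afun τ y (x + ω) = Afun τ y x := by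
    simp only [Afun]
    rw [harg]
    linear_combination hzeta
  simp only [Hfun]
  rw [hA, harg, wp_periodic hτ hω hx1, wp_periodic hτ hω hx2]

lemma H_bound0 :
    ∃ ε > 0, (∀ x ∈ ball (0 : ℂ) ε, x ≠ 0 → x ∉ Sy τ y) ∧
      ∃ M, ∀ x ∈ ball (0 : ℂ) ε, x ≠ 0 → ‖Hfun τ y x‖ ≤ M := by
  have hmy : (0 : ℂ) - y ∉ ellLattice τ := by
    intro h
    exact hy (by simpa using lat_neg h)
  -- isolation
  have hclosed : IsClosed ((ellLattice τ \ {0}) ∪ {x : ℂ | x - y ∈ ellLattice τ}) := by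
    apply IsClosed.union
    · exact isClosed_of_sub_lat hτ Set.diff_subset
    · exact (lat_closed hτ).preimage (continuous_id.sub continuous_const)
  have h0not : (0 : ℂ) ∉ ((ellLattice τ \ {0}) ∪ {x : ℂ | x - y ∈ ellLattice τ}) := by
    rintro (h | h)
    · exact h.2 rfl
    · exact hmy h
  obtain ⟨ε₁, hε₁, hball₁⟩ := Metric.isOpen_iff.1 hclosed.isOpen_compl 0 h0not
  -- the regular part
  set Bf : ℂ → ℂ := fun x => wzeta (x - y) τ + wzeta y τ - (latT τ x - G2 τ * x) with hBf
  have hwz_diff : DifferentiableAt ℂ (fun x : ℂ => wzeta (x - y) τ) 0 :=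
    (HasDerivAt.comp 0 (wzeta_hasDeriv hτ hmy) ((hasDerivAt_id 0).sub_const y)).differentiableAt
  have hBf_diff : DifferentiableAt ℂ Bf 0 := by
    apply DifferentiableAt.sub
    · exact hwz_diff.add_const _
    · exact (latT_diffAt hτ zero_notSL).sub ((differentiableAt_id.const_mul _))
  have hBf0 : Bf 0 = 0 := by
    simp only [hBf, zero_sub, latT_zero]
    rw [wzeta_odd]
    ring
  set G : ℂ → ℂ := fun x => Bf x ^ 2 - 2 * dslope Bf 0 x - G2 τ + deriv (latT τ) x
      - wp y τ - wp (x - y) τ with hG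
  have hGcont : ContinuousAt G 0 := by
    have c1 : ContinuousAt Bf 0 := hBf_diff.continuousAt
    have c2 : ContinuousAt (dslope Bf 0) 0 := continuousAt_dslope_same.2 hBf_diff
    have c3 : ContinuousAt (deriv (latT τ)) 0 :=
      (((latT_analytic hτ).deriv) 0 zero_notSL).continuousAt
    have c4 : ContinuousAt (fun x : ℂ => wp (x - y) τ) 0 := by
      have h := HasDerivAt.comp 0 (wp_hasDeriv hτ hmy).1 ((hasDerivAt_id 0).sub_const y)
      exact h.differentiableAt.continuousAt
    exact ((((((c1.pow 2).sub (c2.const_mul 2)).sub continuousAt_const).add c3).sub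
      continuousAt_const).sub c4)
  -- bound from continuity
  have hev : ∀ᶠ x in 𝓝 (0 : ℂ), ‖G x‖ ≤ ‖G 0‖ + 1 := by
    have h := hGcont.norm
    have h2 := h.eventually_le_const (by linarith : ‖G 0‖ < ‖G 0‖ + 1)
    exact h2
  obtain ⟨ε₂, hε₂, hball₂⟩ := Metric.eventually_nhds_iff_ball.1 hev
  -- equality of H and G away from singularities
  have hEq : ∀ x, x ∉ Sy τ y → x ≠ 0 → Hfun τ y x = G x := by
    intro x hx hx0
    obtain ⟨hx1, hx2⟩ := Sy_not_mem_iff.1 hx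
    have hA : Afun τ y x = Bf x - x⁻¹ := by
      simp only [Afun, hBf, wzeta_eq x]
      ring
    have hwp : wp x τ = (x ^ 2)⁻¹ + G2 τ - deriv (latT τ) x := wp_eq hτ (notSL hx1)
    have hds : dslope Bf 0 x = Bf x * x⁻¹ := by
      rw [dslope_of_ne _ hx0, slope_def_field, hBf0]
      field_simp
      ring
    simp only [Hfun, hG]
    rw [hA, hwp, hds]
    have hxx : (x ^ 2)⁻¹ = x⁻¹ * x⁻¹ := by
      rw [← mul_inv]
      ring_nf
    rw [hxx]
    ring
  refine ⟨min ε₁ ε₂, by positivity, ?_, ‖G 0‖ + 1, ?_⟩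
  · intro x hx hx0 hxS
    have hx1 : x ∈ ball (0 : ℂ) ε₁ := ball_subset_ball (min_le_left _ _) hx
    have := hball₁ hx1
    rcases hxS with h | h
    · exact this (Or.inl ⟨h, hx0⟩)
    · exact this (Or.inr h)
  · intro x hx hx0
    have hx1 : x ∈ ball (0 : ℂ) ε₁ := ball_subset_ball (min_le_left _ _) hx
    have hx2 : x ∈ ball (0 : ℂ) ε₂ := ball_subset_ball (min_le_right _ _) hx
    have hxS : x ∉ Sy τ y := by
      intro hxS
      have := hball₁ hx1
      rcases hxS with h | h
      · exact this (Or.inl ⟨h, hx0⟩)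
      · exact this (Or.inr h)
    rw [hEq x hxS hx0]
    exact hball₂ x hx2

lemma H_boundy :
    ∃ ε > 0, (∀ x ∈ ball y ε, x ≠ y → x ∉ Sy τ y) ∧
      ∃ M, ∀ x ∈ ball y ε, x ≠ y → ‖Hfun τ y x‖ ≤ M := by
  -- isolation
  have hclosed : IsClosed (ellLattice τ ∪ {x : ℂ | x - y ∈ ellLattice τ ∧ x - y ≠ 0}) := by
    apply IsClosed.union (lat_closed hτ)
    have : {x : ℂ | x - y ∈ ellLattice τ ∧ x - y ≠ 0} = (fun x : ℂ => x - y) ⁻¹' (SL τ) := rfl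
    rw [this]
    exact (SL_closed hτ).preimage (continuous_id.sub continuous_const)
  have hynot : y ∉ (ellLattice τ ∪ {x : ℂ | x - y ∈ ellLattice τ ∧ x - y ≠ 0}) := by
    rintro (h | h)
    · exact hy h
    · exact h.2 (by ring)
  obtain ⟨ε₁, hε₁, hball₁⟩ := Metric.isOpen_iff.1 hclosed.isOpen_compl y hynot
  -- regular part
  set Cf : ℂ → ℂ := fun x => (latT τ (x - y) - G2 τ * (x - y)) + wzeta y τ - wzeta x τ with hCf
  have hCf_diff : DifferentiableAt ℂ Cf y := by
    apply DifferentiableAt.sub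
    · apply DifferentiableAt.add_const
      have h1 : DifferentiableAt ℂ (fun x : ℂ => latT τ (x - y)) y := by
        have h0 : ((y : ℂ) - y) ∉ SL τ := by
          simp only [sub_self]
          exact zero_notSL
        have hf : DifferentiableAt ℂ (fun x : ℂ => x - y) y := differentiableAt_id.sub_const y
        have h1 := DifferentiableAt.comp (g := latT τ) (f := fun x : ℂ => x - y) y
          (latT_diffAt hτ h0) hf
        simpa [Function.comp_def] using h1
      exact h1.sub ((differentiableAt_id.sub_const y).const_mul _)
    · exact (wzeta_hasDeriv hτ hy).differentiableAt
  have hCfy : Cf y = 0 := by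
    simp only [hCf, sub_self, latT_zero]
    ring
  set G : ℂ → ℂ := fun x => Cf x ^ 2 + 2 * dslope Cf y x - wp x τ - wp y τ - G2 τ
      + deriv (latT τ) (x - y) with hG
  have hGcont : ContinuousAt G y := by
    have c1 : ContinuousAt Cf y := hCf_diff.continuousAt
    have c2 : ContinuousAt (dslope Cf y) y := continuousAt_dslope_same.2 hCf_diff
    have c3 : ContinuousAt (fun x : ℂ => deriv (latT τ) (x - y)) y := by
      have h0 : ((y : ℂ) - y) ∉ SL τ := by
        simp only [sub_self]; exact zero_notSL
      have hc := (((latT_analytic hτ).deriv) (y - y) h0).continuousAt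
      have hf : ContinuousAt (fun x : ℂ => x - y) y := by fun_prop
      simpa [Function.comp_def] using ContinuousAt.comp (g := deriv (latT τ))
        (f := fun x : ℂ => x - y) hc hf
    have c4 : ContinuousAt (fun x : ℂ => wp x τ) y :=
      (wp_hasDeriv hτ hy).1.differentiableAt.continuousAt
    exact (((((c1.pow 2).add (c2.const_mul 2)).sub c4).sub continuousAt_const).sub
      continuousAt_const).add c3
  have hev : ∀ᶠ x in 𝓝 y, ‖G x‖ ≤ ‖G y‖ + 1 := by
    have h := hGcont.norm
    exact h.eventually_le_const (by linarith : ‖G y‖ < ‖G y‖ + 1)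
  obtain ⟨ε₂, hε₂, hball₂⟩ := Metric.eventually_nhds_iff_ball.1 hev
  have hEq : ∀ x, x ∉ Sy τ y → x ≠ y → Hfun τ y x = G x := by
    intro x hx hxy
    obtain ⟨hx1, hx2⟩ := Sy_not_mem_iff.1 hx
    have hA : Afun τ y x = (x - y)⁻¹ + Cf x := by
      simp only [Afun, hCf, wzeta_eq (x - y)]
      ring
    have hwp : wp (x - y) τ = ((x - y) ^ 2)⁻¹ + G2 τ - deriv (latT τ) (x - y) :=
      wp_eq hτ (notSL hx2)
    have hds : dslope Cf y x = Cf x * (x - y)⁻¹ := by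
      rw [dslope_of_ne _ hxy, slope_def_field, hCfy]
      field_simp
      ring
    simp only [Hfun, hG]
    rw [hA, hwp, hds]
    have hne : x - y ≠ 0 := sub_ne_zero.2 hxy
    have hxx : ((x - y) ^ 2)⁻¹ = (x - y)⁻¹ * (x - y)⁻¹ := by
      rw [← mul_inv]; ring_nf
    rw [hxx]
    ring
  refine ⟨min ε₁ ε₂, by positivity, ?_, ‖G y‖ + 1, ?_⟩
  · intro x hx hxy hxS
    have hx1 : x ∈ ball y ε₁ := ball_subset_ball (min_le_left _ _) hx
    have := hball₁ hx1
    rcases hxS with h | h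
    · exact this (Or.inl h)
    · exact this (Or.inr ⟨h, sub_ne_zero.2 hxy⟩)
  · intro x hx hxy
    have hx1 : x ∈ ball y ε₁ := ball_subset_ball (min_le_left _ _) hx
    have hx2 : x ∈ ball y ε₂ := ball_subset_ball (min_le_right _ _) hx
    have hxS : x ∉ Sy τ y := by
      intro hxS
      have := hball₁ hx1
      rcases hxS with h | h
      · exact this (Or.inl h)
      · exact this (Or.inr ⟨h, sub_ne_zero.2 hxy⟩)
    rw [hEq x hxS hxy]
    exact hball₂ x hx2

lemma H_bound_at {c : ℂ} (hc : c ∈ Sy τ y) :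
    ∃ ε > 0, (∀ x ∈ ball c ε, x ≠ c → x ∉ Sy τ y) ∧
      ∃ M, ∀ x ∈ ball c ε, x ≠ c → ‖Hfun τ y x‖ ≤ M := by
  rcases hc with hc | hc
  · -- c ∈ Λ
    obtain ⟨ε, hε, hiso, M, hM⟩ := H_bound0 hτ hy
    have hxlat : ∀ x, x ∈ ball c ε → x ≠ c → (x - c ∈ ball (0 : ℂ) ε ∧ x - c ≠ 0) := by
      intro x hx hxc
      constructor
      · rw [mem_ball] at hx ⊢
        simpa [dist_eq_norm] using hx
      · exact sub_ne_zero.2 hxc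
    refine ⟨ε, hε, ?_, M, ?_⟩
    · intro x hx hxc hxS
      obtain ⟨hb, hne⟩ := hxlat x hx hxc
      apply hiso (x - c) hb hne
      have : (x - c) + c ∈ Sy τ y := by simpa using hxS
      exact (Sy_shift_iff hc).1 this
    · intro x hx hxc
      obtain ⟨hb, hne⟩ := hxlat x hx hxc
      have hxS : x - c ∉ Sy τ y := hiso (x - c) hb hne
      have hper : Hfun τ y ((x - c) + c) = Hfun τ y (x - c) := H_per hτ hy hc hxS
      have harg : (x - c) + c = x := by ring
      rw [harg] at hper
      rw [hper]
      exact hM (x - c) hb hne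
  · -- c - y ∈ Λ
    obtain ⟨ε, hε, hiso, M, hM⟩ := H_boundy hτ hy
    set ω := c - y with hω
    have hxlat : ∀ x, x ∈ ball c ε → x ≠ c → (x - ω ∈ ball y ε ∧ x - ω ≠ y) := by
      intro x hx hxc
      constructor
      · rw [mem_ball] at hx ⊢
        have : x - ω - y = x - c := by rw [hω]; ring
        simpa [dist_eq_norm, this] using hx
      · intro h
        apply hxc
        have : x = y + ω := by linear_combination h
        rw [this, hω]; ring
    refine ⟨ε, hε, ?_, M, ?_⟩
    · intro x hx hxc hxS
      obtain ⟨hb, hne⟩ := hxlat x hx hxc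
      apply hiso (x - ω) hb hne
      have : (x - ω) + ω ∈ Sy τ y := by simpa using hxS
      exact (Sy_shift_iff hc).1 this
    · intro x hx hxc
      obtain ⟨hb, hne⟩ := hxlat x hx hxc
      have hxS : x - ω ∉ Sy τ y := hiso (x - ω) hb hne
      have hper : Hfun τ y ((x - ω) + ω) = Hfun τ y (x - ω) := H_per hτ hy hc hxS
      have harg : (x - ω) + ω = x := by ring
      rw [harg] at hper
      rw [hper]
      exact hM (x - ω) hb hne

/-- Entire extension of `H`. -/
def Hext (τ y : ℂ) : ℂ → ℂ :=
  fun x => @ite _ (x ∈ Sy τ y) (Classical.dec _) (limUnder (𝓝[≠] x) (Hfun τ y)) (Hfun τ y x)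

omit hτ hy in
lemma Hext_eqOn {x : ℂ} (hx : x ∉ Sy τ y) : Hext τ y x = Hfun τ y x := if_neg hx

lemma Hext_diff : Differentiable ℂ (Hext τ y) := by
  intro c
  by_cases hc : c ∈ Sy τ y
  · obtain ⟨ε, hε, hiso, M, hM⟩ := H_bound_at hτ hy hc
    have hd : DifferentiableOn ℂ (Hfun τ y) (ball c ε \ {c}) := by
      intro x hx
      have hx' : x ∉ Sy τ y := hiso x hx.1 (by simpa using hx.2)
      exact (H_hasDeriv hτ hy hx').differentiableAt.differentiableWithinAt
    have hb : BddAbove ((norm ∘ Hfun τ y) '' (ball c ε \ {c})) := by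
      refine ⟨M, ?_⟩
      rintro v ⟨x, ⟨hx1, hx2⟩, rfl⟩
      exact hM x hx1 (by simpa using hx2)
    have h := Complex.differentiableOn_update_limUnder_of_bddAbove
      (ball_mem_nhds c hε) hd hb
    have hEq : ∀ x ∈ ball c ε,
        Hext τ y x = Function.update (Hfun τ y) c (limUnder (𝓝[≠] c) (Hfun τ y)) x := by
      intro x hx
      by_cases hxc : x = c
      · subst hxc
        rw [Function.update_self]
        exact if_pos hc
      · rw [Function.update_of_ne hxc, Hext_eqOn (hiso x hx hxc)]
    exact ((h.congr hEq).differentiableAt (ball_mem_nhds c hε))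
  · have hev : Hext τ y =ᶠ[𝓝 c] Hfun τ y := by
      filter_upwards [(Sy_closed hτ).isOpen_compl.mem_nhds hc] with x hx
      exact if_neg hx
    rw [Filter.EventuallyEq.differentiableAt_iff hev]
    exact (H_hasDeriv hτ hy hc).differentiableAt

lemma Hext_per {ω : ℂ} (hω : ω ∈ ellLattice τ) (x : ℂ) :
    Hext τ y (x + ω) = Hext τ y x := by
  have hcont2 := (Hext_diff hτ hy).continuous
  have hcont1 : Continuous (fun x => Hext τ y (x + ω)) :=
    hcont2.comp (continuous_id.add continuous_const)
  have hdense : Dense ((Sy τ y)ᶜ) := (Sy_countable).dense_compl ℂ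
  have heq : (fun x => Hext τ y (x + ω)) = Hext τ y := by
    apply Continuous.ext_on hdense hcont1 hcont2
    intro x hx
    have hx' : x + ω ∉ Sy τ y := fun h => hx ((Sy_shift_iff hω).1 h)
    show Hext τ y (x + ω) = Hext τ y x
    rw [Hext_eqOn hx', Hext_eqOn hx]
    exact H_per hτ hy hω hx
  exact congrFun heq x

lemma Hext_bounded : Bornology.IsBounded (Set.range (Hext τ y)) := by
  set K := (fun p : ℝ × ℝ => (p.1 : ℂ) + p.2 * τ) '' (Set.Icc 0 1 ×ˢ Set.Icc 0 1) with hK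
  have hKc : IsCompact K := by
    apply IsCompact.image (isCompact_Icc.prod isCompact_Icc)
    fun_prop
  obtain ⟨C, hC⟩ := hKc.exists_bound_of_continuousOn
    (Hext_diff hτ hy).continuous.continuousOn
  have hbound : ∀ x : ℂ, ‖Hext τ y x‖ ≤ C := by
    intro x
    set t : ℝ := x.im / τ.im with ht
    set s : ℝ := x.re - t * τ.re with hs
    have hx : x = (s : ℂ) + (t : ℂ) * τ := by
      apply Complex.ext
      · simp [hs]
      · have him : τ.im ≠ 0 := ne_of_gt hτ
        simp [ht]
        field_simp
    set x₀ : ℂ := ((Int.fract s : ℝ) : ℂ) + ((Int.fract t : ℝ) : ℂ) * τ with hx₀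
    have hx₀K : x₀ ∈ K := by
      refine ⟨⟨Int.fract s, Int.fract t⟩, ⟨⟨Int.fract_nonneg _, (Int.fract_lt_one _).le⟩,
        ⟨Int.fract_nonneg _, (Int.fract_lt_one _).le⟩⟩, rfl⟩
    have hdecomp : x = (x₀ + (⌊s⌋ : ℂ) * 1) + (⌊t⌋ : ℂ) * τ := by
      rw [hx, hx₀]
      have h1 : (Int.fract s : ℝ) = s - ⌊s⌋ := by
        have := Int.floor_add_fract s
        linarith
      have h2 : (Int.fract t : ℝ) = t - ⌊t⌋ := by
        have := Int.floor_add_fract t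
        linarith
      rw [show ((Int.fract s : ℝ) : ℂ) = (s : ℂ) - (⌊s⌋ : ℂ) by push_cast [h1]; ring]
      rw [show ((Int.fract t : ℝ) : ℂ) = (t : ℂ) - (⌊t⌋ : ℂ) by push_cast [h2]; ring]
      ring
    have hper1 : Function.Periodic (Hext τ y) 1 := fun u => Hext_per hτ hy lat_one u
    have hperτ : Function.Periodic (Hext τ y) τ := fun u => Hext_per hτ hy lat_tau u
    have hval : Hext τ y x = Hext τ y x₀ := by
      rw [hdecomp]
      rw [(hperτ.int_mul ⌊t⌋) (x₀ + (⌊s⌋ : ℂ) * 1)]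
      rw [(hper1.int_mul ⌊s⌋) x₀]
    rw [hval]
    exact hC x₀ hx₀K
  have : Set.range (Hext τ y) ⊆ Metric.closedBall 0 C := by
    rintro v ⟨x, rfl⟩
    rw [Metric.mem_closedBall, dist_zero_right]
    exact hbound x
  exact Bornology.IsBounded.subset (Metric.isBounded_closedBall) this

lemma H_const {x₁ x₂ : ℂ} (h1 : x₁ ∉ Sy τ y) (h2 : x₂ ∉ Sy τ y) :
    Hfun τ y x₁ = Hfun τ y x₂ := by
  have h := (Hext_diff hτ hy).apply_eq_apply_of_bounded (Hext_bounded hτ hy) x₁ x₂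
  rwa [Hext_eqOn h1, Hext_eqOn h2] at h

lemma eq2 {x : ℂ} (hx : x ∉ Sy τ y) :
    2 * Afun τ y x * (wp x τ - wp (x - y) τ) = wp' x τ + wp' (x - y) τ := by
  have hd := H_hasDeriv hτ hy hx
  have hev : Hfun τ y =ᶠ[𝓝 x] fun _ => Hfun τ y x := by
    filter_upwards [(Sy_closed hτ).isOpen_compl.mem_nhds hx] with u hu
    exact H_const hτ hy hu hx
  have h0 : HasDerivAt (Hfun τ y) 0 x :=
    (hasDerivAt_const x (Hfun τ y x)).congr_of_eventuallyEq hev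
  have huniq := hd.unique h0
  linear_combination huniq

end Liouville


section Final

variable {τ : ℂ} (hτ : 0 < τ.im)
include hτ

lemma eq4 {x y : ℂ} (hx : x ∉ ellLattice τ) (hy : y ∉ ellLattice τ)
    (hxy : x - y ∉ ellLattice τ) :
    2 * (wp (x - y) τ - wp y τ) * (wp x τ - wp (x - y) τ)
      + 2 * (wzeta (x - y) τ + wzeta y τ - wzeta x τ) * wp' (x - y) τ
      + wp'' (x - y) τ = 0 := by
  set Ω : Set ℂ := (ellLattice τ)ᶜ ∩ (fun y' : ℂ => x - y') ⁻¹' (ellLattice τ)ᶜ with hΩ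
  have hΩopen : IsOpen Ω := (U_open hτ).inter ((U_open hτ).preimage (by fun_prop))
  have hyΩ : y ∈ Ω := ⟨hy, hxy⟩
  set F : ℂ → ℂ := fun y' => 2 * (wzeta (x - y') τ + wzeta y' τ - wzeta x τ)
      * (wp x τ - wp (x - y') τ) - wp' x τ - wp' (x - y') τ with hF
  have hF0 : ∀ y' ∈ Ω, F y' = 0 := by
    intro y' hy'
    have h := eq2 hτ hy'.1 (Sy_not_mem_iff.2 ⟨hx, hy'.2⟩)
    simp only [hF, Afun] at h ⊢
    linear_combination h
  have hin : HasDerivAt (fun y' : ℂ => x - y') (-1) y := by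
    simpa using ((hasDerivAt_id y).const_sub x)
  have d1 : HasDerivAt (fun y' : ℂ => wzeta (x - y') τ) (wp (x - y) τ) y := by
    have h := HasDerivAt.comp y (wzeta_hasDeriv hτ hxy) hin
    simpa [Function.comp_def] using h
  have d2 : HasDerivAt (fun y' : ℂ => wzeta y' τ) (-(wp y τ)) y := wzeta_hasDeriv hτ hy
  have d3 : HasDerivAt (fun y' : ℂ => wp (x - y') τ) (-(wp' (x - y) τ)) y := by
    have h := HasDerivAt.comp y (wp_hasDeriv hτ hxy).1 hin
    simpa [Function.comp_def] using h
  have d4 : HasDerivAt (fun y' : ℂ => wp' (x - y') τ) (-(wp'' (x - y) τ)) y := by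
    have h := HasDerivAt.comp y (wp'_hasDeriv hτ hxy) hin
    simpa [Function.comp_def] using h
  have dA : HasDerivAt (fun y' => wzeta (x - y') τ + wzeta y' τ - wzeta x τ)
      (wp (x - y) τ - wp y τ) y := by
    have h := (d1.fun_add d2).sub_const (wzeta x τ)
    refine h.congr_deriv ?_
    try ring
  have dprod : HasDerivAt (fun y' => 2 * (wzeta (x - y') τ + wzeta y' τ - wzeta x τ)
      * (wp x τ - wp (x - y') τ))
      (2 * ((wp (x - y) τ - wp y τ) * (wp x τ - wp (x - y) τ)
        + (wzeta (x - y) τ + wzeta y τ - wzeta x τ) * wp' (x - y) τ)) y := by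
    have hmul := (dA.const_mul 2).fun_mul ((hasDerivAt_const y (wp x τ)).fun_sub d3)
    refine hmul.congr_deriv ?_
    ring
  have dF : HasDerivAt F (2 * ((wp (x - y) τ - wp y τ) * (wp x τ - wp (x - y) τ)
        + (wzeta (x - y) τ + wzeta y τ - wzeta x τ) * wp' (x - y) τ) + wp'' (x - y) τ) y := by
    have h := (dprod.sub_const (wp' x τ)).fun_sub d4
    refine h.congr_deriv ?_
    ring
  have hzero : HasDerivAt F 0 y := by
    have hev : F =ᶠ[𝓝 y] fun _ => 0 := Filter.eventuallyEq_of_mem (hΩopen.mem_nhds hyΩ) hF0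
    exact (hasDerivAt_const y (0 : ℂ)).congr_of_eventuallyEq hev
  have huniq := dF.unique hzero
  linear_combination huniq

end Final


end Aux

/-- The identity used in the proof of Lemma `lem:2.1.diff`:
`℘(x)℘(y) = ℘′(x−y)ζ(x−y) − ℘(x−y)² + (1/2)℘″(x−y)`
`          + ℘′(x−y)(ζ(y) − ζ(x)) + ℘(x−y)(℘(x) + ℘(y))`. -/
theorem wp_mul_wp_identity (τ : ℂ) (hτ : 0 < τ.im) (x y : ℂ)
    (hx : x ∉ ellLattice τ) (hy : y ∉ ellLattice τ) (hxy : x - y ∉ ellLattice τ) :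
    wp x τ * wp y τ
      = wp' (x - y) τ * wzeta (x - y) τ - (wp (x - y) τ) ^ 2 + (1 / 2) * wp'' (x - y) τ
        + wp' (x - y) τ * (wzeta y τ - wzeta x τ)
        + wp (x - y) τ * (wp x τ + wp y τ) := by
  have h4 := eq4 hτ hx hy hxy
  linear_combination (-(1 : ℂ) / 2) * h4
end

section
/- Let k be a field of characteristic zero, N ≥ 1 an integer, and α, β, γ ∈ k with 3γ = 1 and α + β + γ = 1. Set α_i = α − i/N, β_i = β − i/N and γ_i = γ − i/N for 0 ≤ i ≤ N. Then in the polynomial ring k[e₀, h₀, f₀, e₁, h₁, f₁, …] the following identity holds: ∑_{i=0}^{N} α_i · f_i · [eh]_{N−i} + ∑_{i=0}^{N} β_i · e_i · [hf]_{N−i} + ∑_{i=0}^{N} γ_i · h_i · [ef − h²]_{N−i} = 0. -/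
open scoped BigOperators

/-- The variable `e_n` in `k[e₀,h₀,f₀,e₁,h₁,f₁,…] = MvPolynomial (Fin 3 × ℕ) k`. -/
noncomputable def eVar (k : Type*) [CommRing k] (n : ℕ) : MvPolynomial (Fin 3 × ℕ) k :=
  MvPolynomial.X (0, n)

/-- The variable `h_n`. -/
noncomputable def hVar (k : Type*) [CommRing k] (n : ℕ) : MvPolynomial (Fin 3 × ℕ) k :=
  MvPolynomial.X (1, n)

/-- The variable `f_n`. -/
noncomputable def fVar (k : Type*) [CommRing k] (n : ℕ) : MvPolynomial (Fin 3 × ℕ) k :=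
  MvPolynomial.X (2, n)

/-- `[e²]_m = ∑_{p+q=m} e_p e_q`. -/
noncomputable def eeCoef (k : Type*) [CommRing k] (m : ℕ) : MvPolynomial (Fin 3 × ℕ) k :=
  ∑ p ∈ Finset.HasAntidiagonal.antidiagonal m, eVar k p.1 * eVar k p.2

/-- `[eh]_m = ∑_{p+q=m} e_p h_q`. -/
noncomputable def ehCoef (k : Type*) [CommRing k] (m : ℕ) : MvPolynomial (Fin 3 × ℕ) k :=
  ∑ p ∈ Finset.HasAntidiagonal.antidiagonal m, eVar k p.1 * hVar k p.2

/-- `[hf]_m = ∑_{p+q=m} h_p f_q`. -/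
noncomputable def hfCoef (k : Type*) [CommRing k] (m : ℕ) : MvPolynomial (Fin 3 × ℕ) k :=
  ∑ p ∈ Finset.HasAntidiagonal.antidiagonal m, hVar k p.1 * fVar k p.2

/-- `[ef − h²]_m = ∑_{p+q=m} (e_p f_q − h_p h_q)`. -/
noncomputable def efh2Coef (k : Type*) [CommRing k] (m : ℕ) : MvPolynomial (Fin 3 × ℕ) k :=
  ∑ p ∈ Finset.HasAntidiagonal.antidiagonal m, (eVar k p.1 * fVar k p.2 - hVar k p.1 * hVar k p.2)

section Aux

variable {M : Type*} [AddCommMonoid M]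

/-- triple antidiagonal as a sigma finset -/
noncomputable def triT (N : ℕ) : Finset ((_ : ℕ) × ℕ × ℕ) :=
  (Finset.range (N + 1)).sigma fun i => Finset.HasAntidiagonal.antidiagonal (N - i)

lemma mem_triT {N : ℕ} {x : (_ : ℕ) × ℕ × ℕ} (hx : x ∈ triT N) :
    x.1 + x.2.1 + x.2.2 = N := by
  simp only [triT, Finset.mem_sigma, Finset.mem_range, Finset.HasAntidiagonal.mem_antidiagonal] at hx
  omega

lemma tri_sum (N : ℕ) (f : ℕ → ℕ → ℕ → M) :
    (∑ i ∈ Finset.range (N + 1), ∑ p ∈ Finset.HasAntidiagonal.antidiagonal (N - i), f i p.1 p.2)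
      = ∑ x ∈ triT N, f x.1 x.2.1 x.2.2 :=
  Finset.sum_sigma' _ _ _

lemma cyc_sum (N : ℕ) (f : ℕ → ℕ → ℕ → M) :
    (∑ x ∈ triT N, f x.1 x.2.1 x.2.2) = ∑ x ∈ triT N, f x.2.2 x.1 x.2.1 := by
  refine Finset.sum_nbij' (fun x => ⟨x.2.1, (x.2.2, x.1)⟩) (fun x => ⟨x.2.2, (x.1, x.2.1)⟩)
    ?_ ?_ ?_ ?_ ?_ <;> intro x hx <;>
    simp only [triT, Finset.mem_sigma, Finset.mem_range, Finset.HasAntidiagonal.mem_antidiagonal] at * <;>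
    omega

lemma swap_sum (N : ℕ) (f : ℕ → ℕ → ℕ → M) :
    (∑ x ∈ triT N, f x.1 x.2.1 x.2.2) = ∑ x ∈ triT N, f x.2.1 x.1 x.2.2 := by
  refine Finset.sum_nbij' (fun x => ⟨x.2.1, (x.1, x.2.2)⟩) (fun x => ⟨x.2.1, (x.1, x.2.2)⟩)
    ?_ ?_ ?_ ?_ ?_ <;> intro x hx <;>
    simp only [triT, Finset.mem_sigma, Finset.mem_range, Finset.HasAntidiagonal.mem_antidiagonal] at * <;>
    omega

end Aux

/-- Equation `EHversusHFb`: for `N ≥ 1` and `α, β, γ ∈ k` with `3γ = 1` and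
`α + β + γ = 1`, setting `α_i = α − i/N`, `β_i = β − i/N`, `γ_i = γ − i/N`, one has
`∑_{i=0}^N α_i f_i [eh]_{N−i} + ∑_{i=0}^N β_i e_i [hf]_{N−i}`
`  + ∑_{i=0}^N γ_i h_i [ef−h²]_{N−i} = 0`. -/
theorem sl2_syzygy_two (k : Type*) [Field k] [CharZero k] (N : ℕ) (hN : 1 ≤ N)
    (α β γ : k) (h1 : 3 * γ = 1) (h2 : α + β + γ = 1) :
    (∑ i ∈ Finset.range (N + 1),
        MvPolynomial.C (α - (i : k) / (N : k)) * (fVar k i * ehCoef k (N - i)))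
      + (∑ i ∈ Finset.range (N + 1),
          MvPolynomial.C (β - (i : k) / (N : k)) * (eVar k i * hfCoef k (N - i)))
      + (∑ i ∈ Finset.range (N + 1),
          MvPolynomial.C (γ - (i : k) / (N : k)) * (hVar k i * efh2Coef k (N - i))) = 0 := by
  classical
  have hNk : (N : k) ≠ 0 := Nat.cast_ne_zero.mpr (by omega)
  set C : k →+* MvPolynomial (Fin 3 × ℕ) k := MvPolynomial.C with hC
  -- rewrite the three sums over the triple antidiagonal
  have hA : (∑ i ∈ Finset.range (N + 1),
        C (α - (i : k) / (N : k)) * (fVar k i * ehCoef k (N - i)))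
      = ∑ x ∈ triT N, C (α - (x.1 : k) / (N : k)) *
          (fVar k x.1 * (eVar k x.2.1 * hVar k x.2.2)) := by
    rw [← tri_sum N (fun i p q => C (α - (i : k) / (N : k)) *
          (fVar k i * (eVar k p * hVar k q)))]
    refine Finset.sum_congr rfl fun i _ => ?_
    simp only [ehCoef, Finset.mul_sum]
  have hB : (∑ i ∈ Finset.range (N + 1),
        C (β - (i : k) / (N : k)) * (eVar k i * hfCoef k (N - i)))
      = ∑ x ∈ triT N, C (β - (x.1 : k) / (N : k)) *
          (eVar k x.1 * (hVar k x.2.1 * fVar k x.2.2)) := by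
    rw [← tri_sum N (fun i p q => C (β - (i : k) / (N : k)) *
          (eVar k i * (hVar k p * fVar k q)))]
    refine Finset.sum_congr rfl fun i _ => ?_
    simp only [hfCoef, Finset.mul_sum]
  have hCs : (∑ i ∈ Finset.range (N + 1),
        C (γ - (i : k) / (N : k)) * (hVar k i * efh2Coef k (N - i)))
      = ∑ x ∈ triT N, C (γ - (x.1 : k) / (N : k)) *
          (hVar k x.1 * (eVar k x.2.1 * fVar k x.2.2 - hVar k x.2.1 * hVar k x.2.2)) := by
    rw [← tri_sum N (fun i p q => C (γ - (i : k) / (N : k)) *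
          (hVar k i * (eVar k p * fVar k q - hVar k p * hVar k q)))]
    refine Finset.sum_congr rfl fun i _ => ?_
    simp only [efh2Coef, Finset.mul_sum]
  rw [hA, hB, hCs]
  -- split the third sum
  have hsplit : (∑ x ∈ triT N, C (γ - (x.1 : k) / (N : k)) *
          (hVar k x.1 * (eVar k x.2.1 * fVar k x.2.2 - hVar k x.2.1 * hVar k x.2.2)))
      = (∑ x ∈ triT N, C (γ - (x.1 : k) / (N : k)) *
          (hVar k x.1 * (eVar k x.2.1 * fVar k x.2.2)))
        - ∑ x ∈ triT N, C (γ - (x.1 : k) / (N : k)) *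
          (hVar k x.1 * (hVar k x.2.1 * hVar k x.2.2)) := by
    rw [← Finset.sum_sub_distrib]
    exact Finset.sum_congr rfl fun x _ => by ring
  rw [hsplit]
  -- reindex the first sum cyclically and the third's positive part by a swap
  rw [cyc_sum N (fun i p q => C (α - (i : k) / (N : k)) *
        (fVar k i * (eVar k p * hVar k q)))]
  rw [swap_sum N (fun i p q => C (γ - (i : k) / (N : k)) *
        (hVar k i * (eVar k p * fVar k q)))]
  -- the pure-h sum vanishes
  have hH : (∑ x ∈ triT N, C (γ - (x.1 : k) / (N : k)) *
        (hVar k x.1 * (hVar k x.2.1 * hVar k x.2.2))) = 0 := by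
    set g : ℕ → ℕ → ℕ → MvPolynomial (Fin 3 × ℕ) k := fun i p q =>
      C (γ - (i : k) / (N : k)) * (hVar k i * (hVar k p * hVar k q)) with hg
    have e1 : (∑ x ∈ triT N, g x.1 x.2.1 x.2.2) = ∑ x ∈ triT N, g x.2.2 x.1 x.2.1 :=
      cyc_sum N g
    have e2 : (∑ x ∈ triT N, g x.1 x.2.1 x.2.2) = ∑ x ∈ triT N, g x.2.1 x.2.2 x.1 :=
      (cyc_sum N g).trans (cyc_sum N fun a b c => g c a b)
    have hsum : (∑ x ∈ triT N, g x.1 x.2.1 x.2.2) + (∑ x ∈ triT N, g x.2.2 x.1 x.2.1)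
        + (∑ x ∈ triT N, g x.2.1 x.2.2 x.1) = 0 := by
      rw [← Finset.sum_add_distrib, ← Finset.sum_add_distrib]
      refine Finset.sum_eq_zero fun x hx => ?_
      have habc := mem_triT hx
      have hcast : (x.1 : k) + (x.2.1 : k) + (x.2.2 : k) = (N : k) := by exact_mod_cast habc
      have hcoef : (γ - (x.1 : k) / N) + (γ - (x.2.2 : k) / N) + (γ - (x.2.1 : k) / N) = 0 := by
        have : (γ - (x.1 : k) / N) + (γ - (x.2.2 : k) / N) + (γ - (x.2.1 : k) / N)
            = 3 * γ - ((x.1 : k) + (x.2.1 : k) + (x.2.2 : k)) / N := by ring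
        rw [this, hcast, h1, div_self hNk, sub_self]
      have hCcoef : C (γ - (x.1 : k) / N) + C (γ - (x.2.2 : k) / N)
          + C (γ - (x.2.1 : k) / N) = 0 := by
        rw [← map_add, ← map_add, hcoef, map_zero]
      calc g x.1 x.2.1 x.2.2 + g x.2.2 x.1 x.2.1 + g x.2.1 x.2.2 x.1
          = (C (γ - (x.1 : k) / N) + C (γ - (x.2.2 : k) / N) + C (γ - (x.2.1 : k) / N))
            * (hVar k x.1 * (hVar k x.2.1 * hVar k x.2.2)) := by rw [hg]; ring
        _ = 0 := by rw [hCcoef, zero_mul]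
    have h3 : (3 : MvPolynomial (Fin 3 × ℕ) k)
        * (∑ x ∈ triT N, g x.1 x.2.1 x.2.2) = 0 := by
      rw [show (3 : MvPolynomial (Fin 3 × ℕ) k) * (∑ x ∈ triT N, g x.1 x.2.1 x.2.2)
          = (∑ x ∈ triT N, g x.1 x.2.1 x.2.2) + (∑ x ∈ triT N, g x.1 x.2.1 x.2.2)
            + (∑ x ∈ triT N, g x.1 x.2.1 x.2.2) by ring]
      nth_rewrite 2 [e1]
      nth_rewrite 2 [e2]
      exact hsum
    rcases mul_eq_zero.mp h3 with h | h
    · exact absurd h (by norm_num)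
    · exact h
  rw [hH, sub_zero, ← Finset.sum_add_distrib, ← Finset.sum_add_distrib]
  refine Finset.sum_eq_zero fun x hx => ?_
  have habc := mem_triT hx
  have hcast : (x.1 : k) + (x.2.1 : k) + (x.2.2 : k) = (N : k) := by exact_mod_cast habc
  have hcoef : (α - (x.2.2 : k) / N) + (β - (x.1 : k) / N) + (γ - (x.2.1 : k) / N) = 0 := by
    have : (α - (x.2.2 : k) / N) + (β - (x.1 : k) / N) + (γ - (x.2.1 : k) / N)
        = (α + β + γ) - ((x.1 : k) + (x.2.1 : k) + (x.2.2 : k)) / N := by ring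
    rw [this, hcast, h2, div_self hNk, sub_self]
  have hCcoef : C (α - (x.2.2 : k) / N) + C (β - (x.1 : k) / N)
      + C (γ - (x.2.1 : k) / N) = 0 := by
    rw [← map_add, ← map_add, hcoef, map_zero]
  calc C (α - (x.2.2 : k) / N) * (fVar k x.2.2 * (eVar k x.1 * hVar k x.2.1))
        + C (β - (x.1 : k) / N) * (eVar k x.1 * (hVar k x.2.1 * fVar k x.2.2))
        + C (γ - (x.2.1 : k) / N) * (hVar k x.2.1 * (eVar k x.1 * fVar k x.2.2))
      = (C (α - (x.2.2 : k) / N) + C (β - (x.1 : k) / N) + C (γ - (x.2.1 : k) / N))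
        * (eVar k x.1 * (hVar k x.2.1 * fVar k x.2.2)) := by ring
    _ = 0 := by rw [hCcoef, zero_mul]
end

section
/- Let S be a finite subset of the k-subalgebra of A generated by the variables x_{i,0} (1 ≤ i ≤ n), and let I ⊆ A be the ideal generated by all iterated derivatives {∂^j(f) : f ∈ S, j ∈ ℕ}. Then I is ∂-stable, and for the quotient B = A/I with induced derivation ∂̄ one has ker ι = W; that is, every Kähler differential ω ∈ Ω_{B/k} with ι(ω) = 0 is a B-linear combination of elements (∂̄c)·dc′ − (∂̄c′)·dc. (This is the implication of the theorem asserting that the degree −1 Koszul homology of the arc algebra of a finite type algebra vanishes: B is the coordinate ring of the arc space of Spec(k[x_{1,0},…,x_{n,0}]/(S)).) -/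
set_option synthInstance.maxHeartbeats 1000000
set_option maxHeartbeats 1000000

open scoped BigOperators

/-- The canonical derivation `∂` of the arc-space polynomial ring
`A = k[x_{i,j} : 1 ≤ i ≤ n, j ∈ ℕ]`, determined by `∂x_{i,j} = x_{i,j+1}`. -/
noncomputable def arcDerivation (k : Type*) [CommRing k] (n : ℕ) :
    Derivation k (MvPolynomial (Fin n × ℕ) k) (MvPolynomial (Fin n × ℕ) k) :=
  MvPolynomial.mkDerivation k (fun p : Fin n × ℕ => MvPolynomial.X (p.1, p.2 + 1))

open MvPolynomial

lemma mul_X_mem_span_X_image {R : Type*} [CommRing R] {σ : Type*}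
    (q : σ) (T : Set σ) (hq : q ∉ T) (c : MvPolynomial σ R)
    (h : X q * c ∈ Ideal.span (X '' T : Set (MvPolynomial σ R))) :
    c ∈ Ideal.span (X '' T : Set (MvPolynomial σ R)) := by
  rw [mem_ideal_span_X_image] at h ⊢
  intro m hm
  have hm' : Finsupp.single q 1 + m ∈ (X q * c).support := by
    rw [support_X_mul]
    exact Finset.mem_map.2 ⟨m, hm, rfl⟩
  obtain ⟨i, hiT, hi⟩ := h _ hm'
  refine ⟨i, hiT, ?_⟩
  have hiq : i ≠ q := fun h' => hq (h' ▸ hiT)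
  simpa [Finsupp.single_apply, hiq.symm] using hi

namespace ArcAux

noncomputable def arcIota (k : Type*) [CommRing k] (n : ℕ) :
    ((Fin n × ℕ) →₀ MvPolynomial (Fin n × ℕ) k) →ₗ[MvPolynomial (Fin n × ℕ) k]
      MvPolynomial (Fin n × ℕ) k :=
  Finsupp.linearCombination _ (fun p : Fin n × ℕ => X (p.1, p.2 + 1))

noncomputable def arcDelF (k : Type*) [CommRing k] (n : ℕ) :
    Derivation k (MvPolynomial (Fin n × ℕ) k)
      ((Fin n × ℕ) →₀ MvPolynomial (Fin n × ℕ) k) :=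
  mkDerivation k (fun p => Finsupp.single p 1)

variable (k : Type*) [CommRing k] (n : ℕ)

@[simp] lemma arcIota_single (p : Fin n × ℕ) (a : MvPolynomial (Fin n × ℕ) k) :
    arcIota k n (Finsupp.single p a) = a * X (p.1, p.2 + 1) := by
  simp [arcIota, Finsupp.linearCombination_single, smul_eq_mul]

@[simp] lemma arcDerivation_X (p : Fin n × ℕ) :
    arcDerivation k n (X p) = X (p.1, p.2 + 1) := by
  simp [arcDerivation, mkDerivation_X]

lemma arcIota_delF (a : MvPolynomial (Fin n × ℕ) k) :
    arcIota k n (arcDelF k n a) = arcDerivation k n a := by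
  have h : (arcIota k n).compDer (arcDelF k n) = arcDerivation k n := by
    apply derivation_ext
    intro p
    show arcIota k n (arcDelF k n (X p)) = arcDerivation k n (X p)
    simp [arcDelF, arcDerivation, mkDerivation_X]
  calc arcIota k n (arcDelF k n a) = (arcIota k n).compDer (arcDelF k n) a := rfl
    _ = arcDerivation k n a := by rw [h]

/-- evaluation killing the variables of positive weight -/
noncomputable def eps : MvPolynomial (Fin n × ℕ) k →ₐ[k] MvPolynomial (Fin n × ℕ) k :=
  aeval (fun p : Fin n × ℕ => if p.2 = 0 then X p else 0)

def Jvars : Set (MvPolynomial (Fin n × ℕ) k) :=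
  {x | ∃ p : Fin n × ℕ, x = X (p.1, p.2 + 1)}

@[simp] lemma eps_X (p : Fin n × ℕ) :
    eps k n (X p) = if p.2 = 0 then X p else 0 := by
  simp [eps]

lemma eps_J {z : MvPolynomial (Fin n × ℕ) k} (hz : z ∈ Ideal.span (Jvars k n)) :
    eps k n z = 0 := by
  refine Submodule.span_induction ?_ ?_ ?_ ?_ hz
  · rintro x ⟨p, rfl⟩
    simp [eps_X]
  · simp
  · intro x y _ _ hx hy; rw [map_add, hx, hy, add_zero]
  · intro a x _ hx
    rw [smul_eq_mul, map_mul, hx, mul_zero]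

lemma iota_mem_J (v : (Fin n × ℕ) →₀ MvPolynomial (Fin n × ℕ) k) :
    arcIota k n v ∈ Ideal.span (Jvars k n) := by
  rw [arcIota, Finsupp.linearCombination_apply, Finsupp.sum]
  refine Submodule.sum_mem _ (fun p _ => ?_)
  exact Ideal.mul_mem_left _ _ (Ideal.subset_span ⟨p, rfl⟩)

lemma eps_adjoin {g : MvPolynomial (Fin n × ℕ) k}
    (hg : g ∈ Algebra.adjoin k
      (Set.range fun i : Fin n => (X (i, 0) : MvPolynomial (Fin n × ℕ) k))) :
    eps k n g = g := by
  refine Algebra.adjoin_induction ?_ ?_ ?_ ?_ hg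
  · rintro x ⟨i, rfl⟩
    simp [eps_X]
  · intro r; exact (eps k n).commutes r
  · intro x y _ _ hx hy; rw [map_add, hx, hy]
  · intro x y _ _ hx hy; rw [map_mul, hx, hy]

lemma sub_eps_mem_range (c : MvPolynomial (Fin n × ℕ) k) :
    c - eps k n c ∈ LinearMap.range (arcIota k n) := by
  induction c using MvPolynomial.induction_on with
  | C a => simp [eps]
  | add p q hp hq =>
      have : p + q - eps k n (p + q) = (p - eps k n p) + (q - eps k n q) := by
        rw [map_add]; ring
      rw [this]; exact Submodule.add_mem _ hp hq
  | mul_X c pt ih =>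
      obtain ⟨i, j⟩ := pt
      rw [map_mul, eps_X]
      cases j with
      | zero =>
          rw [if_pos rfl]
          have : c * X (i, 0) - eps k n c * X (i, 0)
              = (X (i, 0) : MvPolynomial (Fin n × ℕ) k) • (c - eps k n c) := by
            rw [smul_eq_mul]; ring
          rw [this]
          exact Submodule.smul_mem _ _ ih
      | succ j =>
          simp only [Nat.succ_ne_zero, if_neg, mul_zero, sub_zero]
          refine ⟨Finsupp.single (i, j) c, ?_⟩
          simp [arcIota_single]


/-- the Koszul relations among the variables `x_{i,j+1}` -/
def Kset : Set ((Fin n × ℕ) →₀ MvPolynomial (Fin n × ℕ) k) :=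
  {w | ∃ p q : Fin n × ℕ,
    w = (X (p.1, p.2 + 1) : MvPolynomial (Fin n × ℕ) k) • (Finsupp.single q 1 : (Fin n × ℕ) →₀ MvPolynomial (Fin n × ℕ) k)
      - (X (q.1, q.2 + 1) : MvPolynomial (Fin n × ℕ) k) • (Finsupp.single p 1 : (Fin n × ℕ) →₀ MvPolynomial (Fin n × ℕ) k)}

lemma iota_mem_span_vars (v : (Fin n × ℕ) →₀ MvPolynomial (Fin n × ℕ) k)
    (s : Set (Fin n × ℕ)) (hs : ↑v.support ⊆ s) :
    arcIota k n v ∈ Ideal.span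
      ((X : (Fin n × ℕ) → MvPolynomial (Fin n × ℕ) k) ''
        ((fun p : Fin n × ℕ => (p.1, p.2 + 1)) '' s)) := by
  rw [arcIota, Finsupp.linearCombination_apply, Finsupp.sum]
  refine Submodule.sum_mem _ (fun p hp => ?_)
  exact Ideal.mul_mem_left _ _ (Ideal.subset_span ⟨(p.1, p.2 + 1), ⟨p, hs hp, rfl⟩, rfl⟩)

lemma single_iota_sub_smul_mem (p₀ : Fin n × ℕ)
    (l : (Fin n × ℕ) →₀ MvPolynomial (Fin n × ℕ) k) :
    Finsupp.single p₀ (arcIota k n l) - (X (p₀.1, p₀.2 + 1) : MvPolynomial (Fin n × ℕ) k) • l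
      ∈ Submodule.span (MvPolynomial (Fin n × ℕ) k) (Kset k n) := by
  induction l using Finsupp.induction_linear with
  | zero => simp
  | add f g hf hg =>
      have : Finsupp.single p₀ (arcIota k n (f + g)) - (X (p₀.1, p₀.2 + 1) : MvPolynomial (Fin n × ℕ) k) • (f + g)
          = (Finsupp.single p₀ (arcIota k n f) - (X (p₀.1, p₀.2 + 1) : MvPolynomial (Fin n × ℕ) k) • f)
            + (Finsupp.single p₀ (arcIota k n g) - (X (p₀.1, p₀.2 + 1) : MvPolynomial (Fin n × ℕ) k) • g) := by
        rw [map_add, Finsupp.single_add, smul_add]; abel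
      rw [this]; exact Submodule.add_mem _ hf hg
  | single p a =>
      have heq : Finsupp.single p₀ (arcIota k n (Finsupp.single p a))
            - (X (p₀.1, p₀.2 + 1) : MvPolynomial (Fin n × ℕ) k) • Finsupp.single p a
          = a • ((X (p.1, p.2 + 1) : MvPolynomial (Fin n × ℕ) k) • (Finsupp.single p₀ 1 : (Fin n × ℕ) →₀ MvPolynomial (Fin n × ℕ) k)
              - (X (p₀.1, p₀.2 + 1) : MvPolynomial (Fin n × ℕ) k) • (Finsupp.single p 1 : (Fin n × ℕ) →₀ MvPolynomial (Fin n × ℕ) k)) := by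
        rw [arcIota_single, smul_sub, smul_smul, smul_smul, Finsupp.smul_single,
          Finsupp.smul_single, Finsupp.smul_single, smul_eq_mul, smul_eq_mul, smul_eq_mul,
          mul_one, mul_one, mul_comm a (X (p₀.1, p₀.2 + 1))]
      rw [heq]
      exact Submodule.smul_mem _ _ (Submodule.subset_span ⟨p, p₀, rfl⟩)

lemma koszul_exact : ∀ (N : ℕ) (v : (Fin n × ℕ) →₀ MvPolynomial (Fin n × ℕ) k),
    v.support.card ≤ N → arcIota k n v = 0 →
    v ∈ Submodule.span (MvPolynomial (Fin n × ℕ) k) (Kset k n) := by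
  intro N
  induction N with
  | zero =>
      intro v hcard _
      have : v.support = ∅ := Finset.card_eq_zero.mp (Nat.le_zero.mp hcard)
      rw [Finsupp.support_eq_empty.mp this]
      exact Submodule.zero_mem _
  | succ N ih =>
      intro v hcard hiota
      by_cases hv : v = 0
      · rw [hv]; exact Submodule.zero_mem _
      obtain ⟨p₀, hp₀⟩ := Finsupp.support_nonempty_iff.mpr hv
      classical
      -- decompose
      have hdec : Finsupp.single p₀ (v p₀) + v.erase p₀ = v := Finsupp.single_add_erase p₀ v
      have hiota2 : v p₀ * X (p₀.1, p₀.2 + 1) + arcIota k n (v.erase p₀) = 0 := by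
        rw [← arcIota_single k n p₀ (v p₀), ← map_add, hdec, hiota]
      set s : Set (Fin n × ℕ) := ↑(v.support.erase p₀) with hs
      have hmem : v p₀ * X (p₀.1, p₀.2 + 1) ∈ Ideal.span
          ((X : (Fin n × ℕ) → MvPolynomial (Fin n × ℕ) k) ''
            ((fun p : Fin n × ℕ => (p.1, p.2 + 1)) '' s)) := by
        have := iota_mem_span_vars k n (v.erase p₀) s (by rw [hs, Finsupp.support_erase])
        have heq : v p₀ * X (p₀.1, p₀.2 + 1) = -(arcIota k n (v.erase p₀)) := by
          linear_combination hiota2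
        rw [heq]; exact Submodule.neg_mem _ this
      have hnotmem : (p₀.1, p₀.2 + 1) ∉ (fun p : Fin n × ℕ => (p.1, p.2 + 1)) '' s := by
        rintro ⟨p', hp', heq⟩
        have : p' = p₀ := by
          simp only [Prod.mk.injEq] at heq
          exact Prod.ext heq.1 (by omega)
        rw [hs] at hp'
        exact (Finset.mem_erase.mp (by exact_mod_cast hp')).1 this
      have hv0 : v p₀ ∈ Ideal.span
          ((X : (Fin n × ℕ) → MvPolynomial (Fin n × ℕ) k) ''
            ((fun p : Fin n × ℕ => (p.1, p.2 + 1)) '' s)) := by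
        apply mul_X_mem_span_X_image (p₀.1, p₀.2 + 1) _ hnotmem
        rwa [mul_comm]
      -- representation of v p₀
      rw [← Set.image_comp, ← Ideal.submodule_span_eq,
        Finsupp.mem_span_image_iff_linearCombination] at hv0
      obtain ⟨l, hl, hltot⟩ := hv0
      have hltot' : arcIota k n l = v p₀ := hltot
      set κ := Finsupp.single p₀ (v p₀) - (X (p₀.1, p₀.2 + 1) : MvPolynomial (Fin n × ℕ) k) • l with hκ
      have hκmem : κ ∈ Submodule.span (MvPolynomial (Fin n × ℕ) k) (Kset k n) := by
        rw [hκ, ← hltot']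
        exact single_iota_sub_smul_mem k n p₀ l
      have hκiota : arcIota k n κ = 0 := by
        rw [hκ, map_sub, map_smul, arcIota_single, hltot', smul_eq_mul, mul_comm, sub_self]
      have hlsupp : l.support ⊆ v.support.erase p₀ := by
        exact_mod_cast (Finsupp.mem_supported _ _).mp hl
      have hsupp : (v - κ).support ⊆ v.support.erase p₀ := by
        intro p hp
        rw [Finsupp.mem_support_iff] at hp
        rw [Finset.mem_erase]
        constructor
        · rintro rfl
          apply hp
          have hlp : l p = 0 := by
            by_contra h'
            exact (Finset.mem_erase.mp (hlsupp (Finsupp.mem_support_iff.mpr h'))).1 rfl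
          simp [hκ, Finsupp.sub_apply, Finsupp.single_apply, hlp]
        · by_contra h'
          apply hp
          have hvp : v p = 0 := Finsupp.notMem_support_iff.mp h'
          have hlp : l p = 0 := by
            by_contra h''
            exact h' (Finset.mem_of_mem_erase (hlsupp (Finsupp.mem_support_iff.mpr h'')))
          have hpne : p ≠ p₀ := by
            rintro rfl; exact h' hp₀
          simp [hκ, Finsupp.sub_apply, Finsupp.single_apply, hlp, hvp, Ne.symm hpne]
      have hcard' : (v - κ).support.card ≤ N := by
        have h1 := Finset.card_le_card hsupp
        have h2 : (v.support.erase p₀).card = v.support.card - 1 :=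
          Finset.card_erase_of_mem hp₀
        have h3 : 1 ≤ v.support.card := Finset.card_pos.mpr ⟨p₀, hp₀⟩
        omega
      have hiota' : arcIota k n (v - κ) = 0 := by
        rw [map_sub, hiota, hκiota, sub_self]
      have := ih (v - κ) hcard' hiota'
      have hfin : v = (v - κ) + κ := by abel
      rw [hfin]
      exact Submodule.add_mem _ this hκmem




def Gset (S : Finset (MvPolynomial (Fin n × ℕ) k)) : Set (MvPolynomial (Fin n × ℕ) k) :=
  {g | ∃ f ∈ S, ∃ j : ℕ, g = (fun a => arcDerivation k n a)^[j] f}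

def Iset (I : Ideal (MvPolynomial (Fin n × ℕ) k)) :
    Set ((Fin n × ℕ) →₀ MvPolynomial (Fin n × ℕ) k) :=
  {w | ∃ a ∈ I, ∃ p : Fin n × ℕ, w = Finsupp.single p a}

def Jset (S : Finset (MvPolynomial (Fin n × ℕ) k)) :
    Set ((Fin n × ℕ) →₀ MvPolynomial (Fin n × ℕ) k) :=
  ⇑(arcDelF k n) '' Gset k n S

lemma smul_mem_span_Iset (I : Ideal (MvPolynomial (Fin n × ℕ) k))
    {g : MvPolynomial (Fin n × ℕ) k} (hg : g ∈ I)
    (w : (Fin n × ℕ) →₀ MvPolynomial (Fin n × ℕ) k) :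
    g • w ∈ Submodule.span (MvPolynomial (Fin n × ℕ) k) (Iset k n I) := by
  induction w using Finsupp.induction_linear with
  | zero => simp
  | add f h hf hh => rw [smul_add]; exact Submodule.add_mem _ hf hh
  | single p a =>
      rw [Finsupp.smul_single]
      exact Submodule.subset_span
        ⟨g • a, by rw [smul_eq_mul]; exact Ideal.mul_mem_right a I hg, p, rfl⟩

lemma key (S : Finset (MvPolynomial (Fin n × ℕ) k))
    (hS : ∀ f ∈ S, f ∈ Algebra.adjoin k
      (Set.range fun i : Fin n => (X (i, 0) : MvPolynomial (Fin n × ℕ) k)))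
    (I : Ideal (MvPolynomial (Fin n × ℕ) k)) (hI : I = Ideal.span (Gset k n S))
    (v : (Fin n × ℕ) →₀ MvPolynomial (Fin n × ℕ) k) (hv : arcIota k n v ∈ I) :
    v ∈ Submodule.span (MvPolynomial (Fin n × ℕ) k)
      (Kset k n ∪ Iset k n I ∪ Jset k n S) := by
  classical
  set big := Kset k n ∪ Iset k n I ∪ Jset k n S with hbig
  have hsubK : Kset k n ⊆ big := fun x hx => Or.inl (Or.inl hx)
  have hsubI : Iset k n I ⊆ big := fun x hx => Or.inl (Or.inr hx)
  have hsubJ : Jset k n S ⊆ big := fun x hx => Or.inr hx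
  have claim : ∀ g ∈ Gset k n S, ∀ cg : MvPolynomial (Fin n × ℕ) k,
      ∃ u ∈ Submodule.span (MvPolynomial (Fin n × ℕ) k) big,
        arcIota k n u = cg * g - eps k n cg * eps k n g := by
    rintro g ⟨f, hf, j, rfl⟩ cg
    cases j with
    | zero =>
        simp only [Function.iterate_zero, id_eq]
        have hepsf : eps k n f = f := eps_adjoin k n (hS f hf)
        obtain ⟨w, hw⟩ := sub_eps_mem_range k n cg
        have hfI : f ∈ I := by
          rw [hI]
          exact Ideal.subset_span ⟨f, hf, 0, by simp⟩
        refine ⟨f • w, Submodule.span_mono hsubI (smul_mem_span_Iset k n I hfI w), ?_⟩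
        rw [map_smul, hw, smul_eq_mul, hepsf]; ring
    | succ j =>
        rw [Function.iterate_succ_apply']
        set g' := (fun a => arcDerivation k n a)^[j] f with hg'
        have hepsg : eps k n (arcDerivation k n g') = 0 := by
          rw [← arcIota_delF]; exact eps_J k n (iota_mem_J k n _)
        refine ⟨cg • arcDelF k n g', ?_, ?_⟩
        · exact Submodule.smul_mem _ _
            (Submodule.subset_span (hsubJ ⟨g', ⟨f, hf, j, hg'⟩, rfl⟩))
        · rw [map_smul, arcIota_delF, smul_eq_mul, hepsg, mul_zero, sub_zero]
  have hv' : arcIota k n v ∈ Ideal.span (Gset k n S) := hI ▸ hv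
  obtain ⟨c, hcsupp, hcsum⟩ := Submodule.mem_span_set.mp hv'
  have hchoice : ∀ g ∈ c.support, ∃ u,
      u ∈ Submodule.span (MvPolynomial (Fin n × ℕ) k) big ∧
      arcIota k n u = c g * g - eps k n (c g) * eps k n g := by
    intro g hg
    obtain ⟨u, hu1, hu2⟩ := claim g (hcsupp hg) (c g)
    exact ⟨u, hu1, hu2⟩
  choose u humem huiota using hchoice
  set utot := ∑ g ∈ c.support.attach, u g.1 g.2 with hut
  have hutmem : utot ∈ Submodule.span (MvPolynomial (Fin n × ℕ) k) big :=
    Submodule.sum_mem _ (fun g _ => humem g.1 g.2)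
  have h1 : ∑ g ∈ c.support, c g * g = arcIota k n v := by
    rw [← hcsum, Finsupp.sum]
    exact Finset.sum_congr rfl (fun g _ => by rw [smul_eq_mul])
  have h2 : eps k n (arcIota k n v) = 0 := eps_J k n (iota_mem_J k n v)
  have hutiota : arcIota k n utot = arcIota k n v := by
    rw [hut, map_sum]
    have e1 : ∑ g ∈ c.support.attach, arcIota k n (u g.1 g.2)
        = ∑ g ∈ c.support.attach, (c g.1 * g.1 - eps k n (c g.1) * eps k n g.1) :=
      Finset.sum_congr rfl (fun g _ => huiota g.1 g.2)
    rw [e1, Finset.sum_attach c.support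
      (fun g => c g * g - eps k n (c g) * eps k n g), Finset.sum_sub_distrib, h1]
    have e2 : ∑ g ∈ c.support, eps k n (c g) * eps k n g = eps k n (arcIota k n v) := by
      rw [← h1, map_sum]
      exact Finset.sum_congr rfl (fun g _ => (map_mul _ _ _).symm)
    rw [e2, h2, sub_zero]
  have hkos : v - utot ∈ Submodule.span (MvPolynomial (Fin n × ℕ) k) (Kset k n) :=
    koszul_exact k n (v - utot).support.card (v - utot) le_rfl
      (by rw [map_sub, hutiota, sub_self])
  have hfin : v = (v - utot) + utot := by abel
  rw [hfin]
  exact Submodule.add_mem _ (Submodule.span_mono hsubK hkos) hutmem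


end ArcAux

open ArcAux

section KDsmul
variable (k : Type*) [Field k] (n : ℕ) (I : Ideal (MvPolynomial (Fin n × ℕ) k))
lemma kd_zero_smul (x : Ω[MvPolynomial (Fin n × ℕ) k ⧸ I⁄k]) :
    (0 : MvPolynomial (Fin n × ℕ) k ⧸ I) • x = 0 :=
  zero_smul (MvPolynomial (Fin n × ℕ) k ⧸ I) x
lemma kd_one_smul (x : Ω[MvPolynomial (Fin n × ℕ) k ⧸ I⁄k]) :
    (1 : MvPolynomial (Fin n × ℕ) k ⧸ I) • x = x :=
  one_smul (MvPolynomial (Fin n × ℕ) k ⧸ I) x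
lemma kd_add_smul (b c : MvPolynomial (Fin n × ℕ) k ⧸ I) (x : Ω[MvPolynomial (Fin n × ℕ) k ⧸ I⁄k]) :
    (b + c) • x = b • x + c • x :=
  add_smul (R := MvPolynomial (Fin n × ℕ) k ⧸ I) b c x
lemma kd_sub_smul (b c : MvPolynomial (Fin n × ℕ) k ⧸ I) (x : Ω[MvPolynomial (Fin n × ℕ) k ⧸ I⁄k]) :
    (b - c) • x = b • x - c • x :=
  sub_smul (R := MvPolynomial (Fin n × ℕ) k ⧸ I) b c x
lemma kd_mul_smul (b c : MvPolynomial (Fin n × ℕ) k ⧸ I) (x : Ω[MvPolynomial (Fin n × ℕ) k ⧸ I⁄k]) :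
    (b * c) • x = b • c • x :=
  mul_smul (α := MvPolynomial (Fin n × ℕ) k ⧸ I) b c x
lemma kd_smul_sum (b : MvPolynomial (Fin n × ℕ) k ⧸ I) (u : Fin n × ℕ →₀ MvPolynomial (Fin n × ℕ) k)
    (f : Fin n × ℕ → MvPolynomial (Fin n × ℕ) k → Ω[MvPolynomial (Fin n × ℕ) k ⧸ I⁄k]) :
    b • u.sum f = u.sum (fun i c => b • f i c) :=
  Finsupp.smul_sum (R := MvPolynomial (Fin n × ℕ) k ⧸ I) (M := Ω[MvPolynomial (Fin n × ℕ) k ⧸ I⁄k])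
end KDsmul

/-- Theorem `thm:ssjets`, implication (⇐): let `S` be a finite set of polynomials in the
weight-zero variables `x_{i,0}` and `I` the ideal of `A = k[x_{i,j}]` generated by all
iterated derivatives `∂^j(f)`, `f ∈ S` (so `B = A/I` is the arc algebra of
`Spec(k[x_{1,0},…,x_{n,0}]/(S))`).  Then `I` is `∂`-stable, and for the induced
derivation `∂̄` on `B`, the kernel of the contraction `ι : Ω_{B/k} → B` (the `B`-linear
map with `ι(db) = ∂̄b`) equals the submodule `W` generated by the elements
`(∂̄c)·dc′ − (∂̄c′)·dc`; i.e. the degree `−1` Koszul homology of the arc algebra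
vanishes. -/
theorem arc_koszul_minus_one_vanishes (k : Type*) [Field k] [CharZero k]
    (n : ℕ) (hn : 1 ≤ n)
    (S : Finset (MvPolynomial (Fin n × ℕ) k))
    (hS : ∀ f ∈ S, f ∈ Algebra.adjoin k
      (Set.range fun i : Fin n => (MvPolynomial.X (i, 0) : MvPolynomial (Fin n × ℕ) k)))
    (I : Ideal (MvPolynomial (Fin n × ℕ) k))
    (hI : I = Ideal.span
      {g | ∃ f ∈ S, ∃ j : ℕ, g = (fun a => arcDerivation k n a)^[j] f}) :
    (∀ a ∈ I, arcDerivation k n a ∈ I) ∧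
    ∀ Dbar : Derivation k (MvPolynomial (Fin n × ℕ) k ⧸ I)
        (MvPolynomial (Fin n × ℕ) k ⧸ I),
      (∀ a : MvPolynomial (Fin n × ℕ) k,
          Dbar (Ideal.Quotient.mk I a) = Ideal.Quotient.mk I (arcDerivation k n a)) →
      LinearMap.ker Dbar.liftKaehlerDifferential
        = Submodule.span (MvPolynomial (Fin n × ℕ) k ⧸ I)
            {ω | ∃ c c' : MvPolynomial (Fin n × ℕ) k ⧸ I,
              ω = Dbar c • KaehlerDifferential.D k (MvPolynomial (Fin n × ℕ) k ⧸ I) c'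
                - Dbar c' • KaehlerDifferential.D k (MvPolynomial (Fin n × ℕ) k ⧸ I) c} := by

  classical
  have hIG : I = Ideal.span (Gset k n S) := hI
  -- part 1 : stability
  have hstable : ∀ a ∈ I, arcDerivation k n a ∈ I := by
    intro a ha
    rw [hIG] at ha ⊢
    refine Submodule.span_induction ?_ ?_ ?_ ?_ ha
    · rintro x ⟨f, hf, j, rfl⟩
      exact Ideal.subset_span ⟨f, hf, j + 1, (Function.iterate_succ_apply' _ j f).symm⟩
    · simp
    · intro x y _ _ hx hy; rw [map_add]; exact Submodule.add_mem _ hx hy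
    · intro b x hxmem hx
      rw [smul_eq_mul, Derivation.leibniz]
      refine Submodule.add_mem _ (Submodule.smul_mem _ _ hx) ?_
      rw [smul_eq_mul]
      exact Ideal.mul_mem_right _ _ hxmem
  refine ⟨hstable, ?_⟩
  intro Dbar hDbar
  apply le_antisymm
  swap
  · rw [Submodule.span_le]
    rintro ω ⟨c, c', rfl⟩
    simp only [SetLike.mem_coe, LinearMap.mem_ker, map_sub, map_smul,
      Derivation.liftKaehlerDifferential_comp_D]
    rw [smul_eq_mul, smul_eq_mul, mul_comm, sub_self]
  intro ω hω
  rw [LinearMap.mem_ker] at hω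
  have hDX : ∀ b : MvPolynomial (Fin n × ℕ) k ⧸ I,
      KaehlerDifferential.D k (MvPolynomial (Fin n × ℕ) k ⧸ I) b ∈
        Submodule.span (MvPolynomial (Fin n × ℕ) k ⧸ I)
          (Set.range fun p : Fin n × ℕ =>
            KaehlerDifferential.D k (MvPolynomial (Fin n × ℕ) k ⧸ I)
              (Ideal.Quotient.mk I (MvPolynomial.X p))) := by
    intro b
    obtain ⟨a, rfl⟩ := Ideal.Quotient.mk_surjective b
    induction a using MvPolynomial.induction_on with
    | C r =>
        have : Ideal.Quotient.mk I (MvPolynomial.C r)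
            = algebraMap k (MvPolynomial (Fin n × ℕ) k ⧸ I) r := by
          rw [← MvPolynomial.algebraMap_eq,
            IsScalarTower.algebraMap_apply k (MvPolynomial (Fin n × ℕ) k)
              (MvPolynomial (Fin n × ℕ) k ⧸ I),
            Ideal.Quotient.algebraMap_eq]
        rw [this, Derivation.map_algebraMap]
        exact Submodule.zero_mem _
    | add p q hp hq =>
        rw [map_add, Derivation.map_add]
        exact Submodule.add_mem _ hp hq
    | mul_X a p ih =>
        rw [map_mul, Derivation.leibniz]
        exact Submodule.add_mem _
          (Submodule.smul_mem _ _ (Submodule.subset_span ⟨p, rfl⟩))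
          (Submodule.smul_mem _ _ ih)
  have hωspan : ω ∈ Submodule.span (MvPolynomial (Fin n × ℕ) k ⧸ I)
      (Set.range fun p : Fin n × ℕ =>
        KaehlerDifferential.D k (MvPolynomial (Fin n × ℕ) k ⧸ I)
          (Ideal.Quotient.mk I (MvPolynomial.X p))) := by
    have htop : (⊤ : Submodule (MvPolynomial (Fin n × ℕ) k ⧸ I)
        (Ω[MvPolynomial (Fin n × ℕ) k ⧸ I⁄k])) ≤
        Submodule.span (MvPolynomial (Fin n × ℕ) k ⧸ I)
          (Set.range fun p : Fin n × ℕ =>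
            KaehlerDifferential.D k (MvPolynomial (Fin n × ℕ) k ⧸ I)
              (Ideal.Quotient.mk I (MvPolynomial.X p))) := by
      rw [← KaehlerDifferential.span_range_derivation, Submodule.span_le]
      rintro _ ⟨b, rfl⟩
      exact hDX b
    exact htop Submodule.mem_top
  rw [Finsupp.mem_span_range_iff_exists_finsupp] at hωspan
  obtain ⟨w, hw⟩ := hωspan
  let sec : (MvPolynomial (Fin n × ℕ) k ⧸ I) → MvPolynomial (Fin n × ℕ) k :=
    fun b => if h : b = 0 then 0 else (Ideal.Quotient.mk_surjective b).choose
  have hsec : ∀ b, Ideal.Quotient.mk I (sec b) = b := by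
    intro b
    by_cases h : b = 0
    · simp [sec, h]
    · simp only [sec, dif_neg h]
      exact (Ideal.Quotient.mk_surjective b).choose_spec
  have hsec0 : sec 0 = 0 := by simp [sec]
  set v := Finsupp.mapRange sec hsec0 w with hv
  have hιω : Dbar.liftKaehlerDifferential ω
      = w.sum fun p b => b * Ideal.Quotient.mk I (MvPolynomial.X (p.1, p.2 + 1)) := by
    rw [← hw, map_finsuppSum]
    refine Finsupp.sum_congr fun p _ => ?_
    rw [map_smul, Derivation.liftKaehlerDifferential_comp_D, hDbar, smul_eq_mul]
    congr 2
    rw [arcDerivation_X]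
  have hπv : Ideal.Quotient.mk I (arcIota k n v) = 0 := by
    rw [arcIota, Finsupp.linearCombination_apply, hv,
      Finsupp.sum_mapRange_index (by simp), map_finsuppSum, ← hω, hιω]
    refine Finsupp.sum_congr fun p _ => ?_
    rw [smul_eq_mul, map_mul, hsec]
  have hvI : arcIota k n v ∈ I := Ideal.Quotient.eq_zero_iff_mem.mp hπv
  have hvbig := key k n S hS I hIG v hvI
  set Φ : ((Fin n × ℕ) →₀ MvPolynomial (Fin n × ℕ) k) →
      Ω[MvPolynomial (Fin n × ℕ) k ⧸ I⁄k] := fun u => u.sum fun p a =>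
        Ideal.Quotient.mk I a • KaehlerDifferential.D k (MvPolynomial (Fin n × ℕ) k ⧸ I)
          (Ideal.Quotient.mk I (MvPolynomial.X p)) with hΦ
  have hΦsingle : ∀ (p : Fin n × ℕ) (a : MvPolynomial (Fin n × ℕ) k),
      Φ (Finsupp.single p a) = Ideal.Quotient.mk I a •
        KaehlerDifferential.D k (MvPolynomial (Fin n × ℕ) k ⧸ I)
          (Ideal.Quotient.mk I (MvPolynomial.X p)) := by
    intro p a
    simp only [hΦ]
    exact Finsupp.sum_single_index (by rw [map_zero, kd_zero_smul])
  have hΦadd : ∀ u₁ u₂, Φ (u₁ + u₂) = Φ u₁ + Φ u₂ := by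
    intro u₁ u₂
    simp only [hΦ]
    exact Finsupp.sum_add_index (by intros; rw [map_zero, kd_zero_smul]) (by intro p _ b₁ b₂; rw [map_add, kd_add_smul])
  have hΦsmul : ∀ (a : MvPolynomial (Fin n × ℕ) k) u,
      Φ (a • u) = Ideal.Quotient.mk I a • Φ u := by
    intro a u
    simp only [hΦ]
    rw [Finsupp.sum_smul_index (by intros; rw [map_zero, kd_zero_smul]), kd_smul_sum]
    refine Finsupp.sum_congr fun p _ => ?_
    rw [map_mul, kd_mul_smul]
  have hΦsub : ∀ u₁ u₂, Φ (u₁ - u₂) = Φ u₁ - Φ u₂ := by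
    intro u₁ u₂
    simp only [hΦ]
    exact Finsupp.sum_sub_index (by intro p b₁ b₂; rw [map_sub, kd_sub_smul])
  have hΦD : ∀ a : MvPolynomial (Fin n × ℕ) k,
      Φ (arcDelF k n a) = KaehlerDifferential.D k (MvPolynomial (Fin n × ℕ) k ⧸ I)
        (Ideal.Quotient.mk I a) := by
    intro a
    induction a using MvPolynomial.induction_on with
    | C r =>
        have h1 : arcDelF k n (MvPolynomial.C r) = 0 := by
          rw [← MvPolynomial.algebraMap_eq, Derivation.map_algebraMap]
        have h2 : Ideal.Quotient.mk I (MvPolynomial.C r)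
            = algebraMap k (MvPolynomial (Fin n × ℕ) k ⧸ I) r := by
          rw [← MvPolynomial.algebraMap_eq,
            IsScalarTower.algebraMap_apply k (MvPolynomial (Fin n × ℕ) k)
              (MvPolynomial (Fin n × ℕ) k ⧸ I),
            Ideal.Quotient.algebraMap_eq]
        rw [h1, h2, Derivation.map_algebraMap]
        simp only [hΦ]
        exact Finsupp.sum_zero_index
    | add p q hp hq =>
        rw [Derivation.map_add, hΦadd, hp, hq, map_add, Derivation.map_add]
    | mul_X a p ih =>
        rw [Derivation.leibniz, hΦadd, hΦsmul, hΦsmul, ih]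
        have hX1 : arcDelF k n (MvPolynomial.X p) = Finsupp.single p 1 := by
          rw [arcDelF, MvPolynomial.mkDerivation_X]
        rw [hX1, hΦsingle, map_one, kd_one_smul, map_mul, Derivation.leibniz]
  have hπX : ∀ r : Fin n × ℕ,
      Ideal.Quotient.mk I (MvPolynomial.X (r.1, r.2 + 1))
        = Dbar (Ideal.Quotient.mk I (MvPolynomial.X r)) := by
    intro r
    rw [hDbar, arcDerivation_X]
  have hΦW : ∀ u ∈ Submodule.span (MvPolynomial (Fin n × ℕ) k)
      (Kset k n ∪ Iset k n I ∪ Jset k n S),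
      Φ u ∈ Submodule.span (MvPolynomial (Fin n × ℕ) k ⧸ I)
        {ω | ∃ c c' : MvPolynomial (Fin n × ℕ) k ⧸ I,
          ω = Dbar c • KaehlerDifferential.D k (MvPolynomial (Fin n × ℕ) k ⧸ I) c'
            - Dbar c' • KaehlerDifferential.D k (MvPolynomial (Fin n × ℕ) k ⧸ I) c} := by
    intro u hu
    refine Submodule.span_induction ?_ ?_ ?_ ?_ hu
    · rintro x hx
      rcases hx with (hx | hx) | hx
      · obtain ⟨p, q, rfl⟩ := hx
        have hcomp : Φ ((MvPolynomial.X (p.1, p.2 + 1) : MvPolynomial (Fin n × ℕ) k) •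
                Finsupp.single q (1 : MvPolynomial (Fin n × ℕ) k)
              - (MvPolynomial.X (q.1, q.2 + 1) : MvPolynomial (Fin n × ℕ) k) •
                Finsupp.single p 1)
            = Dbar (Ideal.Quotient.mk I (MvPolynomial.X p)) •
                KaehlerDifferential.D k (MvPolynomial (Fin n × ℕ) k ⧸ I)
                  (Ideal.Quotient.mk I (MvPolynomial.X q))
              - Dbar (Ideal.Quotient.mk I (MvPolynomial.X q)) •
                  KaehlerDifferential.D k (MvPolynomial (Fin n × ℕ) k ⧸ I)
                    (Ideal.Quotient.mk I (MvPolynomial.X p)) := by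
          rw [hΦsub, hΦsmul, hΦsmul, hΦsingle, hΦsingle, map_one, kd_one_smul, kd_one_smul,
            hπX, hπX]
        rw [hcomp]
        exact Submodule.subset_span
          ⟨Ideal.Quotient.mk I (MvPolynomial.X p), Ideal.Quotient.mk I (MvPolynomial.X q), rfl⟩
      · obtain ⟨a, haI, p, rfl⟩ := hx
        have : Φ (Finsupp.single p a) = 0 := by
          rw [hΦsingle, Ideal.Quotient.eq_zero_iff_mem.mpr haI, kd_zero_smul]
        rw [this]
        exact Submodule.zero_mem _
      · obtain ⟨g, hg, rfl⟩ := hx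
        have hgI : g ∈ I := by
          rw [hIG]
          exact Ideal.subset_span hg
        have : Φ (arcDelF k n g) = 0 := by
          rw [hΦD, Ideal.Quotient.eq_zero_iff_mem.mpr hgI]
          exact map_zero
            (KaehlerDifferential.D k (MvPolynomial (Fin n × ℕ) k ⧸ I)).toLinearMap
        rw [this]
        exact Submodule.zero_mem _
    · have : Φ 0 = 0 := by
        simp only [hΦ]
        exact Finsupp.sum_zero_index
      rw [this]
      exact Submodule.zero_mem _
    · intro x y _ _ hx hy
      rw [hΦadd]
      exact Submodule.add_mem _ hx hy
    · intro a x _ hx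
      rw [hΦsmul]
      exact Submodule.smul_mem _ _ hx
  have hωΦ : Φ v = ω := by
    simp only [hΦ]
    rw [hv, Finsupp.sum_mapRange_index (by intros; rw [map_zero, kd_zero_smul]), ← hw]
    exact Finsupp.sum_congr fun p _ => by rw [hsec]
  rw [← hωΦ]
  exact hΦW v hvbig
end

section
/- Grade A by assigning weight j to the variable x_{i,j} (so the weight of a monomial is the sum of j times the exponent of x_{i,j}). Let I ⊆ A be a nonzero ∂-stable ideal which is homogeneous with respect to this grading and which contains no nonzero polynomial in the weight-zero variables x_{1,0}, …, x_{n,0} alone. Then for the quotient B = A/I with induced derivation ∂̄ one has ker ι ≠ W; that is, there exists a Kähler differential ω ∈ Ω_{B/k} with ι(ω) = 0 which is not a B-linear combination of elements (∂̄c)·dc′ − (∂̄c′)·dc. (This is the implication of the theorem asserting that if the degree −1 Koszul homology vanishes then the graded differential algebra is the full arc algebra of its degree-zero part.) -/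
set_option synthInstance.maxHeartbeats 1000000
set_option maxHeartbeats 1000000

open scoped BigOperators

namespace ArcAux

open MvPolynomial

/-- The submodule of polynomials all of whose monomials have weight at least `t`. -/
def arcLB (k : Type*) [Field k] (n t : ℕ) : Submodule k (MvPolynomial (Fin n × ℕ) k) where
  carrier := {a | ∀ d : (Fin n × ℕ) →₀ ℕ, MvPolynomial.coeff d a ≠ 0 →
      t ≤ Finsupp.weight (fun p : Fin n × ℕ => p.2) d}
  add_mem' := by
    intro a b ha hb d hd
    by_cases h1 : MvPolynomial.coeff d a ≠ 0
    · exact ha d h1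
    · push_neg at h1
      refine hb d ?_
      intro h2
      rw [MvPolynomial.coeff_add, h1, h2, add_zero] at hd
      exact hd rfl
  zero_mem' := by intro d hd; simp at hd
  smul_mem' := by
    intro c a ha d hd
    rw [MvPolynomial.coeff_smul] at hd
    exact ha d (right_ne_zero_of_mul hd)

variable {k : Type*} [Field k] {n : ℕ}

lemma mem_arcLB {t : ℕ} {a : MvPolynomial (Fin n × ℕ) k} :
    a ∈ arcLB k n t ↔ ∀ d : (Fin n × ℕ) →₀ ℕ, MvPolynomial.coeff d a ≠ 0 →
      t ≤ Finsupp.weight (fun p : Fin n × ℕ => p.2) d := Iff.rfl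

lemma mem_arcLB_zero (a : MvPolynomial (Fin n × ℕ) k) : a ∈ arcLB k n 0 :=
  fun _ _ => Nat.zero_le _

lemma weight_single_one (q : Fin n × ℕ) :
    Finsupp.weight (fun p : Fin n × ℕ => p.2) (Finsupp.single q 1) = q.2 := by
  rw [Finsupp.weight_apply, Finsupp.sum_single_index] <;> simp

lemma weight_sub_single {d : (Fin n × ℕ) →₀ ℕ} {q : Fin n × ℕ} (hq : d q ≠ 0) :
    Finsupp.weight (fun p : Fin n × ℕ => p.2) (d - Finsupp.single q 1) + q.2
      = Finsupp.weight (fun p : Fin n × ℕ => p.2) d := by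
  have hle : Finsupp.single q 1 ≤ d := Finsupp.single_le_iff.mpr (Nat.one_le_iff_ne_zero.mpr hq)
  conv_rhs => rw [← tsub_add_cancel_of_le hle]
  rw [map_add, weight_single_one]

lemma arcLB_mul {a b : MvPolynomial (Fin n × ℕ) k} {ta tb : ℕ}
    (ha : a ∈ arcLB k n ta) (hb : b ∈ arcLB k n tb) : a * b ∈ arcLB k n (ta + tb) := by
  classical
  intro d hd
  have hd' : d ∈ (a * b).support := MvPolynomial.mem_support_iff.mpr hd
  have := MvPolynomial.support_mul a b hd'
  rw [Finset.mem_add] at this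
  obtain ⟨d₁, h₁, d₂, h₂, rfl⟩ := this
  rw [map_add]
  exact add_le_add (ha d₁ (MvPolynomial.mem_support_iff.mp h₁))
    (hb d₂ (MvPolynomial.mem_support_iff.mp h₂))

lemma arcLB_deriv {a : MvPolynomial (Fin n × ℕ) k} {t : ℕ}
    (ha : a ∈ arcLB k n t) : arcDerivation k n a ∈ arcLB k n (t + 1) := by
  classical
  have : arcDerivation k n a
      = ∑ d ∈ a.support, arcDerivation k n (monomial d (coeff d a)) := by
    conv_lhs => rw [MvPolynomial.as_sum a]
    exact map_sum (arcDerivation k n).toLinearMap _ _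
  rw [this]
  refine Submodule.sum_mem _ ?_
  intro d hd
  rw [arcDerivation, MvPolynomial.mkDerivation_monomial]
  refine Submodule.smul_mem _ _ ?_
  rw [Finsupp.sum]
  refine Submodule.sum_mem _ ?_
  intro q hq
  rw [smul_eq_mul, show (X (q.1, q.2 + 1) : MvPolynomial (Fin n × ℕ) k)
      = monomial (Finsupp.single (q.1, q.2 + 1) 1) 1 from rfl, MvPolynomial.monomial_mul]
  intro e he
  rw [MvPolynomial.coeff_monomial] at he
  split_ifs at he with h
  · subst h
    rw [map_add, weight_single_one]
    have h1 : d q ≠ 0 := Finsupp.mem_support_iff.mp hq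
    have h2 := weight_sub_single (n := n) h1
    have h3 := ha d (MvPolynomial.mem_support_iff.mp hd)
    omega
  · exact absurd rfl he

lemma arcLB_component_eq_zero {a : MvPolynomial (Fin n × ℕ) k} {t u : ℕ}
    (ha : a ∈ arcLB k n t) (h : u < t) :
    weightedHomogeneousComponent (fun p : Fin n × ℕ => p.2) u a = 0 := by
  classical
  ext e
  rw [coeff_weightedHomogeneousComponent, MvPolynomial.coeff_zero]
  split_ifs with h1
  · by_contra h2
    have := ha e h2
    omega
  · rfl

lemma homog_zero_mem_adjoin {g : MvPolynomial (Fin n × ℕ) k}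
    (hg : IsWeightedHomogeneous (fun p : Fin n × ℕ => p.2) g 0) :
    g ∈ Algebra.adjoin k
      (Set.range fun i : Fin n => (MvPolynomial.X (i, 0) : MvPolynomial (Fin n × ℕ) k)) := by
  classical
  rw [MvPolynomial.as_sum g]
  refine Subalgebra.sum_mem _ ?_
  intro d hd
  rw [MvPolynomial.monomial_eq]
  refine Subalgebra.mul_mem _ ?_ ?_
  · exact Subalgebra.algebraMap_mem _ _
  · rw [Finsupp.prod]
    refine Subalgebra.prod_mem _ ?_
    intro q hq
    refine Subalgebra.pow_mem _ ?_ _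
    have h0 : Finsupp.weight (fun p : Fin n × ℕ => p.2) d = 0 :=
      hg (MvPolynomial.mem_support_iff.mp hd)
    rw [Finsupp.weight_apply, Finsupp.sum] at h0
    have hq0 : d q • q.2 = 0 := by
      refine (Finset.sum_eq_zero_iff).mp h0 q hq
    have hdq : d q ≠ 0 := Finsupp.mem_support_iff.mp hq
    have hq2 : q.2 = 0 := by
      rw [smul_eq_mul, Nat.mul_eq_zero] at hq0
      tauto
    refine Algebra.subset_adjoin ?_
    exact ⟨q.1, by rw [← hq2]⟩

lemma euler_sum {f : MvPolynomial (Fin n × ℕ) k} {m : ℕ}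
    (hf : IsWeightedHomogeneous (fun p : Fin n × ℕ => p.2) f m) :
    ∑ d ∈ f.support, ∑ q ∈ d.support,
        monomial (d - Finsupp.single q 1) (coeff d f * ((d q : k) * (q.2 : k))) * X q
      = m • f := by
  classical
  conv_rhs => rw [MvPolynomial.as_sum f, Finset.smul_sum]
  refine Finset.sum_congr rfl ?_
  intro d hd
  have hwd : Finsupp.weight (fun p : Fin n × ℕ => p.2) d = m :=
    hf (MvPolynomial.mem_support_iff.mp hd)
  have step : ∀ q ∈ d.support,
      monomial (d - Finsupp.single q 1) (coeff d f * ((d q : k) * (q.2 : k))) * X q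
        = monomial d (coeff d f * ((d q : k) * (q.2 : k))) := by
    intro q hq
    rw [show (X q : MvPolynomial (Fin n × ℕ) k) = monomial (Finsupp.single q 1) 1 from rfl,
      MvPolynomial.monomial_mul, mul_one,
      tsub_add_cancel_of_le (Finsupp.single_le_iff.mpr
        (Nat.one_le_iff_ne_zero.mpr (Finsupp.mem_support_iff.mp hq)))]
  rw [Finset.sum_congr rfl step]
  rw [← map_sum (monomial d), ← Finset.mul_sum]
  have hsum : (∑ q ∈ d.support, ((d q : k) * (q.2 : k))) = (m : k) := by
    rw [← hwd, Finsupp.weight_apply, Finsupp.sum]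
    simp only [smul_eq_mul]
    push_cast
    rfl
  rw [hsum, ← Nat.cast_smul_eq_nsmul k, MvPolynomial.smul_monomial, smul_eq_mul, mul_comm]

/-- The key functional used to detect nontrivial Koszul homology. -/
noncomputable def phiMap (k : Type*) [Field k] (n m : ℕ)
    (I : Ideal (MvPolynomial (Fin n × ℕ) k))
    (s : (MvPolynomial (Fin n × ℕ) k ⧸ I) →ₗ[k] MvPolynomial (Fin n × ℕ) k) :
    ((MvPolynomial (Fin n × ℕ) k ⧸ I) →₀ (MvPolynomial (Fin n × ℕ) k ⧸ I)) →ₗ[k]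
      MvPolynomial (Fin n × ℕ) k :=
  Finsupp.lsum ℕ fun x =>
    (weightedHomogeneousComponent (fun p : Fin n × ℕ => p.2) m).comp
      ((LinearMap.mulRight k (arcDerivation k n (s x))).comp s)

lemma phiMap_single {k : Type*} [Field k] {n m : ℕ}
    {I : Ideal (MvPolynomial (Fin n × ℕ) k)}
    (s : (MvPolynomial (Fin n × ℕ) k ⧸ I) →ₗ[k] MvPolynomial (Fin n × ℕ) k)
    (x b : MvPolynomial (Fin n × ℕ) k ⧸ I) :
    phiMap k n m I s (Finsupp.single x b)
      = weightedHomogeneousComponent (fun p : Fin n × ℕ => p.2) m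
          (s b * arcDerivation k n (s x)) := by
  simp [phiMap]

lemma smul_gen_add {S : Type*} [CommRing S] (b u v : S) :
    b • (Finsupp.single u (1:S) + Finsupp.single v 1 - Finsupp.single (u+v) 1)
    = Finsupp.single u b + Finsupp.single v b - Finsupp.single (u+v) b := by
  rw [smul_sub, smul_add, Finsupp.smul_single, Finsupp.smul_single, Finsupp.smul_single,
    smul_eq_mul, mul_one]

lemma smul_gen_mul {S : Type*} [CommRing S] (b u v : S) :
    b • (Finsupp.single v u + Finsupp.single u v - Finsupp.single (u*v) (1:S))
    = Finsupp.single v (b*u) + Finsupp.single u (b*v) - Finsupp.single (u*v) b := by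
  rw [smul_sub, smul_add, Finsupp.smul_single, Finsupp.smul_single, Finsupp.smul_single,
    smul_eq_mul, smul_eq_mul, smul_eq_mul, mul_one]

lemma smul_gen_single {S : Type*} [CommRing S] (b u : S) :
    b • (Finsupp.single u (1:S)) = Finsupp.single u b := by
  rw [Finsupp.smul_single, smul_eq_mul, mul_one]

lemma smul_gen_pair {S : Type*} [CommRing S] (b u v x y : S) :
    b • (Finsupp.single u x - Finsupp.single v y)
      = Finsupp.single u (b * x) - Finsupp.single v (b * y) := by
  rw [smul_sub, Finsupp.smul_single, Finsupp.smul_single, smul_eq_mul, smul_eq_mul]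

lemma phiMap_mk {k : Type*} [Field k] {n m : ℕ}
    {I : Ideal (MvPolynomial (Fin n × ℕ) k)}
    (s : (MvPolynomial (Fin n × ℕ) k ⧸ I) →ₗ[k] MvPolynomial (Fin n × ℕ) k)
    (hmemI : ∀ a : MvPolynomial (Fin n × ℕ) k, s (Ideal.Quotient.mk I a) - a ∈ I)
    (hK1 : ∀ (a : MvPolynomial (Fin n × ℕ) k), ∀ g ∈ I,
      weightedHomogeneousComponent (fun p : Fin n × ℕ => p.2) m
        (a * arcDerivation k n g) = 0)
    (hK2 : ∀ g ∈ I, ∀ c : MvPolynomial (Fin n × ℕ) k,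
      weightedHomogeneousComponent (fun p : Fin n × ℕ => p.2) m
        (g * arcDerivation k n c) = 0)
    (a c : MvPolynomial (Fin n × ℕ) k) :
    phiMap k n m I s (Finsupp.single (Ideal.Quotient.mk I c) (Ideal.Quotient.mk I a))
      = weightedHomogeneousComponent (fun p : Fin n × ℕ => p.2) m
          (a * arcDerivation k n c) := by
  rw [phiMap_single]
  have key : s (Ideal.Quotient.mk I a) * arcDerivation k n (s (Ideal.Quotient.mk I c))
      - a * arcDerivation k n c
      = (s (Ideal.Quotient.mk I a) - a) * arcDerivation k n (s (Ideal.Quotient.mk I c))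
        + a * arcDerivation k n (s (Ideal.Quotient.mk I c) - c) := by
    rw [Derivation.map_sub]
    ring
  have e1 : weightedHomogeneousComponent (fun p : Fin n × ℕ => p.2) m
      ((s (Ideal.Quotient.mk I a) - a)
        * arcDerivation k n (s (Ideal.Quotient.mk I c))) = 0 :=
    hK2 _ (hmemI a) _
  have e2 : weightedHomogeneousComponent (fun p : Fin n × ℕ => p.2) m
      (a * arcDerivation k n (s (Ideal.Quotient.mk I c) - c)) = 0 :=
    hK1 a _ (hmemI c)
  have h3 := congrArg (weightedHomogeneousComponent (fun p : Fin n × ℕ => p.2) m) key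
  rw [map_sub, map_add, e1, e2, add_zero] at h3
  exact sub_eq_zero.mp h3

lemma phiMap_kerTotal {k : Type*} [Field k] {n m : ℕ}
    {I : Ideal (MvPolynomial (Fin n × ℕ) k)}
    (s : (MvPolynomial (Fin n × ℕ) k ⧸ I) →ₗ[k] MvPolynomial (Fin n × ℕ) k)
    (hmemI : ∀ a : MvPolynomial (Fin n × ℕ) k, s (Ideal.Quotient.mk I a) - a ∈ I)
    (hK1 : ∀ (a : MvPolynomial (Fin n × ℕ) k), ∀ g ∈ I,
      weightedHomogeneousComponent (fun p : Fin n × ℕ => p.2) m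
        (a * arcDerivation k n g) = 0)
    (hK2 : ∀ g ∈ I, ∀ c : MvPolynomial (Fin n × ℕ) k,
      weightedHomogeneousComponent (fun p : Fin n × ℕ => p.2) m
        (g * arcDerivation k n c) = 0) :
    ∀ x ∈ KaehlerDifferential.kerTotal k (MvPolynomial (Fin n × ℕ) k ⧸ I),
      ∀ b : MvPolynomial (Fin n × ℕ) k ⧸ I, phiMap k n m I s (b • x) = 0 := by
  have hphi := phiMap_mk s hmemI hK1 hK2
  intro x hx
  induction hx using Submodule.span_induction with
  | mem x hmemx =>
    rcases hmemx with (⟨⟨u, v⟩, rfl⟩ | ⟨⟨u, v⟩, rfl⟩) | ⟨r, rfl⟩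
    · -- additive relation
      intro b
      dsimp only
      obtain ⟨uu, rfl⟩ := Ideal.Quotient.mk_surjective u
      obtain ⟨vv, rfl⟩ := Ideal.Quotient.mk_surjective v
      obtain ⟨bb, rfl⟩ := Ideal.Quotient.mk_surjective b
      rw [smul_gen_add, ← map_add (Ideal.Quotient.mk I) uu vv, map_sub, map_add,
        hphi, hphi, hphi, Derivation.map_add, mul_add, map_add]
      ring
    · -- multiplicative relation
      intro b
      dsimp only
      obtain ⟨uu, rfl⟩ := Ideal.Quotient.mk_surjective u
      obtain ⟨vv, rfl⟩ := Ideal.Quotient.mk_surjective v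
      obtain ⟨bb, rfl⟩ := Ideal.Quotient.mk_surjective b
      rw [smul_gen_mul, ← map_mul (Ideal.Quotient.mk I) uu vv,
        ← map_mul (Ideal.Quotient.mk I) bb uu, ← map_mul (Ideal.Quotient.mk I) bb vv,
        map_sub, map_add, hphi, hphi, hphi, ← map_add, ← map_sub]
      have hz : bb * uu * arcDerivation k n vv + bb * vv * arcDerivation k n uu
          - bb * arcDerivation k n (uu * vv) = 0 := by
        rw [Derivation.leibniz, smul_eq_mul, smul_eq_mul]
        ring
      rw [hz, map_zero]
    · -- algebraMap relation
      intro b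
      dsimp only
      obtain ⟨bb, rfl⟩ := Ideal.Quotient.mk_surjective b
      rw [smul_gen_single, ← Ideal.Quotient.mk_algebraMap (R₁ := k) (I := I), MvPolynomial.algebraMap_eq, hphi]
      have hC : arcDerivation k n (MvPolynomial.C r) = 0 := by
        rw [← MvPolynomial.algebraMap_eq]
        exact Derivation.map_algebraMap _ r
      rw [hC, mul_zero, map_zero]
  | zero => intro b; rw [smul_zero, map_zero]
  | add x y hx hy ihx ihy =>
    intro b
    rw [smul_add, map_add, ihx b, ihy b, add_zero]
  | smul c x hx ih =>
    intro b
    rw [smul_smul]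
    exact ih (b * c)

lemma arcDerivation_X_s16 {k : Type*} [Field k] {n : ℕ} (q : Fin n × ℕ) :
    arcDerivation k n (X q) = X (q.1, q.2 + 1) := by
  rw [arcDerivation, MvPolynomial.mkDerivation_X]

lemma mul_X_shift {k : Type*} [Field k] {n : ℕ} (e : (Fin n × ℕ) →₀ ℕ) (c : k) (a : ℕ)
    (q : Fin n × ℕ) :
    monomial e (c * ((a : k) * (q.2 : k))) * X (q.1, q.2 - 1 + 1)
      = monomial e (c * ((a : k) * (q.2 : k))) * X q := by
  rcases Nat.eq_zero_or_pos q.2 with h | h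
  · rw [h]
    norm_num
  · rw [Nat.sub_add_cancel h]

/-- The canonical representative of the Euler-type Kähler differential attached to `f`. -/
noncomputable def frepOf (k : Type*) [Field k] (n : ℕ)
    (I : Ideal (MvPolynomial (Fin n × ℕ) k)) (f : MvPolynomial (Fin n × ℕ) k) :
    ((MvPolynomial (Fin n × ℕ) k ⧸ I) →₀ (MvPolynomial (Fin n × ℕ) k ⧸ I)) :=
  ∑ d ∈ f.support, ∑ q ∈ d.support,
    Finsupp.single (Ideal.Quotient.mk I (X (q.1, q.2 - 1)))
      (Ideal.Quotient.mk I
        (monomial (d - Finsupp.single q 1) (coeff d f * ((d q : k) * (q.2 : k)))))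

lemma liftKD_frep {k : Type*} [Field k] {n : ℕ}
    {I : Ideal (MvPolynomial (Fin n × ℕ) k)}
    (Dbar : Derivation k (MvPolynomial (Fin n × ℕ) k ⧸ I) (MvPolynomial (Fin n × ℕ) k ⧸ I))
    (hDbar : ∀ a : MvPolynomial (Fin n × ℕ) k,
      Dbar (Ideal.Quotient.mk I a) = Ideal.Quotient.mk I (arcDerivation k n a))
    {f : MvPolynomial (Fin n × ℕ) k} {m : ℕ}
    (hfhom : IsWeightedHomogeneous (fun p : Fin n × ℕ => p.2) f m)
    (hfI : f ∈ I) :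
    Dbar.liftKaehlerDifferential
      (Finsupp.linearCombination _
        (KaehlerDifferential.D k (MvPolynomial (Fin n × ℕ) k ⧸ I)) (frepOf k n I f)) = 0 := by
  have key : ∀ d ∈ f.support, ∀ q ∈ d.support,
      Dbar.liftKaehlerDifferential
        (Finsupp.linearCombination _
          (KaehlerDifferential.D k (MvPolynomial (Fin n × ℕ) k ⧸ I))
          (Finsupp.single (Ideal.Quotient.mk I (X (q.1, q.2 - 1)))
            (Ideal.Quotient.mk I
              (monomial (d - Finsupp.single q 1) (coeff d f * ((d q : k) * (q.2 : k)))))))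
      = Ideal.Quotient.mk I
          (monomial (d - Finsupp.single q 1) (coeff d f * ((d q : k) * (q.2 : k))) * X q) := by
    intro d _ q _
    rw [Finsupp.linearCombination_single, map_smul,
      Derivation.liftKaehlerDifferential_comp_D, hDbar, arcDerivation_X_s16, smul_eq_mul,
      ← map_mul]
    dsimp only
    rw [mul_X_shift]
  have h1 : Dbar.liftKaehlerDifferential
      (Finsupp.linearCombination _
        (KaehlerDifferential.D k (MvPolynomial (Fin n × ℕ) k ⧸ I)) (frepOf k n I f))
      = ∑ d ∈ f.support, ∑ q ∈ d.support,
          Ideal.Quotient.mk I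
            (monomial (d - Finsupp.single q 1) (coeff d f * ((d q : k) * (q.2 : k))) * X q) := by
    rw [frepOf, map_sum, map_sum]
    refine Finset.sum_congr rfl fun d hd => ?_
    rw [map_sum, map_sum]
    exact Finset.sum_congr rfl fun q hq => key d hd q hq
  rw [h1]
  have h2 : ∑ d ∈ f.support, ∑ q ∈ d.support,
      Ideal.Quotient.mk I
        (monomial (d - Finsupp.single q 1) (coeff d f * ((d q : k) * (q.2 : k))) * X q)
      = Ideal.Quotient.mk I (m • f) := by
    rw [← euler_sum hfhom, map_sum]
    exact Finset.sum_congr rfl fun d hd => (map_sum _ _ _).symm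
  rw [h2, map_nsmul, Ideal.Quotient.eq_zero_iff_mem.mpr hfI, smul_zero]

lemma phiMap_frep {k : Type*} [Field k] {n m : ℕ}
    {I : Ideal (MvPolynomial (Fin n × ℕ) k)}
    (s : (MvPolynomial (Fin n × ℕ) k ⧸ I) →ₗ[k] MvPolynomial (Fin n × ℕ) k)
    (hmemI : ∀ a : MvPolynomial (Fin n × ℕ) k, s (Ideal.Quotient.mk I a) - a ∈ I)
    (hK1 : ∀ (a : MvPolynomial (Fin n × ℕ) k), ∀ g ∈ I,
      weightedHomogeneousComponent (fun p : Fin n × ℕ => p.2) m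
        (a * arcDerivation k n g) = 0)
    (hK2 : ∀ g ∈ I, ∀ c : MvPolynomial (Fin n × ℕ) k,
      weightedHomogeneousComponent (fun p : Fin n × ℕ => p.2) m
        (g * arcDerivation k n c) = 0)
    {f : MvPolynomial (Fin n × ℕ) k}
    (hfhom : IsWeightedHomogeneous (fun p : Fin n × ℕ => p.2) f m) :
    phiMap k n m I s (frepOf k n I f) = m • f := by
  have hphi := phiMap_mk s hmemI hK1 hK2
  have key : ∀ d ∈ f.support, ∀ q ∈ d.support,
      phiMap k n m I s
        (Finsupp.single (Ideal.Quotient.mk I (X (q.1, q.2 - 1)))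
          (Ideal.Quotient.mk I
            (monomial (d - Finsupp.single q 1) (coeff d f * ((d q : k) * (q.2 : k))))))
      = weightedHomogeneousComponent (fun p : Fin n × ℕ => p.2) m
          (monomial (d - Finsupp.single q 1) (coeff d f * ((d q : k) * (q.2 : k))) * X q) := by
    intro d _ q _
    rw [hphi, arcDerivation_X_s16]
    dsimp only
    rw [mul_X_shift]
  have h1 : phiMap k n m I s (frepOf k n I f)
      = ∑ d ∈ f.support, ∑ q ∈ d.support,
          weightedHomogeneousComponent (fun p : Fin n × ℕ => p.2) m
            (monomial (d - Finsupp.single q 1) (coeff d f * ((d q : k) * (q.2 : k))) * X q) := by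
    rw [frepOf, map_sum]
    refine Finset.sum_congr rfl fun d hd => ?_
    rw [map_sum]
    exact Finset.sum_congr rfl fun q hq => key d hd q hq
  rw [h1]
  have h2 : ∑ d ∈ f.support, ∑ q ∈ d.support,
      weightedHomogeneousComponent (fun p : Fin n × ℕ => p.2) m
        (monomial (d - Finsupp.single q 1) (coeff d f * ((d q : k) * (q.2 : k))) * X q)
      = weightedHomogeneousComponent (fun p : Fin n × ℕ => p.2) m (m • f) := by
    rw [← euler_sum hfhom, map_sum]
    exact Finset.sum_congr rfl fun d hd => (map_sum _ _ _).symm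
  rw [h2, map_nsmul, hfhom.weightedHomogeneousComponent_same]

lemma phiMap_gen_zero {k : Type*} [Field k] {n m : ℕ}
    {I : Ideal (MvPolynomial (Fin n × ℕ) k)}
    (s : (MvPolynomial (Fin n × ℕ) k ⧸ I) →ₗ[k] MvPolynomial (Fin n × ℕ) k)
    (hmemI : ∀ a : MvPolynomial (Fin n × ℕ) k, s (Ideal.Quotient.mk I a) - a ∈ I)
    (hK1 : ∀ (a : MvPolynomial (Fin n × ℕ) k), ∀ g ∈ I,
      weightedHomogeneousComponent (fun p : Fin n × ℕ => p.2) m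
        (a * arcDerivation k n g) = 0)
    (hK2 : ∀ g ∈ I, ∀ c : MvPolynomial (Fin n × ℕ) k,
      weightedHomogeneousComponent (fun p : Fin n × ℕ => p.2) m
        (g * arcDerivation k n c) = 0)
    (Dbar : Derivation k (MvPolynomial (Fin n × ℕ) k ⧸ I) (MvPolynomial (Fin n × ℕ) k ⧸ I))
    (hDbar : ∀ a : MvPolynomial (Fin n × ℕ) k,
      Dbar (Ideal.Quotient.mk I a) = Ideal.Quotient.mk I (arcDerivation k n a))
    (b c c' : MvPolynomial (Fin n × ℕ) k ⧸ I) :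
    phiMap k n m I s (b • (Finsupp.single c' (Dbar c) - Finsupp.single c (Dbar c'))) = 0 := by
  have hphi := phiMap_mk s hmemI hK1 hK2
  obtain ⟨bb, hbb⟩ := Ideal.Quotient.mk_surjective b
  obtain ⟨cc, hcc⟩ := Ideal.Quotient.mk_surjective c
  obtain ⟨cc', hcc'⟩ := Ideal.Quotient.mk_surjective c'
  rw [← hbb, ← hcc, ← hcc', hDbar, hDbar, smul_gen_pair,
    ← map_mul, ← map_mul, map_sub, hphi, hphi, ← map_sub]
  have hz : bb * arcDerivation k n cc * arcDerivation k n cc'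
      - bb * arcDerivation k n cc' * arcDerivation k n cc = 0 := by ring
  rw [hz, map_zero]

end ArcAux
/-- Theorem `thm:ssjets`, implication (⇒) (contrapositive form): grade
`A = k[x_{i,j}]` by assigning weight `j` to `x_{i,j}`.  Let `I` be a nonzero `∂`-stable
ideal, homogeneous with respect to this weight grading, containing no nonzero polynomial
in the weight-zero variables `x_{1,0}, …, x_{n,0}` alone (i.e. `B = A/I` is a proper
quotient of the arc algebra of its degree-zero part).  Then for the induced derivation
`∂̄` on `B = A/I`, the kernel of the contraction `ι : Ω_{B/k} → B` is strictly larger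
than the submodule `W` generated by the elements `(∂̄c)·dc′ − (∂̄c′)·dc`; i.e. the
degree `−1` Koszul homology does not vanish. -/
theorem arc_koszul_minus_one_nonvanishing (k : Type*) [Field k] [CharZero k]
    (n : ℕ) (hn : 1 ≤ n)
    (I : Ideal (MvPolynomial (Fin n × ℕ) k))
    (hne : I ≠ ⊥)
    (hstable : ∀ a ∈ I, arcDerivation k n a ∈ I)
    (hhom : ∀ f ∈ I, ∀ m : ℕ,
      MvPolynomial.weightedHomogeneousComponent (fun p : Fin n × ℕ => p.2) m f ∈ I)
    (hzero : ∀ f ∈ I, f ∈ Algebra.adjoin k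
      (Set.range fun i : Fin n => (MvPolynomial.X (i, 0) : MvPolynomial (Fin n × ℕ) k)) →
      f = 0) :
    ∀ Dbar : Derivation k (MvPolynomial (Fin n × ℕ) k ⧸ I)
        (MvPolynomial (Fin n × ℕ) k ⧸ I),
      (∀ a : MvPolynomial (Fin n × ℕ) k,
          Dbar (Ideal.Quotient.mk I a) = Ideal.Quotient.mk I (arcDerivation k n a)) →
      LinearMap.ker Dbar.liftKaehlerDifferential
        ≠ Submodule.span (MvPolynomial (Fin n × ℕ) k ⧸ I)
            {ω | ∃ c c' : MvPolynomial (Fin n × ℕ) k ⧸ I,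
              ω = Dbar c • KaehlerDifferential.D k (MvPolynomial (Fin n × ℕ) k ⧸ I) c'
                - Dbar c' • KaehlerDifferential.D k (MvPolynomial (Fin n × ℕ) k ⧸ I) c} := by
  classical
  intro Dbar hDbar hcontra
  -- existence of a nonzero weighted-homogeneous element of I
  obtain ⟨f₀, hf₀I, hf₀⟩ := (Submodule.ne_bot_iff I).mp hne
  have hQ : ∃ v : ℕ, ∃ g, g ∈ I ∧ g ≠ 0 ∧
      MvPolynomial.IsWeightedHomogeneous (fun p : Fin n × ℕ => p.2) g v := by
    by_contra h
    push_neg at h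
    apply hf₀
    have hcomp : ∀ v : ℕ,
        MvPolynomial.weightedHomogeneousComponent (fun p : Fin n × ℕ => p.2) v f₀ = 0 := by
      intro v
      by_contra hv
      exact h v _ (hhom f₀ hf₀I v) hv
        (MvPolynomial.weightedHomogeneousComponent_isWeightedHomogeneous v f₀)
    rw [← MvPolynomial.sum_weightedHomogeneousComponent (fun p : Fin n × ℕ => p.2) f₀]
    simp [hcomp]
  obtain ⟨f, hfI, hfne, hfhom⟩ := Nat.find_spec hQ
  set m := Nat.find hQ with hm
  have hmin : ∀ v, v < m → ∀ g, g ∈ I →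
      MvPolynomial.IsWeightedHomogeneous (fun p : Fin n × ℕ => p.2) g v → g = 0 := by
    intro v hv g hgI hgh
    by_contra hne'
    exact Nat.find_min hQ hv ⟨g, hgI, hne', hgh⟩
  -- m ≥ 1
  have hm1 : 1 ≤ m := by
    rcases Nat.eq_zero_or_pos m with h | h
    · rw [h] at hfhom
      exact absurd (hzero f hfI (ArcAux.homog_zero_mem_adjoin hfhom)) hfne
    · exact h
  -- every element of I has all monomials of weight ≥ m
  have hIL : ∀ g ∈ I, g ∈ ArcAux.arcLB k n m := by
    intro g hg d hd
    by_contra hlt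
    push_neg at hlt
    have h1 : MvPolynomial.weightedHomogeneousComponent (fun p : Fin n × ℕ => p.2)
        (Finsupp.weight (fun p : Fin n × ℕ => p.2) d) g = 0 :=
      hmin _ hlt _ (hhom g hg _)
        (MvPolynomial.weightedHomogeneousComponent_isWeightedHomogeneous _ _)
    have h2 : MvPolynomial.coeff d (MvPolynomial.weightedHomogeneousComponent
        (fun p : Fin n × ℕ => p.2) (Finsupp.weight (fun p : Fin n × ℕ => p.2) d) g)
        = MvPolynomial.coeff d g := by
      rw [MvPolynomial.coeff_weightedHomogeneousComponent, if_pos rfl]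
    rw [h1, MvPolynomial.coeff_zero] at h2
    exact hd h2.symm
  have hD1 : ∀ c : MvPolynomial (Fin n × ℕ) k,
      arcDerivation k n c ∈ ArcAux.arcLB k n 1 :=
    fun c => ArcAux.arcLB_deriv (ArcAux.mem_arcLB_zero c)
  have hK2 : ∀ g ∈ I, ∀ c : MvPolynomial (Fin n × ℕ) k,
      MvPolynomial.weightedHomogeneousComponent (fun p : Fin n × ℕ => p.2) m
        (g * arcDerivation k n c) = 0 := by
    intro g hg c
    exact ArcAux.arcLB_component_eq_zero (ArcAux.arcLB_mul (hIL g hg) (hD1 c)) (lt_add_one m)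
  have hK1 : ∀ (a : MvPolynomial (Fin n × ℕ) k), ∀ g ∈ I,
      MvPolynomial.weightedHomogeneousComponent (fun p : Fin n × ℕ => p.2) m
        (a * arcDerivation k n g) = 0 := by
    intro a g hg
    have := ArcAux.arcLB_mul (ArcAux.mem_arcLB_zero a) (ArcAux.arcLB_deriv (hIL g hg))
    rw [zero_add] at this
    exact ArcAux.arcLB_component_eq_zero this (lt_add_one m)
  -- a k-linear section of the quotient map
  have hsurj : LinearMap.range (Ideal.Quotient.mkₐ k I).toLinearMap = ⊤ := by
    rw [LinearMap.range_eq_top]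
    exact Ideal.Quotient.mkₐ_surjective k I
  obtain ⟨s, hs⟩ := LinearMap.exists_rightInverse_of_surjective _ hsurj
  have hsb : ∀ b : MvPolynomial (Fin n × ℕ) k ⧸ I, Ideal.Quotient.mk I (s b) = b := by
    intro b
    have := LinearMap.ext_iff.mp hs b
    simpa using this
  have hmem : ∀ a : MvPolynomial (Fin n × ℕ) k,
      s (Ideal.Quotient.mk I a) - a ∈ I := by
    intro a
    rw [← Ideal.Quotient.eq_zero_iff_mem, map_sub, hsb]
    exact sub_self _
  have hphi := ArcAux.phiMap_mk s hmem hK1 hK2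
  have hker := ArcAux.phiMap_kerTotal s hmem hK1 hK2
  have hωker : Dbar.liftKaehlerDifferential
      (Finsupp.linearCombination _
        (KaehlerDifferential.D k (MvPolynomial (Fin n × ℕ) k ⧸ I))
        (ArcAux.frepOf k n I f)) = 0 :=
    ArcAux.liftKD_frep Dbar hDbar hfhom hfI
  have hphifrep : ArcAux.phiMap k n m I s (ArcAux.frepOf k n I f) = m • f :=
    ArcAux.phiMap_frep s hmem hK1 hK2 hfhom
  -- the witness lies in the span, pull it back
  have hωmem : (Finsupp.linearCombination _
      (KaehlerDifferential.D k (MvPolynomial (Fin n × ℕ) k ⧸ I))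
      (ArcAux.frepOf k n I f)) ∈ LinearMap.ker Dbar.liftKaehlerDifferential :=
    LinearMap.mem_ker.mpr hωker
  rw [hcontra] at hωmem
  rcases Submodule.mem_span_set'.mp hωmem with ⟨N, bco, gfun, hsum⟩
  choose cf cf' hg using fun i : Fin N => (gfun i).2
  have hTρ : Finsupp.linearCombination _
      (KaehlerDifferential.D k (MvPolynomial (Fin n × ℕ) k ⧸ I))
      (∑ i : Fin N, bco i •
        (Finsupp.single (cf' i) (Dbar (cf i)) - Finsupp.single (cf i) (Dbar (cf' i))))
      = Finsupp.linearCombination _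
          (KaehlerDifferential.D k (MvPolynomial (Fin n × ℕ) k ⧸ I))
          (ArcAux.frepOf k n I f) := by
    rw [map_sum, ← hsum]
    refine Finset.sum_congr rfl fun i _ => ?_
    rw [map_smul, map_sub, Finsupp.linearCombination_single, Finsupp.linearCombination_single,
      ← hg i]
  have hmemker : ArcAux.frepOf k n I f - (∑ i : Fin N, bco i •
      (Finsupp.single (cf' i) (Dbar (cf i)) - Finsupp.single (cf i) (Dbar (cf' i))))
      ∈ KaehlerDifferential.kerTotal k (MvPolynomial (Fin n × ℕ) k ⧸ I) := by
    rw [← KaehlerDifferential.kerTotal_eq, LinearMap.mem_ker, map_sub, hTρ, sub_self]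
  have hphiρ : ArcAux.phiMap k n m I s (∑ i : Fin N, bco i •
      (Finsupp.single (cf' i) (Dbar (cf i)) - Finsupp.single (cf i) (Dbar (cf' i)))) = 0 := by
    rw [map_sum]
    exact Finset.sum_eq_zero fun i _ =>
      ArcAux.phiMap_gen_zero s hmem hK1 hK2 Dbar hDbar (bco i) (cf i) (cf' i)
  have h0 : ArcAux.phiMap k n m I s (ArcAux.frepOf k n I f - (∑ i : Fin N, bco i •
      (Finsupp.single (cf' i) (Dbar (cf i)) - Finsupp.single (cf i) (Dbar (cf' i))))) = 0 := by
    have := hker _ hmemker 1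
    rwa [one_smul] at this
  rw [map_sub, hphifrep, hphiρ, sub_zero] at h0
  have h1 : ((m : k)) • f = 0 := by
    rw [Nat.cast_smul_eq_nsmul]
    exact h0
  rcases smul_eq_zero.mp h1 with h | h
  · exact Nat.cast_ne_zero.mpr (by omega) h
  · exact hfne h
end
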